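/- arXiv:0803.4101 — 9 statements merged into one kernel-verified Lean document; each statement's English description precedes it below -/
import Mathlib

section
/- For any x in ℝ, the integral over ℝ of (1 - cos(t·x))/t² dt equals π·|x|. -/
open MeasureTheory Real Set Filter
open scoped Topology

namespace CosDiv

lemma one_sub_cos_nonneg (t : ℝ) : 0 ≤ 1 - Real.cos t := by
  nlinarith [Real.cos_le_one t]

lemma g_le (t : ℝ) : (1 - Real.cos t) / t ^ 2 ≤ 4 * (1 + t ^ 2)⁻¹ := by
  rcases eq_or_ne t 0 with rfl | ht
  · simp
  · have h2 : (0:ℝ) < t ^ 2 := by positivity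
    rw [div_le_iff₀ h2,
      show (4:ℝ) * (1 + t ^ 2)⁻¹ * t ^ 2 = 4 * t ^ 2 / (1 + t ^ 2) by ring,
      le_div_iff₀ (by positivity : (0:ℝ) < 1 + t ^ 2)]
    have h3 : 1 - t ^ 2 / 2 ≤ Real.cos t := Real.one_sub_sq_div_two_le_cos
    have h4 : -1 ≤ Real.cos t := Real.neg_one_le_cos t
    nlinarith [sq_nonneg t, sq_nonneg (t ^ 2)]

lemma g_nonneg (t : ℝ) : 0 ≤ (1 - Real.cos t) / t ^ 2 :=
  div_nonneg (one_sub_cos_nonneg t) (sq_nonneg t)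

lemma g_meas : Measurable fun t : ℝ => (1 - Real.cos t) / t ^ 2 := by fun_prop

lemma g_integrable : Integrable fun t : ℝ => (1 - Real.cos t) / t ^ 2 := by
  refine (integrable_inv_one_add_sq.const_mul 4).mono' g_meas.aestronglyMeasurable ?_
  filter_upwards with t
  rw [Real.norm_eq_abs, abs_of_nonneg (g_nonneg t)]
  exact g_le t

lemma sect_int {s : ℝ} (hs : 0 < s) :
    IntegrableOn (fun t => (1 - Real.cos t) * (s * Real.exp (-(s * t)))) (Ioi 0) := by
  refine ((exp_neg_integrableOn_Ioi 0 hs).const_mul (2 * s)).mono'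
    ((Continuous.aestronglyMeasurable (by fun_prop)).restrict) ?_
  filter_upwards with t
  have h1 : |1 - Real.cos t| ≤ 2 := by
    rw [abs_le]; constructor <;> nlinarith [Real.cos_le_one t, Real.neg_one_le_cos t]
  have h2 : (0:ℝ) ≤ s * Real.exp (-(s * t)) := by positivity
  rw [Real.norm_eq_abs, abs_mul, abs_of_nonneg h2]
  calc |1 - Real.cos t| * (s * Real.exp (-(s * t)))
      ≤ 2 * (s * Real.exp (-(s * t))) := mul_le_mul_of_nonneg_right h1 h2
    _ = 2 * s * Real.exp (-s * t) := by rw [neg_mul]; ring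

lemma inner_t {s : ℝ} (hs : 0 < s) :
    ∫ t in Ioi (0:ℝ), (1 - Real.cos t) * (s * Real.exp (-(s * t))) = (1 + s ^ 2)⁻¹ := by
  set F : ℝ → ℝ := fun t =>
    -Real.exp (-(s * t)) - s * (Real.exp (-(s * t)) * (Real.sin t - s * Real.cos t)) / (s ^ 2 + 1)
    with hF
  have hs1 : s ^ 2 + 1 ≠ 0 := by positivity
  have hder : ∀ t ∈ Ici (0:ℝ), HasDerivAt F ((1 - Real.cos t) * (s * Real.exp (-(s * t)))) t := by
    intro t _
    have he : HasDerivAt (fun u : ℝ => Real.exp (-(s * u))) (Real.exp (-(s * t)) * -(s * 1)) t :=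
      (((hasDerivAt_id t).const_mul s).neg).exp
    have hsc : HasDerivAt (fun u : ℝ => Real.sin u - s * Real.cos u)
        (Real.cos t - s * -Real.sin t) t :=
      (Real.hasDerivAt_sin t).sub ((Real.hasDerivAt_cos t).const_mul s)
    have hmul := he.mul hsc
    have htot := (he.neg).sub ((hmul.const_mul s).div_const (s ^ 2 + 1))
    refine htot.congr_deriv ?_
    field_simp
    ring
  have hE : Tendsto (fun t : ℝ => Real.exp (-(s * t))) atTop (𝓝 0) := by
    have h : Tendsto (fun t : ℝ => -s * t) atTop atBot :=
      tendsto_id.const_mul_atTop_of_neg (neg_neg_iff_pos.2 hs)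
    simpa [Function.comp_def, neg_mul] using Real.tendsto_exp_atBot.comp h
  have hbdd : Tendsto (fun t : ℝ => Real.exp (-(s * t)) * (Real.sin t - s * Real.cos t))
      atTop (𝓝 0) := by
    apply hE.zero_mul_isBoundedUnder_le
    refine isBoundedUnder_of ⟨1 + s, fun t => ?_⟩
    have : |Real.sin t - s * Real.cos t| ≤ 1 + s := by
      rw [abs_le]; constructor <;>
        nlinarith [Real.sin_le_one t, Real.neg_one_le_sin t, Real.cos_le_one t,
          Real.neg_one_le_cos t]
    simpa [Real.norm_eq_abs] using this
  have htend : Tendsto F atTop (𝓝 0) := by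
    have := (hE.neg).sub ((hbdd.const_mul s).div_const (s ^ 2 + 1))
    simpa using this
  have key := integral_Ioi_of_hasDerivAt_of_tendsto' hder (sect_int hs) htend
  rw [key, hF]
  simp only [mul_zero, Real.exp_zero, Real.sin_zero, Real.cos_zero]
  field_simp
  ring_nf; simp only [Real.exp_zero]; ring

lemma inner_s {t : ℝ} (ht : 0 < t) :
    ∫ s in Ioi (0:ℝ), s * Real.exp (-(s * t)) = (t ^ 2)⁻¹ := by
  have h := Real.integral_rpow_mul_exp_neg_mul_Ioi (by norm_num : (0:ℝ) < 2) ht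
  rw [show (2:ℝ) - 1 = 1 by norm_num, Real.Gamma_two, mul_one] at h
  have h2 : ∫ s in Ioi (0:ℝ), s ^ (1:ℝ) * Real.exp (-(t * s)) =
      ∫ s in Ioi (0:ℝ), s * Real.exp (-(s * t)) := by
    refine setIntegral_congr_fun measurableSet_Ioi fun s _ => ?_
    rw [Real.rpow_one, mul_comm t s]
  rw [← h2, h]
  rw [show (2:ℝ) = ((2:ℕ):ℝ) by norm_cast, Real.rpow_natCast]
  rw [div_pow, one_pow, one_div]

lemma half : ∫ t in Ioi (0:ℝ), (1 - Real.cos t) / t ^ 2 = π / 2 := by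
  set f : ℝ → ℝ → ℝ := fun s t => (1 - Real.cos t) * (s * Real.exp (-(s * t))) with hf
  have hmeas : AEStronglyMeasurable (Function.uncurry f)
      ((volume.restrict (Ioi 0)).prod (volume.restrict (Ioi 0))) := by
    apply Continuous.aestronglyMeasurable
    simp only [hf, Function.uncurry]
    fun_prop
  have hnorm : ∀ s ∈ Ioi (0:ℝ), (∫ t in Ioi (0:ℝ), ‖f s t‖) = (1 + s ^ 2)⁻¹ := by
    intro s hs
    rw [← inner_t hs]
    refine setIntegral_congr_fun measurableSet_Ioi fun t _ => ?_
    rw [Real.norm_eq_abs, abs_of_nonneg]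
    exact mul_nonneg (one_sub_cos_nonneg t) (mul_nonneg (le_of_lt hs) (Real.exp_pos _).le)
  have hInt : Integrable (Function.uncurry f)
      ((volume.restrict (Ioi 0)).prod (volume.restrict (Ioi 0))) := by
    refine (integrable_prod_iff hmeas).2 ⟨?_, ?_⟩
    · filter_upwards [ae_restrict_mem measurableSet_Ioi] with s hs
      exact sect_int hs
    · refine (integrable_inv_one_add_sq.integrableOn).congr ?_
      filter_upwards [ae_restrict_mem measurableSet_Ioi] with s hs
      exact (hnorm s hs).symm
  have swap := integral_integral_swap hInt
  have lhs : ∫ s in Ioi (0:ℝ), ∫ t in Ioi (0:ℝ), f s t = π / 2 := by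
    rw [setIntegral_congr_fun measurableSet_Ioi fun s hs => inner_t hs]
    simp
  have rhs : ∫ t in Ioi (0:ℝ), ∫ s in Ioi (0:ℝ), f s t
      = ∫ t in Ioi (0:ℝ), (1 - Real.cos t) / t ^ 2 := by
    refine setIntegral_congr_fun measurableSet_Ioi fun t ht => ?_
    simp only [hf]
    rw [MeasureTheory.integral_const_mul, inner_s ht, div_eq_mul_inv]
  rw [← rhs, ← swap, lhs]

lemma core : ∫ t : ℝ, (1 - Real.cos t) / t ^ 2 = π := by
  have h := integral_comp_abs (f := fun t : ℝ => (1 - Real.cos t) / t ^ 2)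
  have h2 : (∫ t : ℝ, (1 - Real.cos |t|) / |t| ^ 2) = ∫ t : ℝ, (1 - Real.cos t) / t ^ 2 := by
    congr 1; funext t; rw [Real.cos_abs, sq_abs]
  rw [h2] at h
  rw [h, half]
  ring

end CosDiv

open MeasureTheory Real

/-- For any `x ∈ ℝ`, `∫_ℝ (1 - cos(t x))/t² dt = π |x|`. -/
theorem integral_one_sub_cos_div_sq (x : ℝ) :
    (∫ t : ℝ, (1 - Real.cos (t * x)) / t ^ 2) = Real.pi * |x| := by
  have heq : ∀ t : ℝ, (1 - Real.cos (t * x)) / t ^ 2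
      = x ^ 2 * ((1 - Real.cos (t * x)) / (t * x) ^ 2) := by
    intro t
    rcases eq_or_ne x 0 with rfl | hx
    · simp
    rcases eq_or_ne t 0 with rfl | ht
    · simp
    field_simp
  simp_rw [heq]
  rw [MeasureTheory.integral_const_mul,
    MeasureTheory.Measure.integral_comp_mul_right (fun u : ℝ => (1 - Real.cos u) / u ^ 2) x,
    CosDiv.core]
  rcases eq_or_ne x 0 with rfl | hx
  · simp
  · rw [smul_eq_mul, abs_inv]
    have h0 : |x| ≠ 0 := abs_ne_zero.mpr hx
    field_simp
    rw [sq_abs]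
end

section
/- Let X ∈ ℝ^p and Y ∈ ℝ^q be random vectors with joint characteristic function f_{X,Y} and marginals f_X, f_Y. Then for all t ∈ ℝ^p, s ∈ ℝ^q: |f_{X,Y}(t,s) - f_X(t)·f_Y(s)|² ≤ (1 - |f_X(t)|²)·(1 - |f_Y(s)|²). -/
open MeasureTheory Complex

section Aux

variable {Ω : Type*} [MeasureSpace Ω] [IsProbabilityMeasure (volume : Measure Ω)]

lemma exp_mul_I_integrable' {a : Ω → ℝ} (ha : Measurable a) :
    Integrable (fun ω => Complex.exp (a ω * Complex.I)) := by
  refine (integrable_const (1:ℝ)).mono' ?_ (Filter.Eventually.of_forall fun ω => ?_)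
  · exact (Complex.measurable_exp.comp
      ((Complex.measurable_ofReal.comp ha).mul_const Complex.I)).aestronglyMeasurable
  · simp [Complex.norm_exp_ofReal_mul_I]

lemma charFun_cov_bound_aux (a b : Ω → ℝ) (ha : Measurable a) (hb : Measurable b) :
    ‖(∫ ω, Complex.exp (((a ω : ℂ) + (b ω : ℂ)) * Complex.I))
        - (∫ ω, Complex.exp ((a ω : ℂ) * Complex.I))
          * (∫ ω, Complex.exp ((b ω : ℂ) * Complex.I))‖ ^ 2 ≤
      (1 - ‖∫ ω, Complex.exp ((a ω : ℂ) * Complex.I)‖ ^ 2) *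
      (1 - ‖∫ ω, Complex.exp ((b ω : ℂ) * Complex.I)‖ ^ 2) := by
  set e₁ : Ω → ℂ := fun ω => Complex.exp (a ω * Complex.I) with he₁def
  set e₂ : Ω → ℂ := fun ω => Complex.exp (b ω * Complex.I) with he₂def
  have hm₁ : Measurable e₁ :=
    Complex.measurable_exp.comp ((Complex.measurable_ofReal.comp ha).mul_const Complex.I)
  have hm₂ : Measurable e₂ :=
    Complex.measurable_exp.comp ((Complex.measurable_ofReal.comp hb).mul_const Complex.I)
  have hi₁ : Integrable e₁ := exp_mul_I_integrable' ha
  have hi₂ : Integrable e₂ := exp_mul_I_integrable' hb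
  have hnorm₁ : ∀ ω, ‖e₁ ω‖ = 1 := fun ω => by
    simp [he₁def, Complex.norm_exp_ofReal_mul_I]
  have hnorm₂ : ∀ ω, ‖e₂ ω‖ = 1 := fun ω => by
    simp [he₂def, Complex.norm_exp_ofReal_mul_I]
  set c₁ : ℂ := ∫ ω, e₁ ω with hc₁def
  set c₂ : ℂ := ∫ ω, e₂ ω with hc₂def
  have hc₁le : ‖c₁‖ ≤ 1 := by
    calc ‖c₁‖ ≤ ∫ ω, ‖e₁ ω‖ := norm_integral_le_integral_norm _
    _ = 1 := by simp [hnorm₁]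
  have hc₂le : ‖c₂‖ ≤ 1 := by
    calc ‖c₂‖ ≤ ∫ ω, ‖e₂ ω‖ := norm_integral_le_integral_norm _
    _ = 1 := by simp [hnorm₂]
  set U : Ω → ℂ := fun ω => e₁ ω - c₁ with hUdef
  set V : Ω → ℂ := fun ω => e₂ ω - c₂ with hVdef
  have hmU : Measurable U := hm₁.sub measurable_const
  have hmV : Measurable V := hm₂.sub measurable_const
  have hUb : ∀ ω, ‖U ω‖ ≤ 2 := fun ω => by
    calc ‖U ω‖ ≤ ‖e₁ ω‖ + ‖c₁‖ := norm_sub_le _ _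
    _ ≤ 1 + 1 := by rw [hnorm₁ ω]; linarith
    _ = 2 := by norm_num
  have hVb : ∀ ω, ‖V ω‖ ≤ 2 := fun ω => by
    calc ‖V ω‖ ≤ ‖e₂ ω‖ + ‖c₂‖ := norm_sub_le _ _
    _ ≤ 1 + 1 := by rw [hnorm₂ ω]; linarith
    _ = 2 := by norm_num
  -- Memℒp 2
  have hU2 : MemLp U 2 :=
    (memLp_top_of_bound hmU.aestronglyMeasurable 2
      (Filter.Eventually.of_forall hUb)).mono_exponent le_top
  have hV2 : MemLp V 2 :=
    (memLp_top_of_bound hmV.aestronglyMeasurable 2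
      (Filter.Eventually.of_forall hVb)).mono_exponent le_top
  have hofReal : (ENNReal.ofReal (2:ℝ)) = (2 : ENNReal) := by norm_num
  -- Cauchy-Schwarz (Hölder with p = q = 2)
  have hpq : (2:ℝ).HolderConjugate 2 := Real.HolderConjugate.two_two
  have holder := integral_mul_norm_le_Lp_mul_Lq (μ := volume) hpq
    (hofReal ▸ hU2) (hofReal ▸ hV2)
  -- identify second moments
  have hsecond : ∀ (e : Ω → ℂ) (c : ℂ), Measurable e → Integrable e → (∀ ω, ‖e ω‖ = 1) →
      c = ∫ ω, e ω → ∫ ω, ‖e ω - c‖ ^ (2:ℝ) = 1 - ‖c‖ ^ 2 := by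
    intro e c hm hi hn hc
    have hpt : ∀ ω, ‖e ω - c‖ ^ (2:ℝ) =
        1 + Complex.normSq c - 2 * (e ω * (starRingEnd ℂ) c).re := by
      intro ω
      rw [Real.rpow_two, Complex.sq_norm, Complex.normSq_sub]
      have : Complex.normSq (e ω) = 1 := by
        rw [← Complex.sq_norm, hn ω]; norm_num
      rw [this]
    simp_rw [hpt]
    have hint : Integrable (fun ω => 2 * (e ω * (starRingEnd ℂ) c).re) :=
      ((hi.mul_const _).re).const_mul 2
    rw [integral_sub (integrable_const (1 + Complex.normSq c)) hint]
    have h1 : ∫ ω, ((e ω * (starRingEnd ℂ) c).re) = Complex.normSq c := by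
      have h2 := integral_re (μ := volume) (hi.mul_const ((starRingEnd ℂ) c))
      rw [integral_mul_const, ← hc, Complex.mul_conj] at h2
      simpa using h2
    rw [integral_const_mul, h1, integral_const]
    simp only [probReal_univ, measure_univ, ENNReal.toReal_one, one_smul, smul_eq_mul]
    rw [Complex.sq_norm]
    ring
  have hEU2 : ∫ ω, ‖U ω‖ ^ (2:ℝ) = 1 - ‖c₁‖ ^ 2 :=
    hsecond e₁ c₁ hm₁ hi₁ hnorm₁ hc₁def
  have hEV2 : ∫ ω, ‖V ω‖ ^ (2:ℝ) = 1 - ‖c₂‖ ^ 2 :=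
    hsecond e₂ c₂ hm₂ hi₂ hnorm₂ hc₂def
  -- covariance identity
  have hprod : ∀ ω, Complex.exp (((a ω : ℂ) + (b ω : ℂ)) * Complex.I) = e₁ ω * e₂ ω := by
    intro ω; rw [add_mul, Complex.exp_add]
  have hi₁₂ : Integrable (fun ω => e₁ ω * e₂ ω) := by
    refine (integrable_const (1:ℝ)).mono' ((hm₁.mul hm₂).aestronglyMeasurable)
      (Filter.Eventually.of_forall fun ω => ?_)
    rw [norm_mul, hnorm₁, hnorm₂]; norm_num
  have hiUV : Integrable (fun ω => U ω * V ω) := by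
    refine (integrable_const (4:ℝ)).mono' ((hmU.mul hmV).aestronglyMeasurable)
      (Filter.Eventually.of_forall fun ω => ?_)
    rw [norm_mul]
    calc ‖U ω‖ * ‖V ω‖ ≤ 2 * 2 :=
      mul_le_mul (hUb ω) (hVb ω) (norm_nonneg _) (by norm_num)
    _ = 4 := by norm_num
  have hEUV : ∫ ω, U ω * V ω = (∫ ω, e₁ ω * e₂ ω) - c₁ * c₂ := by
    have hpt : ∀ ω, U ω * V ω = e₁ ω * e₂ ω - c₂ * e₁ ω - c₁ * e₂ ω + c₁ * c₂ := by
      intro ω; simp only [hUdef, hVdef]; ring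
    simp_rw [hpt]
    have hint2 : Integrable (fun ω => e₁ ω * e₂ ω - c₂ * e₁ ω) :=
      hi₁₂.sub (hi₁.const_mul c₂)
    have hint1 : Integrable (fun ω => e₁ ω * e₂ ω - c₂ * e₁ ω - c₁ * e₂ ω) :=
      hint2.sub (hi₂.const_mul c₁)
    rw [integral_add hint1 (integrable_const _),
      integral_sub hint2 (hi₂.const_mul c₁),
      integral_sub hi₁₂ (hi₁.const_mul c₂),
      integral_const_mul, integral_const_mul, ← hc₁def, ← hc₂def]
    simp only [integral_const, probReal_univ, measure_univ, ENNReal.toReal_one, one_smul]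
    ring
  -- put it all together
  have hcov : (∫ ω, Complex.exp (((a ω : ℂ) + (b ω : ℂ)) * Complex.I)) - c₁ * c₂
      = ∫ ω, U ω * V ω := by
    rw [hEUV]; congr 1; exact integral_congr_ae (Filter.Eventually.of_forall hprod)
  rw [hcov]
  have habs : ‖∫ ω, U ω * V ω‖ ≤ ∫ ω, ‖U ω‖ * ‖V ω‖ := by
    calc ‖∫ ω, U ω * V ω‖ = ‖∫ ω, U ω * V ω‖ := rfl
    _ ≤ ∫ ω, ‖U ω * V ω‖ := norm_integral_le_integral_norm _
    _ = ∫ ω, ‖U ω‖ * ‖V ω‖ := by simp_rw [norm_mul]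
  have hnn : (0:ℝ) ≤ ∫ ω, ‖U ω‖ * ‖V ω‖ :=
    integral_nonneg fun ω => mul_nonneg (norm_nonneg _) (norm_nonneg _)
  have hEU2nn : (0:ℝ) ≤ ∫ ω, ‖U ω‖ ^ (2:ℝ) :=
    integral_nonneg fun ω => Real.rpow_nonneg (norm_nonneg _) _
  have hEV2nn : (0:ℝ) ≤ ∫ ω, ‖V ω‖ ^ (2:ℝ) :=
    integral_nonneg fun ω => Real.rpow_nonneg (norm_nonneg _) _
  calc ‖∫ ω, U ω * V ω‖ ^ 2
      ≤ (∫ ω, ‖U ω‖ * ‖V ω‖) ^ 2 := by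
        apply pow_le_pow_left₀ (norm_nonneg _) habs
    _ ≤ ((∫ ω, ‖U ω‖ ^ (2:ℝ)) ^ (1/(2:ℝ)) * (∫ ω, ‖V ω‖ ^ (2:ℝ)) ^ (1/(2:ℝ))) ^ 2 :=
        pow_le_pow_left₀ hnn holder 2
    _ = (∫ ω, ‖U ω‖ ^ (2:ℝ)) * (∫ ω, ‖V ω‖ ^ (2:ℝ)) := by
        rw [mul_pow, ← Real.rpow_natCast (_ ^ (1/(2:ℝ))) 2, ← Real.rpow_natCast (_ ^ (1/(2:ℝ))) 2,
          ← Real.rpow_mul hEU2nn, ← Real.rpow_mul hEV2nn]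
        norm_num
    _ = (1 - ‖c₁‖ ^ 2) * (1 - ‖c₂‖ ^ 2) := by rw [hEU2, hEV2]

end Aux

/-- `|f_{X,Y}(t,s) - f_X(t) f_Y(s)|² ≤ (1 - |f_X(t)|²)(1 - |f_Y(s)|²)`. -/
theorem charFun_cov_bound {Ω : Type*} [MeasureSpace Ω] [IsProbabilityMeasure (volume : Measure Ω)]
    (p q : ℕ) (X : Ω → EuclideanSpace ℝ (Fin p)) (Y : Ω → EuclideanSpace ℝ (Fin q))
    (hX : Measurable X) (hY : Measurable Y)
    (t : EuclideanSpace ℝ (Fin p)) (s : EuclideanSpace ℝ (Fin q)) :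
    ‖(∫ ω, Complex.exp (((inner ℝ t (X ω) : ℝ) + (inner ℝ s (Y ω) : ℝ)) * Complex.I))
        - (∫ ω, Complex.exp ((inner ℝ t (X ω) : ℝ) * Complex.I))
          * (∫ ω, Complex.exp ((inner ℝ s (Y ω) : ℝ) * Complex.I))‖ ^ 2 ≤
      (1 - ‖∫ ω, Complex.exp ((inner ℝ t (X ω) : ℝ) * Complex.I)‖ ^ 2) *
      (1 - ‖∫ ω, Complex.exp ((inner ℝ s (Y ω) : ℝ) * Complex.I)‖ ^ 2) := by
  have ha : Measurable fun ω => (inner ℝ t (X ω) : ℝ) := measurable_const.inner hX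
  have hb : Measurable fun ω => (inner ℝ s (Y ω) : ℝ) := measurable_const.inner hY
  have := charFun_cov_bound_aux (fun ω => (inner ℝ t (X ω) : ℝ))
    (fun ω => (inner ℝ s (Y ω) : ℝ)) ha hb
  convert this using 6
end

section
/- For a random vector X in ℝ^p with E|X| < ∞ and characteristic function f_X, and X' an independent copy of X: ∫_{ℝ^p} (1 - |f_X(t)|²)/(c_p |t|^{1+p}) dt = E|X - X'|, where c_p = π^{(1+p)/2}/Γ((1+p)/2). -/
open MeasureTheory Complex Real Set


lemma exp_integral_Ioo (y : ℝ) (hy : 0 < y) :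
    ∫ v in Ioo (0:ℝ) y, Real.exp (-v) = 1 - Real.exp (-y) := by
  rw [← integral_Ioc_eq_integral_Ioo, ← intervalIntegral.integral_of_le hy.le]
  have : ∫ v in (0:ℝ)..y, Real.exp (-v) = ∫ v in -y..(-0:ℝ), Real.exp v :=
    intervalIntegral.integral_comp_neg fun v => Real.exp v
  rw [this]
  simp [integral_exp]

lemma K_eq : ∫ y in Ioi (0:ℝ), y ^ (-(3:ℝ)/2) * (1 - Real.exp (-y)) = 2 * Real.sqrt π := by
  have meas : Measurable fun y : ℝ => y ^ (-(3:ℝ)/2) * (1 - Real.exp (-y)) := by fun_prop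
  have nonneg : ∀ y ∈ Ioi (0:ℝ), 0 ≤ y ^ (-(3:ℝ)/2) * (1 - Real.exp (-y)) := by
    intro y hy
    have h1 : Real.exp (-y) ≤ 1 := Real.exp_le_one_iff.2 (by simpa using hy.out.le)
    have h2 : (0:ℝ) ≤ y ^ (-(3:ℝ)/2) := Real.rpow_nonneg hy.out.le _
    nlinarith
  rw [integral_eq_lintegral_of_nonneg_ae
    ((ae_restrict_iff' measurableSet_Ioi).2 (Filter.Eventually.of_forall nonneg))
    meas.aestronglyMeasurable.restrict]
  have key : ∫⁻ y in Ioi (0:ℝ), ENNReal.ofReal (y ^ (-(3:ℝ)/2) * (1 - Real.exp (-y)))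
      = ENNReal.ofReal (2 * Real.sqrt π) := by
    have measG : Measurable fun q : ℝ × ℝ =>
        if q.2 < q.1 then ENNReal.ofReal (q.1 ^ (-(3:ℝ)/2) * Real.exp (-q.2)) else 0 := by
      refine Measurable.ite (measurableSet_lt measurable_snd measurable_fst) ?_ measurable_const
      apply Measurable.ennreal_ofReal; fun_prop
    have swap := lintegral_lintegral_swap (μ := volume.restrict (Ioi (0:ℝ)))
      (ν := volume.restrict (Ioi (0:ℝ)))
      (f := fun y v => if v < y then ENNReal.ofReal (y ^ (-(3:ℝ)/2) * Real.exp (-v)) else 0)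
      measG.aemeasurable
    have lhs_eq : (∫⁻ y in Ioi (0:ℝ), ∫⁻ v in Ioi (0:ℝ),
        (if v < y then ENNReal.ofReal (y ^ (-(3:ℝ)/2) * Real.exp (-v)) else 0))
        = ∫⁻ y in Ioi (0:ℝ), ENNReal.ofReal (y ^ (-(3:ℝ)/2) * (1 - Real.exp (-y))) := by
      refine setLIntegral_congr_fun measurableSet_Ioi ?_
      intro y hy
      beta_reduce
      have : (fun v => if v < y then ENNReal.ofReal (y ^ (-(3:ℝ)/2) * Real.exp (-v)) else 0)
          = fun v => (Iio y).indicator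
              (fun v => ENNReal.ofReal (y ^ (-(3:ℝ)/2) * Real.exp (-v))) v := by
        ext v; simp [Set.indicator_apply]
      rw [this, lintegral_indicator measurableSet_Iio, Measure.restrict_restrict measurableSet_Iio,
        show Iio y ∩ Ioi 0 = Ioo (0:ℝ) y by ext v; simp [mem_Ioo, and_comm]]
      rw [← ofReal_integral_eq_lintegral_ofReal]
      · rw [MeasureTheory.integral_const_mul, exp_integral_Ioo y hy]
      · exact (Integrable.const_mul ((Real.continuous_exp.comp continuous_neg).integrableOn_Ioc.mono_set
          Ioo_subset_Ioc_self) _)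
      · refine Filter.Eventually.of_forall fun v => ?_
        have := Real.rpow_nonneg (le_of_lt hy.out) (-(3:ℝ)/2)
        positivity
    have rhs_eq : (∫⁻ v in Ioi (0:ℝ), ∫⁻ y in Ioi (0:ℝ),
        (if v < y then ENNReal.ofReal (y ^ (-(3:ℝ)/2) * Real.exp (-v)) else 0))
        = ENNReal.ofReal (2 * Real.sqrt π) := by
      have inner_eq : ∀ v ∈ Ioi (0:ℝ), (∫⁻ y in Ioi (0:ℝ),
          (if v < y then ENNReal.ofReal (y ^ (-(3:ℝ)/2) * Real.exp (-v)) else 0))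
          = ENNReal.ofReal (Real.exp (-v) * (2 * v ^ (-(1:ℝ)/2))) := by
        intro v hv
        have : (fun y => if v < y then ENNReal.ofReal (y ^ (-(3:ℝ)/2) * Real.exp (-v)) else 0)
            = fun y => (Ioi v).indicator
                (fun y => ENNReal.ofReal (y ^ (-(3:ℝ)/2) * Real.exp (-v))) y := by
          ext y; simp [Set.indicator_apply]
        rw [this, lintegral_indicator measurableSet_Ioi,
          Measure.restrict_restrict measurableSet_Ioi,
          show Ioi v ∩ Ioi 0 = Ioi v by
            rw [Set.Ioi_inter_Ioi, max_eq_left (le_of_lt hv.out)]]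
        rw [← ofReal_integral_eq_lintegral_ofReal]
        · congr 1
          have : ∀ y ∈ Ioi v, y ^ (-(3:ℝ)/2) * Real.exp (-v) = Real.exp (-v) * y ^ (-(3:ℝ)/2) :=
            fun y _ => mul_comm _ _
          rw [setIntegral_congr_fun measurableSet_Ioi this, MeasureTheory.integral_const_mul,
            integral_Ioi_rpow_of_lt (by norm_num) hv.out]
          rw [show (-(3:ℝ)/2 + 1) = -(1:ℝ)/2 by norm_num]
          ring
        · exact ((integrableOn_Ioi_rpow_of_lt (by norm_num) hv.out).mul_const _)
        · refine (ae_restrict_iff' measurableSet_Ioi).2 (Filter.Eventually.of_forall fun y hy => ?_)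
          have : (0:ℝ) ≤ y ^ (-(3:ℝ)/2) := Real.rpow_nonneg (le_of_lt (lt_trans hv.out hy.out)) _
          positivity
      rw [setLIntegral_congr_fun measurableSet_Ioi inner_eq]
      rw [← ofReal_integral_eq_lintegral_ofReal]
      · congr 1
        have : ∀ v ∈ Ioi (0:ℝ), Real.exp (-v) * (2 * v ^ (-(1:ℝ)/2))
            = 2 * (Real.exp (-v) * v ^ ((1:ℝ)/2 - 1)) := by
          intro v hv; rw [show -(1:ℝ)/2 = (1:ℝ)/2 - 1 by norm_num]; ring
        rw [setIntegral_congr_fun measurableSet_Ioi this, MeasureTheory.integral_const_mul,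
          ← Real.Gamma_eq_integral (by norm_num : (0:ℝ) < 1/2), Real.Gamma_one_half_eq]
      · refine IntegrableOn.congr_fun
          ((Real.GammaIntegral_convergent (by norm_num : (0:ℝ) < 1/2)).const_mul 2)
          (fun v hv => ?_) measurableSet_Ioi
        rw [show -(1:ℝ)/2 = (1:ℝ)/2 - 1 by norm_num]; ring
      · refine (ae_restrict_iff' measurableSet_Ioi).2 (Filter.Eventually.of_forall fun v hv => ?_)
        have : (0:ℝ) ≤ v ^ (-(1:ℝ)/2) := Real.rpow_nonneg (le_of_lt hv.out) _
        positivity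
    rw [← lhs_eq, swap, rhs_eq]
  rw [key, ENNReal.toReal_ofReal (by positivity)]




lemma one_sub_exp_neg_le (x : ℝ) : 1 - Real.exp (-x) ≤ x := by
  have := Real.add_one_le_exp (-x); linarith

lemma j_integrable {c : ℝ} (hc : 0 < c) :
    IntegrableOn (fun s : ℝ => s ^ (-(1:ℝ)/2) * (1 - Real.exp (-(c/s)))) (Ioi 0) := by
  have meas : Measurable fun s : ℝ => s ^ (-(1:ℝ)/2) * (1 - Real.exp (-(c/s))) := by fun_prop
  have h1 : IntegrableOn (fun s : ℝ => s ^ (-(1:ℝ)/2) * (1 - Real.exp (-(c/s)))) (Ioc 0 1) := by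
    refine Integrable.mono' (g := fun s : ℝ => s ^ (-(1:ℝ)/2)) ?_
      meas.aestronglyMeasurable.restrict ?_
    · exact (intervalIntegrable_iff_integrableOn_Ioc_of_le zero_le_one).1
        (intervalIntegral.intervalIntegrable_rpow' (by norm_num))
    · refine (ae_restrict_iff' measurableSet_Ioc).2 (Filter.Eventually.of_forall fun s hs => ?_)
      have hs0 : 0 < s := hs.1
      have he : Real.exp (-(c/s)) ≤ 1 := Real.exp_le_one_iff.2 (neg_nonpos.2 (by positivity))
      have he2 : 0 ≤ Real.exp (-(c/s)) := (Real.exp_pos _).le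
      have hr : (0:ℝ) ≤ s ^ (-(1:ℝ)/2) := Real.rpow_nonneg hs0.le _
      rw [show ‖s ^ (-(1:ℝ)/2) * (1 - Real.exp (-(c/s)))‖ = |s ^ (-(1:ℝ)/2) * (1 - Real.exp (-(c/s)))| from rfl, _root_.abs_of_nonneg (by nlinarith)]
      nlinarith
  have h2 : IntegrableOn (fun s : ℝ => s ^ (-(1:ℝ)/2) * (1 - Real.exp (-(c/s)))) (Ioi 1) := by
    refine Integrable.mono' (g := fun s : ℝ => c * s ^ (-(3:ℝ)/2)) ?_
      meas.aestronglyMeasurable.restrict ?_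
    · exact (integrableOn_Ioi_rpow_of_lt (by norm_num) one_pos).const_mul c
    · refine (ae_restrict_iff' measurableSet_Ioi).2 (Filter.Eventually.of_forall fun s hs => ?_)
      have hs0 : (0:ℝ) < s := lt_trans one_pos hs.out
      have he : Real.exp (-(c/s)) ≤ 1 := Real.exp_le_one_iff.2 (neg_nonpos.2 (by positivity))
      have hr : (0:ℝ) ≤ s ^ (-(1:ℝ)/2) := Real.rpow_nonneg hs0.le _
      rw [show ‖s ^ (-(1:ℝ)/2) * (1 - Real.exp (-(c/s)))‖ = |s ^ (-(1:ℝ)/2) * (1 - Real.exp (-(c/s)))| from rfl, _root_.abs_of_nonneg (by nlinarith)]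
      calc s ^ (-(1:ℝ)/2) * (1 - Real.exp (-(c/s)))
          ≤ s ^ (-(1:ℝ)/2) * (c/s) := by
            exact mul_le_mul_of_nonneg_left (one_sub_exp_neg_le _) hr
        _ = c * s ^ (-(3:ℝ)/2) := by
            have h3 : s ^ (-(1:ℝ)/2) * (c / s) = c * (s ^ (-(1:ℝ)/2) * s ^ (-1:ℝ)) := by
              rw [Real.rpow_neg_one]; ring
            rw [h3, ← Real.rpow_add hs0]; norm_num
  have := h1.union h2
  rwa [Set.Ioc_union_Ioi_eq_Ioi zero_le_one] at this

lemma j_eq {c : ℝ} (hc : 0 < c) :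
    ∫ s in Ioi (0:ℝ), s ^ (-(1:ℝ)/2) * (1 - Real.exp (-(c/s)))
      = 2 * Real.sqrt π * Real.sqrt c := by
  have hsub := integral_comp_rpow_Ioi
    (fun y => y ^ (-(1:ℝ)/2) * (1 - Real.exp (-(c/y)))) (p := -1) (by norm_num)
  have lhs_eq : (∫ x in Ioi (0:ℝ), (|(-1:ℝ)| * x ^ ((-1:ℝ) - 1)) •
        ((x ^ (-1:ℝ)) ^ (-(1:ℝ)/2) * (1 - Real.exp (-(c/(x ^ (-1:ℝ)))))))
      = ∫ x in Ioi (0:ℝ), x ^ (-(3:ℝ)/2) * (1 - Real.exp (-(c*x))) := by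
    refine setIntegral_congr_fun measurableSet_Ioi fun x hx => ?_
    have hx0 : (0:ℝ) < x := hx.out
    have e1 : (x ^ (-1:ℝ)) ^ (-(1:ℝ)/2) = x ^ ((1:ℝ)/2) := by
      rw [← Real.rpow_mul hx0.le]; norm_num
    have e2 : c / x ^ (-1:ℝ) = c * x := by rw [Real.rpow_neg_one]; field_simp
    rw [smul_eq_mul, e1, e2, abs_neg, abs_one]
    rw [show ((-1:ℝ) - 1) = -2 by norm_num]
    rw [show x ^ (-(3:ℝ)/2) = x ^ (-2:ℝ) * x ^ ((1:ℝ)/2) by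
      rw [← Real.rpow_add hx0]; norm_num]
    ring
  have hscale := MeasureTheory.integral_comp_mul_left_Ioi
    (fun y => y ^ (-(3:ℝ)/2) * (1 - Real.exp (-y))) 0 hc
  rw [mul_zero] at hscale
  have lhs2 : (∫ x in Ioi (0:ℝ), (c * x) ^ (-(3:ℝ)/2) * (1 - Real.exp (-(c*x))))
      = c ^ (-(3:ℝ)/2) * ∫ x in Ioi (0:ℝ), x ^ (-(3:ℝ)/2) * (1 - Real.exp (-(c*x))) := by
    rw [← MeasureTheory.integral_const_mul]
    refine setIntegral_congr_fun measurableSet_Ioi fun x hx => ?_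
    rw [Real.mul_rpow hc.le (le_of_lt hx.out)]; ring
  rw [lhs2, K_eq, smul_eq_mul] at hscale
  have hc32 : c ^ (-(3:ℝ)/2) ≠ 0 := by positivity
  have main : (∫ x in Ioi (0:ℝ), x ^ (-(3:ℝ)/2) * (1 - Real.exp (-(c*x))))
      = c ^ ((3:ℝ)/2) * (c⁻¹ * (2 * Real.sqrt π)) := by
    have hone : c ^ ((3:ℝ)/2) * c ^ (-(3:ℝ)/2) = 1 := by
      rw [← Real.rpow_add hc]; norm_num
    set T := ∫ x in Ioi (0:ℝ), x ^ (-(3:ℝ)/2) * (1 - Real.exp (-(c*x))) with hT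
    calc T = (c ^ ((3:ℝ)/2) * c ^ (-(3:ℝ)/2)) * T := by rw [hone, one_mul]
      _ = c ^ ((3:ℝ)/2) * (c ^ (-(3:ℝ)/2) * T) := by ring
      _ = c ^ ((3:ℝ)/2) * (c⁻¹ * (2 * Real.sqrt π)) := by rw [hscale]
  rw [← hsub, lhs_eq, main]
  rw [show c⁻¹ = c ^ (-1:ℝ) by rw [Real.rpow_neg_one], ← mul_assoc,
    ← Real.rpow_add hc, show (3:ℝ)/2 + (-1) = 1/2 by norm_num,
    show Real.sqrt c = c ^ ((1:ℝ)/2) by rw [Real.sqrt_eq_rpow]]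
  ring


variable {p : ℕ}

local notation "E" => EuclideanSpace ℝ (Fin p)

lemma integrable_gauss (s : ℝ) (hs : 0 < s) :
    Integrable (fun t : E => Real.exp (-s * ‖t‖ ^ 2)) := by
  have hsc : (0 : ℝ) < (s : ℂ).re := by simpa using hs
  have h := (GaussianFourier.integrable_cexp_neg_mul_sq_norm_add (V := E) hsc 0 0).re
  refine h.congr (Filter.Eventually.of_forall fun t => ?_)
  simp [Complex.exp_re, ← Complex.ofReal_pow]

lemma integrable_gauss_cos (s : ℝ) (hs : 0 < s) (z : E) :
    Integrable (fun t : E => Real.exp (-s * ‖t‖ ^ 2) * Real.cos (inner ℝ t z)) := by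
  have hsc : (0 : ℝ) < (s : ℂ).re := by simpa using hs
  have h := (GaussianFourier.integrable_cexp_neg_mul_sq_norm_add (V := E) hsc Complex.I z).re
  simp only [RCLike.re_to_complex] at h
  refine h.congr (Filter.Eventually.of_forall fun t => ?_)
  show (cexp (-(s:ℂ) * (‖t‖:ℂ) ^ 2 + Complex.I * ((inner ℝ z t : ℝ) : ℂ))).re = _
  have : (-(s:ℂ) * (‖t‖:ℂ) ^ 2 + Complex.I * ((inner ℝ z t : ℝ) : ℂ)) =
      Complex.mk (-s * ‖t‖ ^ 2) (inner ℝ z t) := by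
    apply Complex.ext <;> simp [← Complex.ofReal_pow]
  rw [this]
  simp [Complex.exp_re, real_inner_comm, mul_comm]

/-- Gaussian integral with a cosine: `∫ e^{-s‖t‖²}(1-cos⟨t,z⟩) dt`. -/
lemma gauss_cos (s : ℝ) (hs : 0 < s) (z : E) :
    ∫ t : E, Real.exp (-s * ‖t‖ ^ 2) * (1 - Real.cos (inner ℝ t z)) =
      (π / s) ^ ((p : ℝ) / 2) * (1 - Real.exp (-‖z‖ ^ 2 / (4 * s))) := by
  have hsc : (0 : ℝ) < (s : ℂ).re := by simpa using hs
  have hC := GaussianFourier.integral_cexp_neg_mul_sq_norm_add (V := E) hsc Complex.I z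
  rw [finrank_euclideanSpace_fin] at hC
  have hcos : ∫ t : E, Real.exp (-s * ‖t‖ ^ 2) * Real.cos (inner ℝ t z) =
      (π / s) ^ ((p : ℝ) / 2) * Real.exp (-‖z‖ ^ 2 / (4 * s)) := by
    have hint := integral_re (μ := (volume : Measure E))
      (GaussianFourier.integrable_cexp_neg_mul_sq_norm_add (V := E) hsc Complex.I z)
    simp only [RCLike.re_to_complex] at hint
    have hre := hint.trans (congrArg Complex.re hC)
    calc ∫ t : E, Real.exp (-s * ‖t‖ ^ 2) * Real.cos (inner ℝ t z)
        = ∫ t : E, (cexp (-(s:ℂ) * (‖t‖:ℂ) ^ 2 + Complex.I * ((inner ℝ z t : ℝ) : ℂ))).re := by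
          congr 1; ext t
          have : (-(s:ℂ) * (‖t‖:ℂ) ^ 2 + Complex.I * ((inner ℝ z t : ℝ) : ℂ)) =
              Complex.mk (-s * ‖t‖ ^ 2) (inner ℝ z t) := by
            apply Complex.ext <;> simp [← Complex.ofReal_pow]
          rw [this]
          simp [Complex.exp_re, real_inner_comm, mul_comm]
      _ = (((π : ℂ) / s) ^ ((p : ℂ) / 2) * cexp (Complex.I ^ 2 * (‖z‖:ℂ) ^ 2 / (4 * s))).re := hre
      _ = (π / s) ^ ((p : ℝ) / 2) * Real.exp (-‖z‖ ^ 2 / (4 * s)) := by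
          have h1 : ((π : ℂ) / s) ^ ((p : ℂ) / 2) = ((((π / s) : ℝ) ^ ((p : ℝ) / 2) : ℝ) : ℂ) := by
            rw [Complex.ofReal_cpow (by positivity)]
            push_cast; ring_nf
          have h2 : cexp (Complex.I ^ 2 * (‖z‖:ℂ) ^ 2 / (4 * s)) =
              ((Real.exp (-‖z‖ ^ 2 / (4 * s)) : ℝ) : ℂ) := by
            rw [show Complex.I ^ 2 * (‖z‖:ℂ) ^ 2 / (4 * (s:ℂ)) = ((-‖z‖ ^ 2 / (4 * s) : ℝ) : ℂ) by
              rw [Complex.I_sq]; push_cast; ring, ← Complex.ofReal_exp]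
          rw [h1, h2, ← Complex.ofReal_mul, Complex.ofReal_re]
  have h1 : ∫ t : E, Real.exp (-s * ‖t‖ ^ 2) = (π / s) ^ ((p : ℝ) / 2) := by
    have := GaussianFourier.integral_rexp_neg_mul_sq_norm (V := E) hs
    rwa [finrank_euclideanSpace_fin] at this
  have : (fun t : E => Real.exp (-s * ‖t‖ ^ 2) * (1 - Real.cos (inner ℝ t z))) =
      fun t : E => Real.exp (-s * ‖t‖ ^ 2) - Real.exp (-s * ‖t‖ ^ 2) * Real.cos (inner ℝ t z) := by
    ext t; ring
  rw [this, integral_sub (integrable_gauss s hs) (integrable_gauss_cos s hs z), h1, hcos]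
  ring







lemma one_sub_cos_nonneg (r : ℝ) : 0 ≤ 1 - Real.cos r := by
  have := Real.cos_le_one r; linarith

lemma integrable_gauss_one_sub_cos (s : ℝ) (hs : 0 < s) (z : E) :
    Integrable (fun t : E => Real.exp (-s * ‖t‖ ^ 2) * (1 - Real.cos (inner ℝ t z))) := by
  have h : (fun t : E => Real.exp (-s * ‖t‖ ^ 2) * (1 - Real.cos (inner ℝ t z)))
      = fun t => Real.exp (-s * ‖t‖ ^ 2) - Real.exp (-s * ‖t‖ ^ 2) * Real.cos (inner ℝ t z) := by
    ext t; ring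
  rw [h]; exact (integrable_gauss s hs).sub (integrable_gauss_cos s hs z)

set_option maxHeartbeats 1000000 in
lemma key0 (hp : 0 < p) (z : E) (hz : z ≠ 0) :
    ∫⁻ t : E, ENNReal.ofReal ((1 - Real.cos (inner ℝ t z)) * (‖t‖ ^ (1 + (p:ℝ)))⁻¹)
      = ENNReal.ofReal (π ^ ((1 + (p:ℝ))/2) / Real.Gamma ((1 + (p:ℝ))/2) * ‖z‖) := by
  have hpr : (0:ℝ) ≤ (p:ℝ) := Nat.cast_nonneg p
  set a : ℝ := (1 + (p:ℝ))/2 with ha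
  set q : ℝ := ((p:ℝ) - 1)/2 with hqdef
  have hq1 : (-1:ℝ) < q := by rw [hqdef]; linarith
  have ha0 : 0 < a := by rw [ha]; linarith
  have hΓ : 0 < Real.Gamma a := Real.Gamma_pos_of_pos ha0
  have hΓo : ENNReal.ofReal (Real.Gamma a) ≠ 0 := (ENNReal.ofReal_pos.2 hΓ).ne'
  set c : ℝ := ‖z‖^2/4 with hc
  have hzn : 0 < ‖z‖ := norm_pos_iff.2 hz
  have hc0 : 0 < c := by rw [hc]; positivity
  have step1 : ∀ t : E, t ≠ 0 →
      ENNReal.ofReal ((1 - Real.cos (inner ℝ t z)) * (‖t‖ ^ (1 + (p:ℝ)))⁻¹)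
        = (ENNReal.ofReal (Real.Gamma a))⁻¹ *
          ∫⁻ s in Ioi (0:ℝ), ENNReal.ofReal (s ^ q * Real.exp (-(‖t‖^2) * s)
            * (1 - Real.cos (inner ℝ t z))) := by
    intro t ht
    have htn : 0 < ‖t‖ := norm_pos_iff.2 ht
    have hb : (0:ℝ) < ‖t‖^2 := by positivity
    have hInt : IntegrableOn
        (fun s : ℝ => s ^ q * Real.exp (-(‖t‖^2) * s) * (1 - Real.cos (inner ℝ t z)))
        (Ioi 0) := by
      refine IntegrableOn.congr_fun
        ((integrableOn_rpow_mul_exp_neg_mul_rpow hq1 one_pos hb).mul_const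
          (1 - Real.cos (inner ℝ t z))) (fun s hs => ?_) measurableSet_Ioi
      rw [Real.rpow_one]
    have hbase : ∫ s in Ioi (0:ℝ), s ^ q * Real.exp (-(‖t‖^2) * s)
        = (‖t‖ ^ (1 + (p:ℝ)))⁻¹ * Real.Gamma a := by
      have base := integral_rpow_mul_exp_neg_mul_rpow one_pos hq1 hb
      have hcg : ∫ s in Ioi (0:ℝ), s ^ q * Real.exp (-(‖t‖^2) * s)
          = ∫ x in Ioi (0:ℝ), x ^ q * Real.exp (-(‖t‖^2) * x ^ (1:ℝ)) :=
        setIntegral_congr_fun measurableSet_Ioi fun x _ => by rw [Real.rpow_one]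
      rw [hcg, base]
      have e1 : ((q + 1) / 1) = a := by rw [hqdef, ha]; ring
      have e2 : ((‖t‖^2 : ℝ)) ^ (-(q + 1) / 1) = (‖t‖ ^ (1 + (p:ℝ)))⁻¹ := by
        rw [← Real.rpow_natCast ‖t‖ 2, ← Real.rpow_mul (norm_nonneg t),
          ← Real.rpow_neg (norm_nonneg t)]
        congr 1
        rw [hqdef]; push_cast; ring
      rw [e1, e2]; ring
    have hval : ∫ s in Ioi (0:ℝ), s ^ q * Real.exp (-(‖t‖^2) * s) * (1 - Real.cos (inner ℝ t z))
        = (1 - Real.cos (inner ℝ t z)) * (‖t‖ ^ (1 + (p:ℝ)))⁻¹ * Real.Gamma a := by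
      have hswap : (fun s : ℝ => s ^ q * Real.exp (-(‖t‖^2) * s) * (1 - Real.cos (inner ℝ t z)))
          = fun s : ℝ => (1 - Real.cos (inner ℝ t z)) * (s ^ q * Real.exp (-(‖t‖^2) * s)) := by
        ext s; ring
      rw [hswap, MeasureTheory.integral_const_mul, hbase]; ring
    have hnn : ∀ᵐ s ∂(volume.restrict (Ioi (0:ℝ))),
        0 ≤ s ^ q * Real.exp (-(‖t‖^2) * s) * (1 - Real.cos (inner ℝ t z)) := by
      refine (ae_restrict_iff' measurableSet_Ioi).2 (Filter.Eventually.of_forall fun s hs => ?_)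
      have h1 : (0:ℝ) ≤ s ^ q := Real.rpow_nonneg (le_of_lt hs.out) _
      have h2 := one_sub_cos_nonneg (inner ℝ t z)
      positivity
    rw [← ofReal_integral_eq_lintegral_ofReal hInt hnn, hval,
      ENNReal.ofReal_mul (mul_nonneg (one_sub_cos_nonneg _)
        (inv_nonneg.2 (Real.rpow_nonneg (norm_nonneg t) _))),
      mul_comm (ENNReal.ofReal ((1 - Real.cos (inner ℝ t z)) * (‖t‖ ^ (1 + (p:ℝ)))⁻¹))
        (ENNReal.ofReal (Real.Gamma a)), ← mul_assoc,
      ENNReal.inv_mul_cancel hΓo ENNReal.ofReal_ne_top, one_mul]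
  have h0 : ∀ᵐ t : E, t ≠ 0 := by
    have hnt : Nontrivial (EuclideanSpace ℝ (Fin p)) := by
      have : Nonempty (Fin p) := ⟨⟨0, hp⟩⟩
      infer_instance
    have h1 : (volume : Measure (EuclideanSpace ℝ (Fin p))) {0} = 0 := measure_singleton 0
    rw [ae_iff]
    have h2 : {t : EuclideanSpace ℝ (Fin p) | ¬ t ≠ 0} = {0} := by ext t; simp
    rw [h2]; exact h1
  have measF : Measurable (Function.uncurry fun (t : E) (s : ℝ) =>
      ENNReal.ofReal (s ^ q * Real.exp (-(‖t‖^2) * s) * (1 - Real.cos (inner ℝ t z)))) := by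
    apply Measurable.ennreal_ofReal
    have m1 : Measurable fun tu : EuclideanSpace ℝ (Fin p) × ℝ => tu.2 ^ q :=
      (by fun_prop : Measurable fun y : ℝ => y ^ q).comp measurable_snd
    have m2 : Measurable fun tu : EuclideanSpace ℝ (Fin p) × ℝ =>
        Real.exp (-(‖tu.1‖^2) * tu.2) :=
      Real.measurable_exp.comp
        ((((measurable_norm.comp measurable_fst).pow measurable_const).neg).mul measurable_snd)
    have m3 : Measurable fun tu : EuclideanSpace ℝ (Fin p) × ℝ =>
        (1 - Real.cos (inner ℝ tu.1 z)) :=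
      measurable_const.sub (Real.measurable_cos.comp
        ((measurable_fst).inner measurable_const))
    exact (m1.mul m2).mul m3
  calc ∫⁻ t : E, ENNReal.ofReal ((1 - Real.cos (inner ℝ t z)) * (‖t‖ ^ (1 + (p:ℝ)))⁻¹)
      = ∫⁻ t : E, (ENNReal.ofReal (Real.Gamma a))⁻¹ *
          ∫⁻ s in Ioi (0:ℝ), ENNReal.ofReal (s ^ q * Real.exp (-(‖t‖^2) * s)
            * (1 - Real.cos (inner ℝ t z))) := by
        refine lintegral_congr_ae ?_
        filter_upwards [h0] with t ht
        exact step1 t ht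
    _ = (ENNReal.ofReal (Real.Gamma a))⁻¹ * ∫⁻ t : E,
          ∫⁻ s in Ioi (0:ℝ), ENNReal.ofReal (s ^ q * Real.exp (-(‖t‖^2) * s)
            * (1 - Real.cos (inner ℝ t z))) :=
        lintegral_const_mul' _ _ (ENNReal.inv_ne_top.2 hΓo)
    _ = (ENNReal.ofReal (Real.Gamma a))⁻¹ * ∫⁻ s in Ioi (0:ℝ),
          ∫⁻ t : E, ENNReal.ofReal (s ^ q * Real.exp (-(‖t‖^2) * s)
            * (1 - Real.cos (inner ℝ t z))) := by
        rw [lintegral_lintegral_swap measF.aemeasurable]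
    _ = (ENNReal.ofReal (Real.Gamma a))⁻¹ * ∫⁻ s in Ioi (0:ℝ),
          ENNReal.ofReal (π ^ ((p:ℝ)/2) * (s ^ (-(1:ℝ)/2) * (1 - Real.exp (-(c/s))))) := by
        congr 1
        refine setLIntegral_congr_fun measurableSet_Ioi (
          fun s hs => ?_)
        have hs0 : (0:ℝ) < s := hs.out
        have e1 : (fun t : E => ENNReal.ofReal (s ^ q * Real.exp (-(‖t‖^2) * s)
              * (1 - Real.cos (inner ℝ t z))))
            = fun t : E => ENNReal.ofReal (s ^ q) *
                ENNReal.ofReal (Real.exp (-s * ‖t‖^2) * (1 - Real.cos (inner ℝ t z))) := by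
          ext t
          rw [← ENNReal.ofReal_mul (Real.rpow_nonneg hs0.le _)]
          congr 1
          rw [show -s * ‖t‖^2 = -(‖t‖^2) * s by ring]
          ring
        rw [e1, lintegral_const_mul' _ _ ENNReal.ofReal_ne_top,
          ← ofReal_integral_eq_lintegral_ofReal (integrable_gauss_one_sub_cos s hs0 z)
            (Filter.Eventually.of_forall fun t =>
              mul_nonneg (Real.exp_pos _).le (one_sub_cos_nonneg _)),
          gauss_cos s hs0 z, ← ENNReal.ofReal_mul (Real.rpow_nonneg hs0.le _)]
        congr 1
        have e2 : -‖z‖^2/(4*s) = -(c/s) := by rw [hc]; field_simp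
        rw [e2]
        have e3 : (π / s) ^ ((p:ℝ)/2) = π ^ ((p:ℝ)/2) * s ^ (-((p:ℝ)/2)) := by
          rw [Real.div_rpow Real.pi_pos.le hs0.le, Real.rpow_neg hs0.le, div_eq_mul_inv]
        rw [e3]
        have e4 : s ^ q * s ^ (-((p:ℝ)/2)) = s ^ (-(1:ℝ)/2) := by
          rw [← Real.rpow_add hs0]
          congr 1
          rw [hqdef]; ring
        calc s ^ q * (π ^ ((p:ℝ)/2) * s ^ (-((p:ℝ)/2)) * (1 - Real.exp (-(c/s))))
            = π ^ ((p:ℝ)/2) * ((s ^ q * s ^ (-((p:ℝ)/2))) * (1 - Real.exp (-(c/s)))) := by ring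
          _ = π ^ ((p:ℝ)/2) * (s ^ (-(1:ℝ)/2) * (1 - Real.exp (-(c/s)))) := by rw [e4]
    _ = (ENNReal.ofReal (Real.Gamma a))⁻¹ * (ENNReal.ofReal (π ^ ((p:ℝ)/2)) *
          ∫⁻ s in Ioi (0:ℝ), ENNReal.ofReal (s ^ (-(1:ℝ)/2) * (1 - Real.exp (-(c/s))))) := by
        congr 1
        rw [← lintegral_const_mul' _ _ ENNReal.ofReal_ne_top]
        refine lintegral_congr fun s => ?_
        rw [← ENNReal.ofReal_mul (Real.rpow_nonneg Real.pi_pos.le _)]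
    _ = ENNReal.ofReal (π ^ ((1 + (p:ℝ))/2) / Real.Gamma ((1 + (p:ℝ))/2) * ‖z‖) := by
        have hnnj : ∀ᵐ s ∂(volume.restrict (Ioi (0:ℝ))),
            0 ≤ s ^ (-(1:ℝ)/2) * (1 - Real.exp (-(c/s))) := by
          refine (ae_restrict_iff' measurableSet_Ioi).2 (Filter.Eventually.of_forall
            fun s hs => ?_)
          have hs0 : (0:ℝ) < s := hs.out
          have h1 : (0:ℝ) ≤ s ^ (-(1:ℝ)/2) := Real.rpow_nonneg hs0.le _
          have h2 : Real.exp (-(c/s)) ≤ 1 := Real.exp_le_one_iff.2 (neg_nonpos.2 (by positivity))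
          nlinarith
        rw [← ofReal_integral_eq_lintegral_ofReal (j_integrable hc0) hnnj, j_eq hc0,
          ← ENNReal.ofReal_mul (Real.rpow_nonneg Real.pi_pos.le _)]
        have hsqc : Real.sqrt c = ‖z‖/2 := by
          rw [hc, show ‖z‖^2/4 = (‖z‖/2)^2 by ring, Real.sqrt_sq (by positivity)]
        have e5 : π ^ ((p:ℝ)/2) * (2 * Real.sqrt π * Real.sqrt c) = π ^ a * ‖z‖ := by
          rw [hsqc, Real.sqrt_eq_rpow]
          calc π ^ ((p:ℝ)/2) * (2 * π ^ ((1:ℝ)/2) * (‖z‖/2))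
              = (π ^ ((p:ℝ)/2) * π ^ ((1:ℝ)/2)) * ‖z‖ := by ring
            _ = π ^ a * ‖z‖ := by
                rw [← Real.rpow_add Real.pi_pos]
                congr 2
                rw [ha]; ring
        rw [e5, show π ^ a / Real.Gamma a * ‖z‖ = (π ^ a * ‖z‖) / Real.Gamma a by ring,
          ENNReal.ofReal_div_of_pos hΓ, ENNReal.div_eq_inv_mul]


lemma key {p : ℕ} (hp : 0 < p) (z : EuclideanSpace ℝ (Fin p)) :
    ∫⁻ t : EuclideanSpace ℝ (Fin p), ENNReal.ofReal ((1 - Real.cos (inner ℝ t z)) /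
        ((π ^ ((1 + (p:ℝ)) / 2) / Real.Gamma ((1 + (p:ℝ)) / 2)) * ‖t‖ ^ (1 + (p:ℝ))))
      = ENNReal.ofReal ‖z‖ := by
  set Cp : ℝ := π ^ ((1 + (p:ℝ))/2) / Real.Gamma ((1 + (p:ℝ))/2) with hCp
  have ha0 : (0:ℝ) < (1 + (p:ℝ))/2 := by positivity
  have hC : 0 < Cp := div_pos (Real.rpow_pos_of_pos Real.pi_pos _)
    (Real.Gamma_pos_of_pos ha0)
  by_cases hz : z = 0
  · subst hz
    have hz0 : ∀ t : EuclideanSpace ℝ (Fin p),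
        (1 - Real.cos (inner ℝ t (0 : EuclideanSpace ℝ (Fin p)))) / (Cp * ‖t‖ ^ (1 + (p:ℝ)))
          = 0 := by
      intro t
      rw [inner_zero_right, Real.cos_zero]
      simp
    calc ∫⁻ t : EuclideanSpace ℝ (Fin p), ENNReal.ofReal
          ((1 - Real.cos (inner ℝ t (0 : EuclideanSpace ℝ (Fin p)))) / (Cp * ‖t‖ ^ (1 + (p:ℝ))))
        = ∫⁻ _t : EuclideanSpace ℝ (Fin p), (0:ENNReal) :=
          lintegral_congr fun t => by rw [hz0 t, ENNReal.ofReal_zero]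
      _ = ENNReal.ofReal ‖(0 : EuclideanSpace ℝ (Fin p))‖ := by simp
  · have hpt : ∀ t : EuclideanSpace ℝ (Fin p),
        (1 - Real.cos (inner ℝ t z)) / (Cp * ‖t‖ ^ (1 + (p:ℝ)))
          = Cp⁻¹ * ((1 - Real.cos (inner ℝ t z)) * (‖t‖ ^ (1 + (p:ℝ)))⁻¹) := by
      intro t; rw [div_eq_mul_inv, mul_inv]; ring
    calc ∫⁻ t : EuclideanSpace ℝ (Fin p), ENNReal.ofReal
          ((1 - Real.cos (inner ℝ t z)) / (Cp * ‖t‖ ^ (1 + (p:ℝ))))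
        = ∫⁻ t : EuclideanSpace ℝ (Fin p), ENNReal.ofReal Cp⁻¹ *
            ENNReal.ofReal ((1 - Real.cos (inner ℝ t z)) * (‖t‖ ^ (1 + (p:ℝ)))⁻¹) := by
          refine lintegral_congr fun t => ?_
          rw [hpt t, ENNReal.ofReal_mul (inv_nonneg.2 hC.le)]
      _ = ENNReal.ofReal Cp⁻¹ * ∫⁻ t : EuclideanSpace ℝ (Fin p),
            ENNReal.ofReal ((1 - Real.cos (inner ℝ t z)) * (‖t‖ ^ (1 + (p:ℝ)))⁻¹) :=
          lintegral_const_mul' _ _ ENNReal.ofReal_ne_top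
      _ = ENNReal.ofReal Cp⁻¹ * ENNReal.ofReal (Cp * ‖z‖) := by
          rw [key0 hp z hz, ← hCp]
      _ = ENNReal.ofReal ‖z‖ := by
          rw [← ENNReal.ofReal_mul (inv_nonneg.2 hC.le), inv_mul_cancel_left₀ hC.ne']



/-- `∫_{ℝ^p} (1 - |f_X(t)|²)/(c_p |t|^{1+p}) dt = E|X - X'|`, where `X'` is an
independent copy of `X` and `c_p = π^{(1+p)/2}/Γ((1+p)/2)`. -/
theorem integral_one_sub_sq_charFun {Ω : Type*} [MeasureSpace Ω]
    [IsProbabilityMeasure (volume : Measure Ω)]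
    (p : ℕ) (X : Ω → EuclideanSpace ℝ (Fin p))
    (hX : Measurable X) (hX1 : Integrable (fun ω => ‖X ω‖)) :
    (∫ t : EuclideanSpace ℝ (Fin p),
        (1 - ‖∫ ω, Complex.exp ((inner ℝ t (X ω) : ℝ) * Complex.I)‖ ^ 2) /
          ((Real.pi ^ ((1 + (p : ℝ)) / 2) / Real.Gamma ((1 + (p : ℝ)) / 2)) *
            ‖t‖ ^ (1 + (p : ℝ)))) =
      ∫ ω : Ω × Ω, ‖X ω.1 - X ω.2‖ := by
  have hPP : IsProbabilityMeasure (volume : Measure (Ω × Ω)) := by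
    constructor
    rw [Measure.volume_eq_prod, ← Set.univ_prod_univ, Measure.prod_prod]
    simp
  rcases Nat.eq_zero_or_pos p with hp0 | hp
  · subst hp0
    simp only [Nat.cast_zero]
    have h0 : ∀ (t x : EuclideanSpace ℝ (Fin 0)), (inner ℝ t x : ℝ) = 0 := by
      intro t x
      rw [Subsingleton.elim t 0, inner_zero_left]
    have hL : (∫ t : EuclideanSpace ℝ (Fin 0),
        (1 - ‖∫ ω, Complex.exp ((inner ℝ t (X ω) : ℝ) * Complex.I)‖ ^ 2) /
          ((Real.pi ^ ((1 + (0 : ℝ)) / 2) / Real.Gamma ((1 + (0 : ℝ)) / 2)) *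
            ‖t‖ ^ (1 + (0 : ℝ)))) = 0 := by
      have : ∀ t : EuclideanSpace ℝ (Fin 0),
          (1 - ‖∫ ω, Complex.exp ((inner ℝ t (X ω) : ℝ) * Complex.I)‖ ^ 2) /
            ((Real.pi ^ ((1 + (0 : ℝ)) / 2) / Real.Gamma ((1 + (0 : ℝ)) / 2)) *
              ‖t‖ ^ (1 + (0 : ℝ))) = 0 := by
        intro t
        have : (∫ ω, Complex.exp ((inner ℝ t (X ω) : ℝ) * Complex.I)) = 1 := by
          have : (fun ω => Complex.exp ((inner ℝ t (X ω) : ℝ) * Complex.I))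
              = fun _ => (1 : ℂ) := by
            ext ω; rw [h0 t (X ω)]; simp
          rw [this, integral_const]
          simp
        rw [this]
        simp
      rw [integral_congr_ae (Filter.Eventually.of_forall this)]
      simp
    rw [hL]
    have : ∀ ω : Ω × Ω, ‖X ω.1 - X ω.2‖ = 0 := fun ω => by
      rw [sub_eq_zero.2 (Subsingleton.elim _ _), norm_zero]
    rw [integral_congr_ae (Filter.Eventually.of_forall this)]
    simp
  · -- main case
    set Cp : ℝ := π ^ ((1 + (p:ℝ))/2) / Real.Gamma ((1 + (p:ℝ))/2) with hCp
    have ha0 : (0:ℝ) < (1 + (p:ℝ))/2 := by positivity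
    have hC : 0 < Cp := div_pos (Real.rpow_pos_of_pos Real.pi_pos _)
      (Real.Gamma_pos_of_pos ha0)
    have hXim : ∀ t : EuclideanSpace ℝ (Fin p), Measurable fun ω => (inner ℝ t (X ω) : ℝ) :=
      fun t => Measurable.inner measurable_const hX
    have hfm : ∀ t : EuclideanSpace ℝ (Fin p),
        AEStronglyMeasurable (fun ω => Complex.exp ((inner ℝ t (X ω) : ℝ) * Complex.I)) volume :=
      fun t => ((Complex.measurable_exp.comp
        ((Complex.measurable_ofReal.comp (hXim t)).mul_const Complex.I))).aestronglyMeasurable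
    have hcos_meas : ∀ t : EuclideanSpace ℝ (Fin p), Measurable fun ω : Ω × Ω =>
        Real.cos (inner ℝ t (X ω.1 - X ω.2)) :=
      fun t => Real.measurable_cos.comp (Measurable.inner measurable_const
        ((hX.comp measurable_fst).sub (hX.comp measurable_snd)))
    have hcos_int : ∀ t, Integrable (fun ω : Ω × Ω =>
        Real.cos (inner ℝ t (X ω.1 - X ω.2))) volume :=
      fun t => ⟨(hcos_meas t).aestronglyMeasurable, HasFiniteIntegral.of_bounded (C := 1)
        (Filter.Eventually.of_forall fun ω => by
          rw [Real.norm_eq_abs]; exact Real.abs_cos_le_one _)⟩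
    have h_main : ∀ t : EuclideanSpace ℝ (Fin p),
        1 - ‖∫ ω, Complex.exp ((inner ℝ t (X ω) : ℝ) * Complex.I)‖ ^ 2
          = ∫ ω : Ω × Ω, (1 - Real.cos (inner ℝ t (X ω.1 - X ω.2))) := by
      intro t
      have h_sq : ‖∫ ω, Complex.exp ((inner ℝ t (X ω) : ℝ) * Complex.I)‖ ^ 2
          = ∫ ω : Ω × Ω, Real.cos (inner ℝ t (X ω.1 - X ω.2)) := by
        set f : Ω → ℂ := fun ω => Complex.exp ((inner ℝ t (X ω) : ℝ) * Complex.I) with hf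
        set g : Ω → ℂ := fun ω => Complex.exp (-(inner ℝ t (X ω) : ℝ) * Complex.I) with hg
        have hconj : (starRingEnd ℂ) (∫ ω, f ω) = ∫ ω, g ω := by
          rw [← integral_conj]
          congr 1; ext ω
          rw [hf, hg]
          simp only []
          rw [← Complex.exp_conj]
          congr 1
          rw [map_mul, Complex.conj_ofReal, Complex.conj_I]
          ring
        have hprod : (∫ ω, f ω) * (starRingEnd ℂ) (∫ ω, f ω)
            = ∫ ω : Ω × Ω, Complex.exp ((inner ℝ t (X ω.1 - X ω.2) : ℝ) * Complex.I) := by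
          rw [hconj, ← integral_prod_mul f g, ← Measure.volume_eq_prod]
          congr 1; ext ω
          rw [hf, hg]
          simp only []
          rw [← Complex.exp_add]
          congr 1
          rw [inner_sub_right]
          push_cast
          ring
        have hint2 : Integrable (fun ω : Ω × Ω =>
            Complex.exp ((inner ℝ t (X ω.1 - X ω.2) : ℝ) * Complex.I)) volume :=
          ⟨(Complex.measurable_exp.comp ((Complex.measurable_ofReal.comp
              (Measurable.inner measurable_const
                ((hX.comp measurable_fst).sub (hX.comp measurable_snd)))).mul_const
              Complex.I)).aestronglyMeasurable,
            HasFiniteIntegral.of_bounded (C := 1) (Filter.Eventually.of_forall fun ω => by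
              rw [Complex.norm_exp_ofReal_mul_I])⟩
        calc ‖∫ ω, f ω‖ ^ 2
            = ((∫ ω, f ω) * (starRingEnd ℂ) (∫ ω, f ω)).re := by
              rw [Complex.mul_conj, Complex.ofReal_re, Complex.sq_norm]
          _ = (∫ ω : Ω × Ω, Complex.exp ((inner ℝ t (X ω.1 - X ω.2) : ℝ) * Complex.I)).re := by
              rw [hprod]
          _ = ∫ ω : Ω × Ω, Real.cos (inner ℝ t (X ω.1 - X ω.2)) := by
              have hre := integral_re hint2
              simp only [RCLike.re_to_complex] at hre
              rw [← hre]
              congr 1; ext ω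
              rw [Complex.exp_ofReal_mul_I_re]
      rw [h_sq, integral_sub (integrable_const 1) (hcos_int t), integral_const]
      simp
    have hGmeas : Measurable fun q : (EuclideanSpace ℝ (Fin p)) × (Ω × Ω) =>
        (1 - Real.cos (inner ℝ q.1 (X q.2.1 - X q.2.2))) / (Cp * ‖q.1‖ ^ (1 + (p:ℝ))) := by
      apply Measurable.div
      · exact measurable_const.sub (Real.measurable_cos.comp (Measurable.inner measurable_fst
          (((hX.comp measurable_fst).sub (hX.comp measurable_snd)).comp measurable_snd)))
      · exact measurable_const.mul
          ((by fun_prop : Measurable fun y : ℝ => y ^ (1 + (p:ℝ))).comp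
            (measurable_norm.comp measurable_fst))
    have hFnn : ∀ (t : EuclideanSpace ℝ (Fin p)) (ω : Ω × Ω),
        0 ≤ (1 - Real.cos (inner ℝ t (X ω.1 - X ω.2))) / (Cp * ‖t‖ ^ (1 + (p:ℝ))) := by
      intro t ω
      have h1 : 0 ≤ 1 - Real.cos (inner ℝ t (X ω.1 - X ω.2)) := by
        have := Real.cos_le_one (inner ℝ t (X ω.1 - X ω.2)); linarith
      have h2 : (0:ℝ) ≤ Cp * ‖t‖ ^ (1 + (p:ℝ)) :=
        mul_nonneg hC.le (Real.rpow_nonneg (norm_nonneg t) _)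
      exact div_nonneg h1 h2
    have hFint : ∀ t : EuclideanSpace ℝ (Fin p), Integrable (fun ω : Ω × Ω =>
        (1 - Real.cos (inner ℝ t (X ω.1 - X ω.2))) / (Cp * ‖t‖ ^ (1 + (p:ℝ)))) volume := by
      intro t
      refine ⟨((measurable_const.sub (Real.measurable_cos.comp (Measurable.inner measurable_const
          ((hX.comp measurable_fst).sub (hX.comp measurable_snd))))).div_const
          _).aestronglyMeasurable,
        HasFiniteIntegral.of_bounded (C := 2 * (Cp * ‖t‖ ^ (1 + (p:ℝ)))⁻¹)
          (Filter.Eventually.of_forall fun ω => ?_)⟩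
      rw [Real.norm_eq_abs, _root_.abs_of_nonneg (hFnn t ω), div_eq_mul_inv]
      have h1 : 1 - Real.cos (inner ℝ t (X ω.1 - X ω.2)) ≤ 2 := by
        have := Real.neg_one_le_cos (inner ℝ t (X ω.1 - X ω.2)); linarith
      have h2 : (0:ℝ) ≤ (Cp * ‖t‖ ^ (1 + (p:ℝ)))⁻¹ :=
        inv_nonneg.2 (mul_nonneg hC.le (Real.rpow_nonneg (norm_nonneg t) _))
      exact mul_le_mul_of_nonneg_right h1 h2
    have hZm : Measurable fun ω : Ω × Ω => ‖X ω.1 - X ω.2‖ :=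
      ((hX.comp measurable_fst).sub (hX.comp measurable_snd)).norm
    have hZint : Integrable (fun ω : Ω × Ω => ‖X ω.1 - X ω.2‖) volume := by
      have hfst : MeasurePreserving (Prod.fst : Ω × Ω → Ω) volume volume :=
        ⟨measurable_fst, by rw [Measure.volume_eq_prod, Measure.map_fst_prod]; simp⟩
      have hsnd : MeasurePreserving (Prod.snd : Ω × Ω → Ω) volume volume :=
        ⟨measurable_snd, by rw [Measure.volume_eq_prod, Measure.map_snd_prod]; simp⟩
      have h1 : Integrable ((fun ω => ‖X ω‖) ∘ Prod.fst) volume :=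
        (hfst.integrable_comp hX.norm.aestronglyMeasurable).2 hX1
      have h2 : Integrable ((fun ω => ‖X ω‖) ∘ Prod.snd) volume :=
        (hsnd.integrable_comp hX.norm.aestronglyMeasurable).2 hX1
      refine Integrable.mono' (h1.add h2) hZm.aestronglyMeasurable
        (Filter.Eventually.of_forall fun ω => ?_)
      rw [norm_norm]
      exact norm_sub_le _ _
    calc (∫ t : EuclideanSpace ℝ (Fin p),
          (1 - ‖∫ ω, Complex.exp ((inner ℝ t (X ω) : ℝ) * Complex.I)‖ ^ 2) /
            (Cp * ‖t‖ ^ (1 + (p:ℝ))))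
        = ∫ t : EuclideanSpace ℝ (Fin p), ∫ ω : Ω × Ω,
            (1 - Real.cos (inner ℝ t (X ω.1 - X ω.2))) / (Cp * ‖t‖ ^ (1 + (p:ℝ))) := by
          refine integral_congr_ae (Filter.Eventually.of_forall fun t => ?_)
          show (1 - ‖∫ ω, Complex.exp ((inner ℝ t (X ω) : ℝ) * Complex.I)‖ ^ 2) /
              (Cp * ‖t‖ ^ (1 + (p:ℝ)))
            = ∫ ω : Ω × Ω, (1 - Real.cos (inner ℝ t (X ω.1 - X ω.2))) / (Cp * ‖t‖ ^ (1 + (p:ℝ)))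
          rw [h_main t, integral_div]
      _ = (∫⁻ t : EuclideanSpace ℝ (Fin p), ENNReal.ofReal (∫ ω : Ω × Ω,
            (1 - Real.cos (inner ℝ t (X ω.1 - X ω.2))) / (Cp * ‖t‖ ^ (1 + (p:ℝ))))).toReal := by
          refine integral_eq_lintegral_of_nonneg_ae
            (Filter.Eventually.of_forall fun t => integral_nonneg fun ω => hFnn t ω)
            (hGmeas.stronglyMeasurable.integral_prod_right').aestronglyMeasurable
      _ = (∫⁻ t : EuclideanSpace ℝ (Fin p), ∫⁻ ω : Ω × Ω, ENNReal.ofReal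
            ((1 - Real.cos (inner ℝ t (X ω.1 - X ω.2))) / (Cp * ‖t‖ ^ (1 + (p:ℝ))))).toReal := by
          congr 1
          refine lintegral_congr fun t =>
            ofReal_integral_eq_lintegral_ofReal (hFint t)
              (Filter.Eventually.of_forall fun ω => hFnn t ω)
      _ = (∫⁻ ω : Ω × Ω, ∫⁻ t : EuclideanSpace ℝ (Fin p), ENNReal.ofReal
            ((1 - Real.cos (inner ℝ t (X ω.1 - X ω.2))) / (Cp * ‖t‖ ^ (1 + (p:ℝ))))).toReal := by
          rw [lintegral_lintegral_swap hGmeas.ennreal_ofReal.aemeasurable]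
      _ = (∫⁻ ω : Ω × Ω, ENNReal.ofReal ‖X ω.1 - X ω.2‖).toReal := by
          congr 1
          exact lintegral_congr fun ω => key hp (X ω.1 - X ω.2)
      _ = (ENNReal.ofReal (∫ ω : Ω × Ω, ‖X ω.1 - X ω.2‖)).toReal := by
          rw [ofReal_integral_eq_lintegral_ofReal hZint
            (Filter.Eventually.of_forall fun ω => norm_nonneg _)]
      _ = ∫ ω : Ω × Ω, ‖X ω.1 - X ω.2‖ :=
          ENNReal.toReal_ofReal (integral_nonneg fun ω => norm_nonneg _)
end

section
/- Let X₁,...,Xₙ be points in ℝ^p, a_{kl} = |X_k - X_l| their pairwise Euclidean distances, and A_{kl} = a_{kl} - ā_{k·} - ā_{·l} + ā_{··} the double-centered distance matrix. If Σ_{k,l} A_{kl}² = 0, then X₁ = X₂ = ··· = Xₙ. -/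
open Finset

/-- If the double-centered Euclidean distance matrix of a sample vanishes
(in Frobenius norm), then all sample points are identical. -/
theorem double_centered_zero_iff_constant (n p : ℕ) (hn : 0 < n)
    (X : Fin n → EuclideanSpace ℝ (Fin p))
    (A : Fin n → Fin n → ℝ)
    (hA : ∀ k l, A k l = dist (X k) (X l)
      - (1 / (n : ℝ)) * ∑ j, dist (X k) (X j)
      - (1 / (n : ℝ)) * ∑ i, dist (X i) (X l)
      + (1 / (n : ℝ) ^ 2) * ∑ i, ∑ j, dist (X i) (X j))
    (h : ∑ k, ∑ l, (A k l) ^ 2 = 0) :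
    ∀ k l, X k = X l := by
  have hzero : ∀ k l, A k l = 0 := by
    intro k l
    have h1 : ∀ k ∈ univ, ∑ l, (A k l) ^ 2 = 0 :=
      (Finset.sum_eq_zero_iff_of_nonneg (fun k _ =>
        Finset.sum_nonneg fun l _ => sq_nonneg _)).mp h
    have h2 : ∀ l ∈ univ, (A k l) ^ 2 = 0 :=
      (Finset.sum_eq_zero_iff_of_nonneg (fun l _ => sq_nonneg _)).mp
        (h1 k (mem_univ k))
    exact pow_eq_zero_iff (by norm_num) |>.mp (h2 l (mem_univ l))
  -- row sums coincide with column sums by symmetry of dist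
  have hsym : ∀ k : Fin n, (∑ i, dist (X i) (X k)) = ∑ j, dist (X k) (X j) :=
    fun k => Finset.sum_congr rfl fun i _ => dist_comm _ _
  set S := ∑ i, ∑ j, dist (X i) (X j) with hS
  have hrow : ∀ k : Fin n,
      (1 / (n : ℝ)) * (∑ j, dist (X k) (X j)) = (1 / 2) * ((1 / (n : ℝ) ^ 2) * S) := by
    intro k
    have hk := hzero k k
    rw [hA k k, dist_self, hsym k] at hk
    linarith
  intro k l
  have h0 := hzero k l
  rw [hA k l, hsym l] at h0
  have hk := hrow k
  have hl := hrow l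
  have hd : dist (X k) (X l) = 0 := by linarith
  exact dist_eq_zero.mp hd
end

section
/- Let a_{kl} = |X_k - X_l| and b_{kl} = |Y_k - Y_l| for sample points X₁,...,Xₙ ∈ ℝ^p, Y₁,...,Yₙ ∈ ℝ^q, with double-centered versions A_{kl}, B_{kl}. Then the empirical distance covariance V_n² = (1/n²)Σ_{k,l} A_{kl} B_{kl} is nonnegative. -/
open Finset

open MeasureTheory RealInnerProductSpace


lemma quad_expand {n : ℕ} (c f : Fin n → ℝ) :
    ∑ k, ∑ l, c k * c l * (f k - f l) ^ 2
      = 2 * (∑ k, c k) * (∑ k, c k * f k ^ 2) - 2 * (∑ k, c k * f k) ^ 2 := by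
  calc ∑ k, ∑ l, c k * c l * (f k - f l) ^ 2
      = ∑ k, ∑ l, ((c k * f k ^ 2) * c l + c k * (c l * f l ^ 2)
          - (2 * (c k * f k)) * (c l * f l)) :=
        Finset.sum_congr rfl fun k _ => Finset.sum_congr rfl fun l _ => by ring
    _ = ((∑ k, c k * f k ^ 2) * ∑ l, c l) + ((∑ k, c k) * ∑ l, c l * f l ^ 2)
          - (∑ k, 2 * (c k * f k)) * ∑ l, c l * f l := by
        simp only [Finset.sum_sub_distrib, Finset.sum_add_distrib, ← Finset.sum_mul_sum]
    _ = _ := by rw [← Finset.mul_sum]; ring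

lemma cnd_abs {n : ℕ} (c t : Fin n → ℝ) (hc : ∑ k, c k = 0) :
    ∑ k, ∑ l, c k * c l * |t k - t l| ≤ 0 := by
  classical
  set g : Fin n → ℝ → ℝ := fun k s => if s < t k then 1 else 0 with hg
  have hind : ∀ k l : Fin n, (fun s => (g k s - g l s) ^ 2)
      = Set.indicator (Set.Ico (min (t k) (t l)) (max (t k) (t l))) (fun _ => (1:ℝ)) := by
    intro k l
    funext s
    by_cases h1 : s < t k <;> by_cases h2 : s < t l <;>
      simp [g, h1, h2, Set.indicator_apply, Set.mem_Ico, lt_min_iff, min_le_iff, lt_max_iff,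
        max_le_iff, le_of_not_gt, not_lt.mp]
  have hInt : ∀ k l : Fin n, Integrable (fun s => (g k s - g l s) ^ 2) := by
    intro k l
    rw [hind k l]
    exact (integrable_indicator_iff measurableSet_Ico).2
      (integrableOn_const measure_Ico_lt_top.ne)
  have hval : ∀ k l : Fin n, ∫ s, (g k s - g l s) ^ 2 = |t k - t l| := by
    intro k l
    rw [hind k l, integral_indicator_const _ measurableSet_Ico]
    rw [abs_sub_comm]
    simp [Real.volume_Ico, ENNReal.toReal_ofReal (sub_nonneg.2 (min_le_max)),
      max_sub_min_eq_abs]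
  have key : ∑ k, ∑ l, c k * c l * |t k - t l|
      = ∫ s, ∑ k, ∑ l, c k * c l * (g k s - g l s) ^ 2 := by
    rw [integral_finset_sum _ (fun k _ => integrable_finset_sum _
      (fun l _ => ((hInt k l).const_mul _)))]
    refine Finset.sum_congr rfl fun k _ => ?_
    rw [integral_finset_sum _ (fun l _ => ((hInt k l).const_mul _))]
    refine Finset.sum_congr rfl fun l _ => ?_
    rw [integral_const_mul, hval]
  rw [key]
  refine integral_nonpos fun s => ?_
  simp only [Pi.zero_apply]
  rw [quad_expand c (fun k => g k s), hc]
  nlinarith [sq_nonneg (∑ k, c k * g k s)]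

section
variable {p : ℕ}

lemma gauss_integrable_aux :
    Integrable (fun u : EuclideanSpace ℝ (Fin p) => Real.exp (-(1/2) * ‖u‖^2)) := by
  have h := (GaussianFourier.integrable_cexp_neg_mul_sq_norm_add
    (V := EuclideanSpace ℝ (Fin p)) (b := (1/2 : ℂ)) (by norm_num) 0 0).norm
  refine h.congr (Filter.Eventually.of_forall fun u => ?_)
  simp only [Complex.norm_exp]
  norm_num
  rw [← Complex.ofReal_pow, Complex.ofReal_re]

lemma weight_integrable (y : EuclideanSpace ℝ (Fin p)) :
    Integrable (fun u : EuclideanSpace ℝ (Fin p) => |⟪u, y⟫| * Real.exp (-‖u‖^2)) := by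
  refine (gauss_integrable_aux.const_mul ‖y‖).mono ?_ (Filter.Eventually.of_forall fun u => ?_)
  · refine Continuous.aestronglyMeasurable ?_
    exact ((continuous_id.inner continuous_const).abs).mul
      (((continuous_norm.pow 2).neg).rexp)
  · have h1 : |⟪u, y⟫| ≤ ‖u‖ * ‖y‖ := abs_real_inner_le_norm u y
    have h2 : ‖u‖ * Real.exp (-(1/2) * ‖u‖^2) ≤ 1 := by
      have hprod : Real.exp (-(1/2) * ‖u‖^2) * Real.exp ((1/2) * ‖u‖^2) = 1 := by
        rw [← Real.exp_add]; norm_num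
      have ht : ‖u‖ ≤ Real.exp ((1/2) * ‖u‖^2) := by
        nlinarith [Real.add_one_le_exp ((1/2) * ‖u‖^2), sq_nonneg (‖u‖ - 1)]
      nlinarith [mul_nonneg (sub_nonneg.2 ht) (Real.exp_nonneg (-(1/2) * ‖u‖^2))]
    have h3 : Real.exp (-‖u‖^2) = Real.exp (-(1/2) * ‖u‖^2) * Real.exp (-(1/2) * ‖u‖^2) := by
      rw [← Real.exp_add]; ring_nf
    have h4 : (0:ℝ) ≤ Real.exp (-(1/2) * ‖u‖^2) := Real.exp_nonneg _
    have h5 : |⟪u, y⟫| * Real.exp (-‖u‖^2)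
        ≤ ‖y‖ * Real.exp (-(1/2) * ‖u‖^2) := by
      rw [h3]
      calc |⟪u, y⟫| * (Real.exp (-(1/2) * ‖u‖^2) * Real.exp (-(1/2) * ‖u‖^2))
          ≤ (‖u‖ * ‖y‖) * (Real.exp (-(1/2) * ‖u‖^2) * Real.exp (-(1/2) * ‖u‖^2)) := by
            apply mul_le_mul_of_nonneg_right h1 (by positivity)
        _ = ‖y‖ * ((‖u‖ * Real.exp (-(1/2) * ‖u‖^2)) * Real.exp (-(1/2) * ‖u‖^2)) := by ring
        _ ≤ ‖y‖ * (1 * Real.exp (-(1/2) * ‖u‖^2)) := by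
            apply mul_le_mul_of_nonneg_left (mul_le_mul_of_nonneg_right h2 h4) (norm_nonneg y)
        _ = ‖y‖ * Real.exp (-(1/2) * ‖u‖^2) := by ring
    have h6 : (0:ℝ) ≤ |⟪u, y⟫| * Real.exp (-‖u‖^2) := by positivity
    rw [Real.norm_eq_abs, Real.norm_eq_abs, abs_of_nonneg h6]
    calc |⟪u, y⟫| * Real.exp (-‖u‖^2) ≤ ‖y‖ * Real.exp (-(1/2) * ‖u‖^2) := h5
      _ ≤ |‖y‖ * Real.exp (-(1/2) * ‖u‖^2)| := le_abs_self _

end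

section
variable {p : ℕ}
local notation "V" => EuclideanSpace ℝ (Fin p)

noncomputable def Fw (x : V) : ℝ := ∫ u : V, |⟪u, x⟫| * Real.exp (-‖u‖^2)

lemma Fw_rot (f : V ≃ₗᵢ[ℝ] V) (x : V) : Fw (f x) = Fw x := by
  have hmp := f.measurePreserving
  have := hmp.integral_comp f.toHomeomorph.measurableEmbedding
    (fun u => |⟪u, f x⟫| * Real.exp (-‖u‖^2))
  rw [Fw, ← this]
  unfold Fw
  refine integral_congr_ae (Filter.Eventually.of_forall fun u => ?_)
  simp [LinearIsometryEquiv.inner_map_map]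

lemma Fw_eq (hp : 0 < p) (x : V) :
    Fw x = ‖x‖ * Fw (EuclideanSpace.single (⟨0, hp⟩ : Fin p) (1:ℝ)) := by
  set e₁ : V := EuclideanSpace.single (⟨0, hp⟩ : Fin p) (1:ℝ) with he
  have hne : ‖e₁‖ = 1 := by simp [he, EuclideanSpace.norm_single]
  by_cases hx : x = 0
  · subst hx
    simp only [Fw, inner_zero_right, abs_zero, zero_mul, integral_zero, norm_zero]
  · set y : V := ‖x‖ • e₁ with hy
    have hnorm : ‖x‖ = ‖y‖ := by
      rw [hy, norm_smul, hne, Real.norm_eq_abs, abs_of_nonneg (norm_nonneg x), mul_one]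
    have hR : (Submodule.reflection (ℝ ∙ (x - y))ᗮ) x = y := Submodule.reflection_sub hnorm
    have h1 : Fw x = Fw y := by rw [← hR, Fw_rot]
    rw [h1, hy]
    unfold Fw
    rw [← integral_const_mul]
    refine integral_congr_ae (Filter.Eventually.of_forall fun u => ?_)
    simp only
    rw [real_inner_smul_right, abs_mul, abs_of_nonneg (norm_nonneg x)]
    ring

lemma Fw_pos (hp : 0 < p) :
    0 < Fw (EuclideanSpace.single (⟨0, hp⟩ : Fin p) (1:ℝ)) := by
  set e₁ : V := EuclideanSpace.single (⟨0, hp⟩ : Fin p) (1:ℝ) with he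
  have hnn : (0:V → ℝ) ≤ fun u : V => |⟪u, e₁⟫| * Real.exp (-‖u‖^2) :=
    fun u => by positivity
  rw [Fw, integral_pos_iff_support_of_nonneg hnn (weight_integrable e₁)]
  have hsub : {u : V | ⟪u, e₁⟫ ≠ 0} ⊆
      Function.support fun u : V => |⟪u, e₁⟫| * Real.exp (-‖u‖^2) := by
    intro u hu
    simp only [Function.mem_support]
    have : (0:ℝ) < |⟪u, e₁⟫| := abs_pos.mpr hu
    positivity
  have hopen : IsOpen {u : V | ⟪u, e₁⟫ ≠ 0} := by
    have : Continuous fun u : V => ⟪u, e₁⟫ := continuous_id.inner continuous_const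
    exact isOpen_compl_iff.mpr (isClosed_singleton.preimage this)
  have hmem : e₁ ∈ {u : V | ⟪u, e₁⟫ ≠ 0} := by
    simp only [Set.mem_setOf_eq, real_inner_self_eq_norm_sq]
    simp [he, EuclideanSpace.norm_single]
  exact lt_of_lt_of_le (hopen.measure_pos volume ⟨e₁, hmem⟩) (measure_mono hsub)

end

lemma weight_integrable2 {n p : ℕ} (X : Fin n → EuclideanSpace ℝ (Fin p)) (k l : Fin n) :
    Integrable (fun u : EuclideanSpace ℝ (Fin p) =>
      |⟪u, X k⟫ - ⟪u, X l⟫| * Real.exp (-‖u‖^2)) := by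
  refine (weight_integrable (X k - X l)).congr
    (Filter.Eventually.of_forall fun u => ?_)
  simp only [inner_sub_right]

lemma cnd_dist {n p : ℕ} (X : Fin n → EuclideanSpace ℝ (Fin p)) (c : Fin n → ℝ)
    (hc : ∑ k, c k = 0) :
    ∑ k, ∑ l, c k * c l * dist (X k) (X l) ≤ 0 := by
  rcases Nat.eq_zero_or_pos p with hp | hp
  · subst hp
    have hd : ∀ k l : Fin n, dist (X k) (X l) = 0 := fun k l => by
      rw [Subsingleton.elim (X k) (X l), dist_self]
    simp [hd]
  · set e₁ : EuclideanSpace ℝ (Fin p) := EuclideanSpace.single (⟨0, hp⟩ : Fin p) (1:ℝ)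
    have hpos : 0 < Fw e₁ := Fw_pos hp
    have key : Fw e₁ * ∑ k, ∑ l, c k * c l * dist (X k) (X l)
        = ∑ k, ∑ l, c k * c l * Fw (X k - X l) := by
      rw [Finset.mul_sum]
      refine Finset.sum_congr rfl fun k _ => ?_
      rw [Finset.mul_sum]
      refine Finset.sum_congr rfl fun l _ => ?_
      rw [Fw_eq hp (X k - X l), ← dist_eq_norm]
      ring
    have key2 : ∑ k, ∑ l, c k * c l * Fw (X k - X l)
        = ∫ u : EuclideanSpace ℝ (Fin p),
            ∑ k, ∑ l, c k * c l * (|⟪u, X k⟫ - ⟪u, X l⟫| * Real.exp (-‖u‖^2)) := by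
      rw [integral_finset_sum _ (fun k _ => integrable_finset_sum _
        (fun l _ => (weight_integrable2 X k l).const_mul _))]
      refine Finset.sum_congr rfl fun k _ => ?_
      rw [integral_finset_sum _ (fun l _ => (weight_integrable2 X k l).const_mul _)]
      refine Finset.sum_congr rfl fun l _ => ?_
      rw [integral_const_mul]
      congr 1
      rw [Fw]
      refine integral_congr_ae (Filter.Eventually.of_forall fun u => ?_)
      simp only [inner_sub_right]
    have hle : ∑ k, ∑ l, c k * c l * Fw (X k - X l) ≤ 0 := by
      rw [key2]
      refine integral_nonpos fun u => ?_
      simp only [Pi.zero_apply]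
      have hfac : ∑ k, ∑ l, c k * c l * (|⟪u, X k⟫ - ⟪u, X l⟫| * Real.exp (-‖u‖^2))
          = (∑ k, ∑ l, c k * c l * |⟪u, X k⟫ - ⟪u, X l⟫|) * Real.exp (-‖u‖^2) := by
        rw [Finset.sum_mul]
        refine Finset.sum_congr rfl fun k _ => ?_
        rw [Finset.sum_mul]
        exact Finset.sum_congr rfl fun l _ => by ring
      rw [hfac]
      have := cnd_abs c (fun k => ⟪u, X k⟫) hc
      exact mul_nonpos_of_nonpos_of_nonneg this (Real.exp_nonneg _)
    nlinarith [key, hle, hpos]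

lemma sum_sum_mul_mul {n : ℕ} (f g : Fin n → ℝ) (d : ℝ) :
    ∑ k, ∑ l, d * (f k * g l) = d * ((∑ k, f k) * (∑ l, g l)) := by
  rw [Finset.sum_mul_sum, Finset.mul_sum]
  exact Finset.sum_congr rfl fun k _ => (Finset.mul_sum _ _ _).symm

lemma quadform_nonpos {n p : ℕ} (hn : 0 < n) (X : Fin n → EuclideanSpace ℝ (Fin p))
    (A : Fin n → Fin n → ℝ)
    (hA : ∀ k l, A k l = dist (X k) (X l)
      - (1 / (n : ℝ)) * ∑ j, dist (X k) (X j)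
      - (1 / (n : ℝ)) * ∑ i, dist (X i) (X l)
      + (1 / (n : ℝ) ^ 2) * ∑ i, ∑ j, dist (X i) (X j)) (v : Fin n → ℝ) :
    ∑ k, ∑ l, v k * v l * A k l ≤ 0 := by
  have hnz : (n:ℝ) ≠ 0 := Nat.cast_ne_zero.mpr hn.ne'
  set a : Fin n → Fin n → ℝ := fun k l => dist (X k) (X l) with ha
  set T : ℝ := ∑ k, v k with hTdef
  set t : ℝ := T / n with htdef
  set c : Fin n → ℝ := fun k => v k - t with hcdef
  have hT : T = n * t := by rw [htdef]; field_simp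
  have hc : ∑ k, c k = 0 := by
    simp only [hcdef, Finset.sum_sub_distrib, Finset.sum_const, Finset.card_univ,
      Fintype.card_fin, nsmul_eq_mul, ← hTdef, hT]
    ring
  set S2 : ℝ := ∑ k, ∑ l, v k * v l * a k l with hS2
  set P : ℝ := ∑ k, v k * ∑ j, a k j with hP
  set Q : ℝ := ∑ l, v l * ∑ i, a i l with hQ
  set M : ℝ := ∑ i, ∑ j, a i j with hM
  have h2 : ∑ k, ∑ l, (1/(n:ℝ)) * ((v k * ∑ j, a k j) * v l) = (1/(n:ℝ)) * (P * T) := by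
    rw [sum_sum_mul_mul (fun k => v k * ∑ j, a k j) v (1/(n:ℝ)), hP, hTdef]
  have h3 : ∑ k, ∑ l, (1/(n:ℝ)) * (v k * (v l * ∑ i, a i l)) = (1/(n:ℝ)) * (T * Q) := by
    rw [sum_sum_mul_mul v (fun l => v l * ∑ i, a i l) (1/(n:ℝ)), hQ, hTdef]
  have h4 : ∑ k, ∑ l, (1/(n:ℝ)^2) * ((v k * M) * v l) = (1/(n:ℝ)^2) * (T * T * M) := by
    rw [sum_sum_mul_mul (fun k => v k * M) v (1/(n:ℝ)^2), ← Finset.sum_mul, hTdef]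
    ring
  have hP' : ∑ k, ∑ l, v k * a k l = P := by
    rw [hP]
    exact Finset.sum_congr rfl fun k _ => (Finset.mul_sum _ _ _).symm
  have hQ' : ∑ k, ∑ l, v l * a k l = Q := by
    rw [hQ, Finset.sum_comm]
    exact Finset.sum_congr rfl fun l _ => (Finset.mul_sum _ _ _).symm
  have lhs_eq : ∑ k, ∑ l, v k * v l * A k l
      = S2 - (1/(n:ℝ)) * (P * T) - (1/(n:ℝ)) * (T * Q) + (1/(n:ℝ)^2) * (T * T * M) := by
    have step : ∀ k, ∀ l, v k * v l * A k l
        = v k * v l * a k l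
          - (1/(n:ℝ)) * ((v k * ∑ j, a k j) * v l)
          - (1/(n:ℝ)) * (v k * (v l * ∑ i, a i l))
          + (1/(n:ℝ)^2) * ((v k * M) * v l) := by
      intro k l
      rw [hA k l, hM]
      ring
    calc ∑ k, ∑ l, v k * v l * A k l
        = ∑ k, ∑ l, (v k * v l * a k l
          - (1/(n:ℝ)) * ((v k * ∑ j, a k j) * v l)
          - (1/(n:ℝ)) * (v k * (v l * ∑ i, a i l))
          + (1/(n:ℝ)^2) * ((v k * M) * v l)) :=
          Finset.sum_congr rfl fun k _ => Finset.sum_congr rfl fun l _ => step k l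
      _ = _ := by
          simp only [Finset.sum_add_distrib, Finset.sum_sub_distrib]
          rw [h2, h3, h4, hS2]
  have rhs_eq : ∑ k, ∑ l, c k * c l * a k l = S2 - t * Q - t * P + t * t * M := by
    calc ∑ k, ∑ l, c k * c l * a k l
        = ∑ k, ∑ l, (v k * v l * a k l - t * (v l * a k l) - t * (v k * a k l)
            + t * t * a k l) :=
          Finset.sum_congr rfl fun k _ => Finset.sum_congr rfl fun l _ => by
            simp only [hcdef]; ring
      _ = S2 - t * (∑ k, ∑ l, v l * a k l) - t * (∑ k, ∑ l, v k * a k l)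
            + t * t * (∑ k, ∑ l, a k l) := by
          simp only [Finset.sum_add_distrib, Finset.sum_sub_distrib, ← Finset.mul_sum, hS2]
      _ = _ := by rw [hP', hQ', ← hM]
  have heq : ∑ k, ∑ l, v k * v l * A k l = ∑ k, ∑ l, c k * c l * a k l := by
    rw [lhs_eq, rhs_eq, hT]
    field_simp
    ring
  rw [heq]
  exact cnd_dist X c hc

/-- The empirical distance covariance `V_n² = (1/n²) Σ A_{kl} B_{kl}` is nonnegative,
where `A` and `B` are the double-centered distance matrices of the two samples. -/
theorem empirical_dcov_nonneg (n p q : ℕ) (hn : 0 < n)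
    (X : Fin n → EuclideanSpace ℝ (Fin p)) (Y : Fin n → EuclideanSpace ℝ (Fin q))
    (A B : Fin n → Fin n → ℝ)
    (hA : ∀ k l, A k l = dist (X k) (X l)
      - (1 / (n : ℝ)) * ∑ j, dist (X k) (X j)
      - (1 / (n : ℝ)) * ∑ i, dist (X i) (X l)
      + (1 / (n : ℝ) ^ 2) * ∑ i, ∑ j, dist (X i) (X j))
    (hB : ∀ k l, B k l = dist (Y k) (Y l)
      - (1 / (n : ℝ)) * ∑ j, dist (Y k) (Y j)
      - (1 / (n : ℝ)) * ∑ i, dist (Y i) (Y l)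
      + (1 / (n : ℝ) ^ 2) * ∑ i, ∑ j, dist (Y i) (Y j)) :
    0 ≤ (1 / (n : ℝ) ^ 2) * ∑ k, ∑ l, A k l * B k l := by
  have hBsymm : ∀ k l, B k l = B l k := by
    intro k l
    rw [hB k l, hB l k]
    have e1 : ∑ j, dist (Y k) (Y j) = ∑ i, dist (Y i) (Y k) :=
      Finset.sum_congr rfl fun i _ => dist_comm _ _
    have e2 : ∑ j, dist (Y l) (Y j) = ∑ i, dist (Y i) (Y l) :=
      Finset.sum_congr rfl fun i _ => dist_comm _ _
    rw [dist_comm (Y k) (Y l), e1, e2]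
    ring
  -- the matrix -B is positive semidefinite
  set N : Matrix (Fin n) (Fin n) ℝ := Matrix.of fun k l => - B k l with hN
  have hNpsd : N.PosSemidef := by
    rw [Matrix.posSemidef_iff_dotProduct_mulVec]
    constructor
    · ext k l
      simp [hN, Matrix.conjTranspose_apply, hBsymm l k]
    · intro x
      have : dotProduct (star x) (N.mulVec x) = ∑ k, ∑ l, x k * x l * (- B k l) := by
        simp only [dotProduct, Matrix.mulVec, star_trivial, hN, Matrix.of_apply,
          Finset.mul_sum]
        exact Finset.sum_congr rfl fun k _ => Finset.sum_congr rfl fun l _ => by ring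
      rw [this]
      have hq := quadform_nonpos hn Y B hB x
      have : ∑ k, ∑ l, x k * x l * (- B k l) = - ∑ k, ∑ l, x k * x l * B k l := by
        simp [Finset.sum_neg_distrib, mul_neg]
      rw [this]
      linarith
  obtain ⟨C, hC⟩ : ∃ C : Matrix (Fin n) (Fin n) ℝ, N = C.conjTranspose * C := by
    open scoped MatrixOrder in exact CStarAlgebra.nonneg_iff_eq_star_mul_self.mp hNpsd.nonneg
  have hBfac : ∀ k l, - B k l = ∑ m, C m k * C m l := by
    intro k l
    have := congrArg (fun M => M k l) hC
    simpa [hN, Matrix.mul_apply, Matrix.conjTranspose_apply] using this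
  have key : ∑ k, ∑ l, A k l * B k l = ∑ m, (- ∑ k, ∑ l, C m k * C m l * A k l) := by
    calc ∑ k, ∑ l, A k l * B k l
        = ∑ k, ∑ l, (- A k l) * (∑ m, C m k * C m l) := by
          refine Finset.sum_congr rfl fun k _ => Finset.sum_congr rfl fun l _ => ?_
          rw [← hBfac k l]; ring
      _ = ∑ k, ∑ l, ∑ m, (- A k l) * (C m k * C m l) := by
          refine Finset.sum_congr rfl fun k _ => Finset.sum_congr rfl fun l _ => ?_
          rw [Finset.mul_sum]
      _ = ∑ k, ∑ m, ∑ l, (- A k l) * (C m k * C m l) := by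
          exact Finset.sum_congr rfl fun k _ => Finset.sum_comm
      _ = ∑ m, ∑ k, ∑ l, (- A k l) * (C m k * C m l) := Finset.sum_comm
      _ = ∑ m, (- ∑ k, ∑ l, C m k * C m l * A k l) := by
          refine Finset.sum_congr rfl fun m _ => ?_
          rw [← Finset.sum_neg_distrib]
          refine Finset.sum_congr rfl fun k _ => ?_
          rw [← Finset.sum_neg_distrib]
          exact Finset.sum_congr rfl fun l _ => by ring
  have hsum : 0 ≤ ∑ k, ∑ l, A k l * B k l := by
    rw [key]
    refine Finset.sum_nonneg fun m _ => ?_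
    have := quadform_nonpos hn X A hA (fun k => C m k)
    linarith
  positivity
end

section
/- If X is a random vector in ℝ^p with E|X| < ∞ and distance variance dVar(X) = 0, then X is almost surely constant. -/
open MeasureTheory Complex Real

lemma exp_aux_eq_one_of_sqrt_two {d : ℝ} (h1 : Complex.exp (d * Complex.I) = 1)
    (h2 : Complex.exp ((Real.sqrt 2 * d : ℝ) * Complex.I) = 1) : d = 0 := by
  rw [Complex.exp_eq_one_iff] at h1 h2
  obtain ⟨n, hn⟩ := h1
  obtain ⟨m, hm⟩ := h2
  have hI : (Complex.I : ℂ) ≠ 0 := Complex.I_ne_zero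
  have hn' : (d : ℂ) = n * (2 * π) := by
    apply mul_right_cancel₀ hI
    linear_combination hn
  have hm' : ((Real.sqrt 2 * d : ℝ) : ℂ) = m * (2 * π) := by
    apply mul_right_cancel₀ hI
    linear_combination hm
  have hdn : d = n * (2 * π) := by exact_mod_cast hn'
  have hdm : Real.sqrt 2 * d = m * (2 * π) := by exact_mod_cast hm'
  by_cases h : n = 0
  · simp [h] at hdn; exact hdn
  · exfalso
    have heq : Real.sqrt 2 * (n * (2*π)) = m * (2*π) := by rw [← hdn]; exact hdm
    have hpi : (2*π) ≠ 0 := by positivity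
    have h2' : Real.sqrt 2 * n = m :=
      mul_right_cancel₀ hpi (by linarith [heq] : (Real.sqrt 2 * n) * (2*π) = m * (2*π))
    have hq : Real.sqrt 2 = ((m / n : ℚ) : ℝ) := by
      have hn0 : (n : ℝ) ≠ 0 := Int.cast_ne_zero.mpr h
      push_cast
      field_simp
      linarith [h2']
    exact irrational_sqrt_two ⟨m / n, hq.symm⟩

lemma ae_eq_const_of_norm_integral_eq_one {Ω : Type*} [MeasureSpace Ω]
    [IsProbabilityMeasure (volume : Measure Ω)] {f : Ω → ℂ}
    (hf : AEStronglyMeasurable f volume)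
    (hnorm : ∀ ω, ‖f ω‖ = 1) (h : ‖∫ ω, f ω‖ = 1) :
    ∀ᵐ ω, f ω = ∫ ω', f ω' := by
  set c := ∫ ω, f ω with hc
  have hre_eq : ∀ z : ℂ, RCLike.re z = z.re := fun z =>
    congrFun RCLike.re_eq_complex_re z
  have hint : Integrable f := by
    refine Integrable.mono' (integrable_const 1) hf ?_
    filter_upwards with ω
    simp [hnorm ω]
  have hint2 : Integrable (fun ω => ((starRingEnd ℂ) c * f ω)) := hint.const_mul _
  have hcc : (starRingEnd ℂ) c * c = 1 := by
    rw [mul_comm, Complex.mul_conj, Complex.normSq_eq_norm_sq, h]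
    norm_num
  have key : ∫ ω, RCLike.re ((starRingEnd ℂ) c * f ω) = 1 := by
    rw [integral_re hint2, integral_const_mul, ← hc, hcc]
    simp
  have hle : ∀ ω, RCLike.re ((starRingEnd ℂ) c * f ω) ≤ 1 := by
    intro ω
    rw [hre_eq]
    calc ((starRingEnd ℂ) c * f ω).re ≤ ‖(starRingEnd ℂ) c * f ω‖ :=
      Complex.re_le_norm _
    _ = 1 := by rw [norm_mul, Complex.norm_conj, h, hnorm ω, one_mul]
  have hzero : ∫ ω, (1 - RCLike.re ((starRingEnd ℂ) c * f ω)) = 0 := by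
    rw [integral_sub (integrable_const 1) hint2.re, key]
    simp
  have hintsub : Integrable (fun ω => 1 - RCLike.re ((starRingEnd ℂ) c * f ω)) :=
    (integrable_const 1).sub hint2.re
  have := (integral_eq_zero_iff_of_nonneg_ae
    (Filter.Eventually.of_forall fun ω => by simpa using hle ω) hintsub).mp hzero
  filter_upwards [this] with ω hω
  have hre : ((starRingEnd ℂ) c * f ω).re = 1 := by
    have h0 : (1 : ℝ) - RCLike.re ((starRingEnd ℂ) c * f ω) = 0 := hω
    rw [hre_eq] at h0
    linarith
  have habs : ‖(starRingEnd ℂ) c * f ω‖ = 1 := by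
    rw [norm_mul, Complex.norm_conj, h, hnorm ω, one_mul]
  have h1 : (starRingEnd ℂ) c * f ω = 1 := by
    have hn : Complex.normSq ((starRingEnd ℂ) c * f ω) = 1 := by
      rw [← Complex.sq_norm, habs]; norm_num
    have him : ((starRingEnd ℂ) c * f ω).im = 0 := by
      nlinarith [Complex.normSq_apply ((starRingEnd ℂ) c * f ω),
        sq_nonneg ((starRingEnd ℂ) c * f ω).im]
    exact Complex.ext (by simp [hre]) (by simp [him])
  calc f ω = ((starRingEnd ℂ) c * c) * f ω := by rw [hcc, one_mul]
  _ = c * ((starRingEnd ℂ) c * f ω) := by ring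
  _ = c := by rw [h1, mul_one]

set_option maxHeartbeats 2000000 in
/-- If `dVar(X) = 0` then `X` is almost surely constant. -/
theorem dvar_eq_zero_ae_const {Ω : Type*} [MeasureSpace Ω]
    [IsProbabilityMeasure (volume : Measure Ω)]
    (p : ℕ) (X : Ω → EuclideanSpace ℝ (Fin p))
    (hX : Measurable X) (hX1 : Integrable (fun ω => ‖X ω‖))
    (h : (∫⁻ u : EuclideanSpace ℝ (Fin p) × EuclideanSpace ℝ (Fin p),
        ENNReal.ofReal
          (‖(∫ ω, Complex.exp ((inner ℝ (u.1 + u.2) (X ω) : ℝ) * Complex.I))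
              - (∫ ω, Complex.exp ((inner ℝ u.1 (X ω) : ℝ) * Complex.I))
                * (∫ ω, Complex.exp ((inner ℝ u.2 (X ω) : ℝ) * Complex.I))‖ ^ 2 /
            ((Real.pi ^ ((1 + (p : ℝ)) / 2) / Real.Gamma ((1 + (p : ℝ)) / 2)) ^ 2 *
             ‖u.1‖ ^ (1 + (p : ℝ)) * ‖u.2‖ ^ (1 + (p : ℝ))))) = 0) :
    ∃ c : EuclideanSpace ℝ (Fin p), X =ᵐ[volume] fun _ => c := by
  rcases Nat.eq_zero_or_pos p with hp | hp
  · subst hp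
    exact ⟨0, Filter.Eventually.of_forall fun ω => by ext j; exact j.elim0⟩
  haveI : Nonempty (Fin p) := ⟨⟨0, hp⟩⟩
  set φ : EuclideanSpace ℝ (Fin p) → ℂ :=
    fun t => ∫ ω, Complex.exp (((inner ℝ t (X ω) : ℝ) : ℂ) * Complex.I) with hφdef
  have hKcont : Continuous fun q : EuclideanSpace ℝ (Fin p) × EuclideanSpace ℝ (Fin p) =>
      Complex.exp (((inner ℝ q.1 q.2 : ℝ) : ℂ) * Complex.I) :=
    Complex.continuous_exp.comp
      ((Complex.continuous_ofReal.comp continuous_inner).mul continuous_const)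
  have hmeas : ∀ t : EuclideanSpace ℝ (Fin p), AEStronglyMeasurable
      (fun ω => Complex.exp (((inner ℝ t (X ω) : ℝ) : ℂ) * Complex.I)) volume := fun t =>
    ((hKcont.comp (Continuous.prodMk_right t)).measurable.comp hX).aestronglyMeasurable
  have hφcont : Continuous φ := by
    rw [hφdef]
    refine continuous_of_dominated hmeas (fun t => Filter.Eventually.of_forall fun ω => ?_)
      (integrable_const 1) (Filter.Eventually.of_forall fun ω => ?_)
    · exact le_of_eq (Complex.norm_exp_ofReal_mul_I _)
    · exact Complex.continuous_exp.comp
        ((Complex.continuous_ofReal.comp (Continuous.inner continuous_id continuous_const)).mul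
          continuous_const)
  have hnumc : Continuous fun u : EuclideanSpace ℝ (Fin p) × EuclideanSpace ℝ (Fin p) =>
      ‖φ (u.1 + u.2) - φ u.1 * φ u.2‖ ^ 2 :=
    (continuous_norm.comp ((hφcont.comp (continuous_fst.add continuous_snd)).sub
      ((hφcont.comp continuous_fst).mul (hφcont.comp continuous_snd)))).pow 2
  have hdenc : Continuous fun u : EuclideanSpace ℝ (Fin p) × EuclideanSpace ℝ (Fin p) =>
      (Real.pi ^ ((1 + (p : ℝ)) / 2) / Real.Gamma ((1 + (p : ℝ)) / 2)) ^ 2 *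
        ‖u.1‖ ^ (1 + (p : ℝ)) * ‖u.2‖ ^ (1 + (p : ℝ)) :=
    ((continuous_const.mul ((continuous_norm.comp continuous_fst).rpow_const
      fun _ => Or.inr (by positivity))).mul ((continuous_norm.comp continuous_snd).rpow_const
      fun _ => Or.inr (by positivity)))
  have hG : Measurable fun u : EuclideanSpace ℝ (Fin p) × EuclideanSpace ℝ (Fin p) =>
      ENNReal.ofReal (‖φ (u.1 + u.2) - φ u.1 * φ u.2‖ ^ 2 /
        ((Real.pi ^ ((1 + (p : ℝ)) / 2) / Real.Gamma ((1 + (p : ℝ)) / 2)) ^ 2 *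
          ‖u.1‖ ^ (1 + (p : ℝ)) * ‖u.2‖ ^ (1 + (p : ℝ)))) :=
    ENNReal.measurable_ofReal.comp (hnumc.measurable.div hdenc.measurable)
  have hae0 := (lintegral_eq_zero_iff hG).mp h
  have hzero1 : volume {u : EuclideanSpace ℝ (Fin p) × EuclideanSpace ℝ (Fin p) | u.1 = 0} = 0 := by
    have hset : {u : EuclideanSpace ℝ (Fin p) × EuclideanSpace ℝ (Fin p) | u.1 = 0}
        = ({0} : Set (EuclideanSpace ℝ (Fin p))) ×ˢ Set.univ := by
      ext ⟨a, b⟩; simp [Set.mem_prod, eq_comm]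
    rw [hset, Measure.volume_eq_prod, Measure.prod_prod]
    simp
  have hzero2 : volume {u : EuclideanSpace ℝ (Fin p) × EuclideanSpace ℝ (Fin p) | u.2 = 0} = 0 := by
    have hset : {u : EuclideanSpace ℝ (Fin p) × EuclideanSpace ℝ (Fin p) | u.2 = 0}
        = Set.univ ×ˢ ({0} : Set (EuclideanSpace ℝ (Fin p))) := by
      ext ⟨a, b⟩; simp [Set.mem_prod, eq_comm]
    rw [hset, Measure.volume_eq_prod, Measure.prod_prod]
    simp
  have hne1 : ∀ᵐ u : EuclideanSpace ℝ (Fin p) × EuclideanSpace ℝ (Fin p), u.1 ≠ 0 := by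
    rw [ae_iff]; simp only [ne_eq, not_not]; exact hzero1
  have hne2 : ∀ᵐ u : EuclideanSpace ℝ (Fin p) × EuclideanSpace ℝ (Fin p), u.2 ≠ 0 := by
    rw [ae_iff]; simp only [ne_eq, not_not]; exact hzero2
  have hmul_ae : ∀ᵐ u : EuclideanSpace ℝ (Fin p) × EuclideanSpace ℝ (Fin p),
      φ (u.1 + u.2) = φ u.1 * φ u.2 := by
    filter_upwards [hae0, hne1, hne2] with u h0 h1 h2
    have hg : 0 < Real.Gamma ((1 + (p : ℝ)) / 2) := Real.Gamma_pos_of_pos (by positivity)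
    have hpi : 0 < Real.pi ^ ((1 + (p : ℝ)) / 2) := Real.rpow_pos_of_pos Real.pi_pos _
    have h1' : 0 < ‖u.1‖ := norm_pos_iff.mpr h1
    have h2' : 0 < ‖u.2‖ := norm_pos_iff.mpr h2
    have hden : 0 < (Real.pi ^ ((1 + (p : ℝ)) / 2) / Real.Gamma ((1 + (p : ℝ)) / 2)) ^ 2 *
        ‖u.1‖ ^ (1 + (p : ℝ)) * ‖u.2‖ ^ (1 + (p : ℝ)) := by positivity
    have h0' : ‖φ (u.1 + u.2) - φ u.1 * φ u.2‖ ^ 2 /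
        ((Real.pi ^ ((1 + (p : ℝ)) / 2) / Real.Gamma ((1 + (p : ℝ)) / 2)) ^ 2 *
          ‖u.1‖ ^ (1 + (p : ℝ)) * ‖u.2‖ ^ (1 + (p : ℝ))) ≤ 0 :=
      ENNReal.ofReal_eq_zero.mp h0
    have hnum : ‖φ (u.1 + u.2) - φ u.1 * φ u.2‖ ^ 2 = 0 := by
      rcases div_nonpos_iff.mp h0' with ⟨ha, hb⟩ | ⟨ha, hb⟩
      · linarith
      · exact le_antisymm ha (sq_nonneg _)
    have habs0 : ‖φ (u.1 + u.2) - φ u.1 * φ u.2‖ = 0 :=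
      (pow_eq_zero_iff (two_ne_zero)).mp hnum
    exact sub_eq_zero.mp (norm_eq_zero.mp habs0)
  haveI : Measure.IsOpenPosMeasure
      (volume : Measure (EuclideanSpace ℝ (Fin p) × EuclideanSpace ℝ (Fin p))) := by
    rw [Measure.volume_eq_prod]; infer_instance
  have hmul' : (fun u : EuclideanSpace ℝ (Fin p) × EuclideanSpace ℝ (Fin p) => φ (u.1 + u.2))
      = fun u => φ u.1 * φ u.2 :=
    (Continuous.ae_eq_iff_eq volume (hφcont.comp (continuous_fst.add continuous_snd))
      ((hφcont.comp continuous_fst).mul (hφcont.comp continuous_snd))).mp hmul_ae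
  have hmul : ∀ t s, φ (t + s) = φ t * φ s := fun t s => congrFun hmul' (t, s)
  have hφ0 : φ 0 = 1 := by
    have hstep : φ 0 = ∫ _ω : Ω, (1 : ℂ) := by
      apply integral_congr_ae
      filter_upwards with ω
      simp
    rw [hstep]
    simp
  have habs_le : ∀ t, ‖φ t‖ ≤ 1 := by
    intro t
    calc ‖φ t‖ ≤ 1 * (volume : Measure Ω).real Set.univ :=
      norm_integral_le_of_norm_le_const (Filter.Eventually.of_forall fun ω =>
        le_of_eq (Complex.norm_exp_ofReal_mul_I _))
    _ = 1 := by simp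
  have habs : ∀ t, ‖φ t‖ = 1 := by
    intro t
    have h1 : φ 0 = φ t * φ (-t) := by simpa using hmul t (-t)
    have h2 : (1 : ℝ) = ‖φ t‖ * ‖φ (-t)‖ := by
      rw [← norm_mul, ← h1, hφ0, norm_one]
    nlinarith [habs_le t, habs_le (-t), norm_nonneg (φ t), norm_nonneg (φ (-t))]
  have hconst : ∀ t, ∀ᵐ ω, Complex.exp (((inner ℝ t (X ω) : ℝ) : ℂ) * Complex.I) = φ t :=
    fun t => ae_eq_const_of_norm_integral_eq_one (hmeas t)
      (fun ω => Complex.norm_exp_ofReal_mul_I _) (habs t)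
  have hS : ∀ᵐ ω, ∀ j : Fin p,
      Complex.exp (((inner ℝ (EuclideanSpace.single j (1 : ℝ)) (X ω) : ℝ) : ℂ) * Complex.I)
        = φ (EuclideanSpace.single j 1) ∧
      Complex.exp (((inner ℝ (Real.sqrt 2 • EuclideanSpace.single j (1 : ℝ)) (X ω) : ℝ) : ℂ)
          * Complex.I) = φ (Real.sqrt 2 • EuclideanSpace.single j 1) := by
    rw [ae_all_iff]
    intro j
    filter_upwards [hconst (EuclideanSpace.single j 1),
      hconst (Real.sqrt 2 • EuclideanSpace.single j 1)] with ω h1 h2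
    exact ⟨h1, h2⟩
  haveI : (MeasureTheory.ae (volume : Measure Ω)).NeBot :=
    ae_neBot.mpr (IsProbabilityMeasure.ne_zero _)
  obtain ⟨ω₀, hω₀⟩ := hS.exists
  refine ⟨X ω₀, ?_⟩
  filter_upwards [hS] with ω hω
  have hinner : ∀ (j : Fin p) (x : EuclideanSpace ℝ (Fin p)),
      (inner ℝ (EuclideanSpace.single j (1 : ℝ)) x : ℝ) = x j := fun j x => by
    simp [EuclideanSpace.inner_single_left]
  have hinner2 : ∀ (j : Fin p) (x : EuclideanSpace ℝ (Fin p)),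
      (inner ℝ (Real.sqrt 2 • EuclideanSpace.single j (1 : ℝ)) x : ℝ) = Real.sqrt 2 * x j :=
    fun j x => by
    simp [real_inner_smul_left, EuclideanSpace.inner_single_left]
  ext j
  obtain ⟨ha1, ha2⟩ := hω j
  obtain ⟨hb1, hb2⟩ := hω₀ j
  rw [hinner] at ha1 hb1
  rw [hinner2] at ha2 hb2
  have hφne : φ (EuclideanSpace.single j 1) ≠ 0 := by
    intro hz
    have := habs (EuclideanSpace.single j 1)
    rw [hz] at this
    simp at this
  have hφne2 : φ (Real.sqrt 2 • EuclideanSpace.single j 1) ≠ 0 := by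
    intro hz
    have := habs (Real.sqrt 2 • EuclideanSpace.single j 1)
    rw [hz] at this
    simp at this
  have e1 : Complex.exp (((X ω j - X ω₀ j : ℝ) : ℂ) * Complex.I) = 1 := by
    push_cast
    rw [sub_mul, Complex.exp_sub, ha1, hb1, div_self hφne]
  have e2 : Complex.exp (((Real.sqrt 2 * (X ω j - X ω₀ j) : ℝ) : ℂ) * Complex.I) = 1 := by
    push_cast at ha2 hb2 ⊢
    rw [mul_sub, sub_mul, Complex.exp_sub, ha2, hb2, div_self hφne2]
  have := exp_aux_eq_one_of_sqrt_two e1 e2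
  have : X ω j = X ω₀ j := by linarith
  exact this
end

section
/- If X, Y are jointly standard bivariate normal with correlation ρ, then V²(X,Y) = F(ρ)/π² where F(ρ) = 4π(ρ·arcsin(ρ) + √(1-ρ²) - ρ·arcsin(ρ/2) - √(4-ρ²) + 1). -/
open MeasureTheory Real

lemma gauss_integrable {c : ℝ} (hc : |c| < 2) :
    Integrable (fun p : ℝ × ℝ => Real.exp (-(p.1^2+p.2^2) - c*p.1*p.2)) := by
  have ha : (0:ℝ) < 1 - |c|/2 := by linarith
  have h1 : Integrable (fun x : ℝ => Real.exp (-(1-|c|/2) * x^2)) := integrable_exp_neg_mul_sq ha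
  have hprod := h1.mul_prod h1
  rw [← Measure.volume_eq_prod] at hprod
  refine hprod.mono ?_ ?_
  · exact (Continuous.rexp (by continuity)).aestronglyMeasurable
  · filter_upwards with p
    rw [Real.norm_eq_abs, Real.norm_eq_abs, abs_of_nonneg (by positivity),
      abs_of_nonneg (by positivity : (0:ℝ) ≤ rexp (-(1 - |c| / 2) * p.1 ^ 2) * rexp (-(1 - |c| / 2) * p.2 ^ 2)),
      ← Real.exp_add]
    apply Real.exp_le_exp.2
    have h2 : 2 * |p.1| * |p.2| ≤ p.1^2 + p.2^2 := by
      nlinarith [sq_nonneg (|p.1| - |p.2|), sq_abs p.1, sq_abs p.2]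
    have h3 : -(c * p.1 * p.2) ≤ |c| * |p.1| * |p.2| := by
      calc -(c * p.1 * p.2) ≤ |c * p.1 * p.2| := neg_le_abs _
        _ = |c| * |p.1| * |p.2| := by rw [abs_mul, abs_mul]
    nlinarith [abs_nonneg c, sq_abs p.1, sq_abs p.2]

lemma gauss_value {c : ℝ} (hc : |c| < 2) :
    ∫ p : ℝ × ℝ, Real.exp (-(p.1^2+p.2^2) - c*p.1*p.2) = 2*π/Real.sqrt (4-c^2) := by
  have hc4 : c^2 < 4 := by nlinarith [sq_abs c, abs_nonneg c]
  have hb : (0:ℝ) < 1 - c^2/4 := by linarith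
  have hint := gauss_integrable hc
  rw [Measure.volume_eq_prod] at hint ⊢
  rw [integral_prod _ hint]
  have inner : ∀ t : ℝ, ∫ s : ℝ, Real.exp (-(t^2+s^2) - c*t*s)
      = Real.exp (-(1-c^2/4) * t^2) * Real.sqrt π := by
    intro t
    have : ∀ s : ℝ, Real.exp (-(t^2+s^2) - c*t*s)
        = Real.exp (-(1-c^2/4) * t^2) * Real.exp (-(s + c*t/2)^2) := by
      intro s; rw [← Real.exp_add]; ring_nf
    simp_rw [this]
    rw [integral_const_mul]
    have h := integral_add_right_eq_self (μ := volume) (fun s : ℝ => Real.exp (-s^2)) (c*t/2)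
    rw [h]
    have hg := integral_gaussian 1
    simp only [neg_mul, one_mul, div_one] at hg
    rw [hg]
  simp_rw [inner]
  rw [integral_mul_const, integral_gaussian]
  have hs4 : (0:ℝ) < Real.sqrt (4 - c^2) := Real.sqrt_pos.2 (by linarith)
  have h4 : Real.sqrt (1 - c^2/4) = Real.sqrt (4 - c^2) / 2 := by
    rw [show (1 - c^2/4 : ℝ) = (4 - c^2)/4 by ring, Real.sqrt_div (by linarith), 
      show (4:ℝ) = 2^2 by norm_num, Real.sqrt_sq (by norm_num)]
  rw [Real.sqrt_div Real.pi_nonneg, h4]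
  rw [div_div_eq_mul_div, div_mul_eq_mul_div, mul_comm, ← mul_assoc,
    Real.mul_self_sqrt Real.pi_nonneg]
  ring

lemma exp_interval (ρ : ℝ) {a : ℝ} (ha : a ≠ 0) :
    ∫ u in (0:ℝ)..ρ, Real.exp (-(u * a)) = (1 - Real.exp (-(ρ * a))) / a := by
  have H : ∀ u : ℝ, HasDerivAt (fun u : ℝ => -Real.exp (-(u*a)) / a) (Real.exp (-(u*a))) u := by
    intro u
    have h1 : HasDerivAt (fun u : ℝ => -(u*a)) (-a) u := by
      exact ((hasDerivAt_id' u).mul_const a).neg.congr_deriv (by ring)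
    have h3 := (h1.exp.neg.div_const a)
    exact h3.congr_deriv (by rw [mul_neg, neg_neg, mul_div_assoc, div_self ha, mul_one])
  rw [intervalIntegral.integral_eq_sub_of_hasDerivAt (fun u _ => H u)
    ((Continuous.rexp (by continuity)).continuousOn.intervalIntegrable)]
  rw [zero_mul, neg_zero, Real.exp_zero]
  field_simp
  ring

lemma hasDerivAt_arcsin_half {x : ℝ} (hx : |x| < 2) :
    HasDerivAt (fun x : ℝ => Real.arcsin (x/2)) (1 / Real.sqrt (4 - x^2)) x := by
  have hx1 : -2 < x := by cases abs_lt.1 hx; linarith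
  have hx2 : x < 2 := by cases abs_lt.1 hx; linarith
  have h1 : x/2 ≠ -1 := by intro h; nlinarith [h]
  have h2 : x/2 ≠ 1 := by intro h; nlinarith [h]
  have hd := (Real.hasDerivAt_arcsin h1 h2).comp x ((hasDerivAt_id x).div_const 2)
  refine hd.congr_deriv ?_
  have hpos : (0:ℝ) < 4 - x^2 := by nlinarith
  have h4 : (1 : ℝ) - (x/2)^2 = (4 - x^2)/4 := by ring
  have h5 : Real.sqrt ((4 - x^2)/4) = Real.sqrt (4-x^2)/2 := by
    rw [Real.sqrt_div (by linarith), show (4:ℝ) = 2^2 by norm_num, Real.sqrt_sq (by norm_num)]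
  rw [h4, h5, one_div_div]
  ring

lemma hasDerivAt_G {x : ℝ} (hx : |x| < 2) :
    HasDerivAt (fun x : ℝ => x * Real.arcsin (x/2) + Real.sqrt (4 - x^2))
      (Real.arcsin (x/2)) x := by
  have habs := abs_lt.1 hx
  have hpos : (0:ℝ) < 4 - x^2 := by nlinarith [habs.1, habs.2]
  have hsne : Real.sqrt (4 - x^2) ≠ 0 := ne_of_gt (Real.sqrt_pos.2 hpos)
  have h1 := (hasDerivAt_id x).mul (hasDerivAt_arcsin_half hx)
  have hg : HasDerivAt (fun x : ℝ => 4 - x^2) (0 - 2*x^1) x :=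
    (hasDerivAt_const x 4).sub (hasDerivAt_pow 2 x)
  have h2 := (Real.hasDerivAt_sqrt (ne_of_gt hpos)).comp x hg
  refine (h1.add h2).congr_deriv ?_
  symm
  simp only [Function.comp_def, id_eq]
  field_simp
  ring

lemma integral_arcsin_shift {ρ d : ℝ} (hρ1 : ρ ≤ 1) (hd : 0 ≤ d) (hdρ : d ≤ ρ) :
    ∫ u in (0:ℝ)..ρ, Real.arcsin ((u+d)/2)
      = ((ρ+d) * Real.arcsin ((ρ+d)/2) + Real.sqrt (4 - (ρ+d)^2))
        - (d * Real.arcsin (d/2) + Real.sqrt (4 - d^2)) := by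
  have hρ0 : 0 ≤ ρ := le_trans hd hdρ
  have key : ∀ u : ℝ, Real.arcsin ((u+d)/2)
      = (fun w => Real.arcsin (w/2)) (u + d) := fun u => rfl
  have hcont : ContinuousOn (fun u : ℝ => (u+d) * Real.arcsin ((u+d)/2) + Real.sqrt (4 - (u+d)^2))
      (Set.Icc 0 ρ) := by
    apply Continuous.continuousOn
    continuity
  have hderiv : ∀ u ∈ Set.Ioo (0:ℝ) ρ, HasDerivWithinAt
      (fun u : ℝ => (u+d) * Real.arcsin ((u+d)/2) + Real.sqrt (4 - (u+d)^2))
      (Real.arcsin ((u+d)/2)) (Set.Ioi u) u := by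
    intro u hu
    have habs : |u + d| < 2 := by
      rw [abs_lt]; constructor <;> [linarith [hu.1]; linarith [hu.1, hu.2]]
    have := (hasDerivAt_G habs).comp u (((hasDerivAt_id u).add_const d))
    exact (this.congr_deriv (mul_one _)).hasDerivWithinAt
  have hint : IntervalIntegrable (fun u : ℝ => Real.arcsin ((u+d)/2)) volume 0 ρ := by
    apply Continuous.intervalIntegrable
    continuity
  have := intervalIntegral.integral_eq_sub_of_hasDeriv_right_of_le hρ0 hcont hderiv hint
  rw [this]
  norm_num [zero_add]

lemma integral_inv_sqrt {ρ u : ℝ} (hρ0 : 0 ≤ ρ) (hu : 0 ≤ u) (hsum : u + ρ < 2) :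
    ∫ v in (0:ℝ)..ρ, 1 / Real.sqrt (4 - (u+v)^2)
      = Real.arcsin ((u+ρ)/2) - Real.arcsin (u/2) := by
  have hderiv : ∀ v ∈ Set.uIcc (0:ℝ) ρ, HasDerivAt (fun v : ℝ => Real.arcsin ((u+v)/2))
      (1 / Real.sqrt (4 - (u+v)^2)) v := by
    intro v hv
    rw [Set.uIcc_of_le hρ0] at hv
    have habs : |u + v| < 2 := by
      rw [abs_lt]
      constructor
      · linarith [hv.1]
      · linarith [hv.2]
    have hd := (hasDerivAt_arcsin_half habs).comp v ((hasDerivAt_id v).const_add u)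
    exact hd.congr_deriv (mul_one _)
  have hint : IntervalIntegrable (fun v : ℝ => 1 / Real.sqrt (4 - (u+v)^2)) volume 0 ρ := by
    apply ContinuousOn.intervalIntegrable
    apply ContinuousOn.div continuousOn_const
    · exact (Real.continuous_sqrt.comp
        (continuous_const.sub ((continuous_const.add continuous_id).pow 2))).continuousOn
    · intro v hv
      rw [Set.uIcc_of_le hρ0] at hv
      have hlt : (0:ℝ) < 4 - (u+v)^2 := by nlinarith [hv.1, hv.2]
      exact ne_of_gt (Real.sqrt_pos.2 hlt)
  rw [intervalIntegral.integral_eq_sub_of_hasDerivAt hderiv hint]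
  norm_num
set_option maxHeartbeats 2000000 in
lemma core (ρ : ℝ) (h0 : 0 ≤ ρ) (h1 : ρ ≤ 1) :
    (∫ u : ℝ × ℝ,
        (Real.exp (-(u.1 ^ 2 + u.2 ^ 2) / 2 - ρ * u.1 * u.2)
            - Real.exp (-u.1 ^ 2 / 2) * Real.exp (-u.2 ^ 2 / 2)) ^ 2 /
          (u.1 ^ 2 * u.2 ^ 2))
    = 4 * π * (ρ * Real.arcsin ρ + Real.sqrt (1 - ρ^2)
          - ρ * Real.arcsin (ρ/2) - Real.sqrt (4 - ρ^2) + 1) := by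
  set f : ℝ × ℝ → ℝ := fun u =>
    (Real.exp (-(u.1 ^ 2 + u.2 ^ 2) / 2 - ρ * u.1 * u.2)
        - Real.exp (-u.1 ^ 2 / 2) * Real.exp (-u.2 ^ 2 / 2)) ^ 2 / (u.1 ^ 2 * u.2 ^ 2)
    with hf_def
  have hf_nonneg : ∀ p, 0 ≤ f p := fun p => div_nonneg (sq_nonneg _) (by positivity)
  have hf_meas : AEStronglyMeasurable f volume := by
    apply Measurable.aestronglyMeasurable
    fun_prop
  set S : Set (ℝ × ℝ) := Set.Ioc 0 ρ ×ˢ Set.Ioc 0 ρ with hS_def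
  set Φ : (ℝ × ℝ) → (ℝ × ℝ) → ENNReal := fun p q =>
    ENNReal.ofReal (Real.exp (-(p.1^2+p.2^2) - (q.1+q.2)*p.1*p.2)) with hΦ_def
  set h : ℝ → ℝ := fun u => Real.arcsin ((u+ρ)/2) - Real.arcsin (u/2) with hh_def
  have hΦ_meas : AEMeasurable (Function.uncurry Φ) ((volume : Measure (ℝ×ℝ)).prod (volume.restrict S)) := by
    apply Measurable.aemeasurable
    apply ENNReal.measurable_ofReal.comp
    fun_prop
  have hrestrict : (volume : Measure (ℝ×ℝ)).restrict S
      = (volume.restrict (Set.Ioc 0 ρ)).prod (volume.restrict (Set.Ioc 0 ρ)) := by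
    rw [Measure.prod_restrict, ← Measure.volume_eq_prod]
  -- Step i
  have step1 : ∫⁻ p, ENNReal.ofReal (f p) = ∫⁻ p, ∫⁻ q in S, Φ p q := by
    have h1 : (volume : Measure (ℝ×ℝ)) {p | p.1 = 0} = 0 := by
      have he : {p : ℝ×ℝ | p.1 = 0} = ({0} : Set ℝ) ×ˢ (Set.univ : Set ℝ) := by
        ext p
        constructor
        · intro hh; exact ⟨hh, Set.mem_univ _⟩
        · intro hh; exact hh.1
      rw [he, Measure.volume_eq_prod, Measure.prod_prod, Real.volume_singleton, zero_mul]
    have h2 : (volume : Measure (ℝ×ℝ)) {p | p.2 = 0} = 0 := by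
      have he : {p : ℝ×ℝ | p.2 = 0} = (Set.univ : Set ℝ) ×ˢ ({0} : Set ℝ) := by
        ext p
        constructor
        · intro hh; exact ⟨Set.mem_univ _, hh⟩
        · intro hh; exact hh.2
      rw [he, Measure.volume_eq_prod, Measure.prod_prod, Real.volume_singleton, mul_zero]
    have hax : ∀ᵐ p : ℝ×ℝ, p.1 ≠ 0 ∧ p.2 ≠ 0 := by
      rw [ae_iff]
      apply measure_mono_null _ (measure_union_null h1 h2)
      intro p hp
      simp only [Set.mem_setOf_eq, not_and_or, not_not] at hp ⊢
      tauto
    apply lintegral_congr_ae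
    filter_upwards [hax] with p hp
    obtain ⟨ht, hs⟩ := hp
    have ha : p.1 * p.2 ≠ 0 := mul_ne_zero ht hs
    set a := p.1 * p.2 with ha_def
    set A := Real.exp (-(p.1^2+p.2^2)) with hA_def
    set L := (1 - Real.exp (-(ρ * a))) / a with hL_def
    have hA_nonneg : 0 ≤ A := Real.exp_nonneg _
    have hL_nonneg : 0 ≤ L := by
      rcases lt_or_gt_of_ne ha with hlt | hgt
      · have h1' : (1:ℝ) ≤ Real.exp (-(ρ * a)) := Real.one_le_exp (by nlinarith)
        rw [hL_def, show (1 - Real.exp (-(ρ * a))) / a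
          = (Real.exp (-(ρ * a)) - 1) / (-a) by rw [← neg_div_neg_eq]; ring_nf]
        apply div_nonneg (by linarith) (by linarith)
      · have h1' : Real.exp (-(ρ * a)) ≤ 1 := Real.exp_le_one_iff.mpr (by nlinarith)
        apply div_nonneg (by linarith) (le_of_lt hgt)
    have hLint : IntegrableOn (fun v : ℝ => Real.exp (-(v*a))) (Set.Ioc 0 ρ) :=
      (Continuous.rexp (by continuity)).integrableOn_Ioc
    have hLeq : ∫⁻ v in Set.Ioc (0:ℝ) ρ, ENNReal.ofReal (Real.exp (-(v*a)))
        = ENNReal.ofReal L := by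
      rw [← ofReal_integral_eq_lintegral_ofReal hLint
        (Filter.Eventually.of_forall fun v => Real.exp_nonneg _)]
      rw [← intervalIntegral.integral_of_le h0, exp_interval ρ ha, hL_def]
    have hRHS : ∫⁻ q in S, Φ p q = ENNReal.ofReal (A * L^2) := by
      have hmeasp : Measurable (Φ p) := by
        simp only [hΦ_def]
        exact ENNReal.measurable_ofReal.comp (by fun_prop)
      rw [hrestrict, lintegral_prod _ hmeasp.aemeasurable]
      have inner : ∀ u : ℝ, ∫⁻ v in Set.Ioc (0:ℝ) ρ, Φ p (u, v)
          = ENNReal.ofReal (A * Real.exp (-(u*a))) * ENNReal.ofReal L := by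
        intro u
        have hv : ∀ v : ℝ, Φ p (u, v)
            = ENNReal.ofReal (A * Real.exp (-(u*a))) * ENNReal.ofReal (Real.exp (-(v*a))) := by
          intro v
          simp only [hΦ_def]
          rw [← ENNReal.ofReal_mul (by positivity)]
          congr 1
          rw [hA_def, ha_def, ← Real.exp_add, ← Real.exp_add]
          ring_nf
        simp_rw [hv]
        rw [lintegral_const_mul _ (by fun_prop), hLeq]
      simp_rw [inner]
      rw [lintegral_mul_const _ (by fun_prop)]
      have hu : ∀ u : ℝ, ENNReal.ofReal (A * Real.exp (-(u*a)))
          = ENNReal.ofReal A * ENNReal.ofReal (Real.exp (-(u*a))) :=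
        fun u => ENNReal.ofReal_mul hA_nonneg
      simp_rw [hu]
      rw [lintegral_const_mul _ (by fun_prop), hLeq,
        ← ENNReal.ofReal_mul hA_nonneg, ← ENNReal.ofReal_mul (mul_nonneg hA_nonneg hL_nonneg)]
      congr 1
      ring
    rw [hRHS]
    congr 1
    have e1 : Real.exp (-(p.1^2+p.2^2)/2 - ρ*p.1*p.2)
        = Real.exp (-(p.1^2+p.2^2)/2) * Real.exp (-(ρ*a)) := by
      rw [← Real.exp_add, ha_def]
      ring_nf
    have e2 : Real.exp (-p.1^2/2) * Real.exp (-p.2^2/2)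
        = Real.exp (-(p.1^2+p.2^2)/2) := by
      rw [← Real.exp_add]
      ring_nf
    have e3 : Real.exp (-(p.1^2+p.2^2)/2) * Real.exp (-(p.1^2+p.2^2)/2) = A := by
      rw [hA_def, ← Real.exp_add]
      ring_nf
    simp only [hf_def]
    have ht2 : p.1^2 * p.2^2 = a^2 := by rw [ha_def]; ring
    rw [e1, e2, ht2, hL_def, ← e3]
    field_simp
    ring
  -- Step ii : swap
  have step2 : ∫⁻ p, ∫⁻ q in S, Φ p q = ∫⁻ q in S, ∫⁻ p, Φ p q :=
    lintegral_lintegral_swap hΦ_meas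
  have hSm : MeasurableSet S := measurableSet_Ioc.prod measurableSet_Ioc
  -- Step iii
  have step3 : ∫⁻ q in S, ∫⁻ p, Φ p q
      = ∫⁻ q in S, ENNReal.ofReal (2*π / Real.sqrt (4 - (q.1+q.2)^2)) := by
    apply lintegral_congr_ae
    have hE : (volume : Measure (ℝ×ℝ)) {q | q.1 + q.2 = 2} = 0 := by
      have hm : MeasurableSet {q : ℝ×ℝ | q.1 + q.2 = 2} :=
        (isClosed_eq (continuous_fst.add continuous_snd) continuous_const).measurableSet
      rw [Measure.volume_eq_prod, Measure.measure_prod_null hm]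
      apply Filter.Eventually.of_forall
      intro u
      have he : (Prod.mk u ⁻¹' {q : ℝ×ℝ | q.1 + q.2 = 2}) = {2 - u} := by
        ext v
        constructor
        · intro hv; simp only [Set.mem_preimage, Set.mem_setOf_eq] at hv
          simp only [Set.mem_singleton_iff]; linarith
        · intro hv; simp only [Set.mem_singleton_iff] at hv
          simp only [Set.mem_preimage, Set.mem_setOf_eq]; linarith
      simp [he]
    have hE' : ∀ᵐ q ∂(volume.restrict S), q.1 + q.2 ≠ 2 := by
      apply ae_restrict_of_ae
      rw [ae_iff]
      simpa using hE
    filter_upwards [hE', ae_restrict_mem hSm] with q hq2 hqS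
    have hc : |q.1 + q.2| < 2 := by
      rw [abs_lt]
      obtain ⟨hq1, hq2'⟩ := hqS
      constructor
      · linarith [hq1.1, hq2'.1]
      · rcases lt_or_eq_of_le (by linarith [hq1.2, hq2'.2] : q.1 + q.2 ≤ 2) with hlt | heq
        · exact hlt
        · exact absurd heq hq2
    rw [← ofReal_integral_eq_lintegral_ofReal (gauss_integrable hc)
      (Filter.Eventually.of_forall fun p => Real.exp_nonneg _), gauss_value hc]
  -- Step iv
  have step4 : ∫⁻ q in S, ENNReal.ofReal (2*π / Real.sqrt (4 - (q.1+q.2)^2))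
      = ENNReal.ofReal (∫ u in Set.Ioc (0:ℝ) ρ, 2*π * h u) := by
    have hcontg : Continuous (fun q : ℝ×ℝ => Real.sqrt (4 - (q.1+q.2)^2)) :=
      Real.continuous_sqrt.comp (continuous_const.sub ((continuous_fst.add continuous_snd).pow 2))
    have hgm : Measurable (fun q : ℝ×ℝ => ENNReal.ofReal (2*π / Real.sqrt (4 - (q.1+q.2)^2))) :=
      (measurable_const.div hcontg.measurable).ennreal_ofReal
    rw [hrestrict, lintegral_prod _ hgm.aemeasurable]
    have inner : ∀ᵐ u ∂(volume.restrict (Set.Ioc (0:ℝ) ρ)), (∫⁻ v in Set.Ioc (0:ℝ) ρ,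
        ENNReal.ofReal (2*π / Real.sqrt (4 - (u+v)^2))) = ENNReal.ofReal (2*π * h u) := by
      have hsing : ∀ᵐ u : ℝ, u ≠ 2 - ρ := by
        rw [ae_iff]
        simpa using Real.volume_singleton (a := 2 - ρ)
      filter_upwards [ae_restrict_of_ae hsing, ae_restrict_mem measurableSet_Ioc] with u hu hmem
      have hu0 : 0 < u := hmem.1
      have huρ : u ≤ ρ := hmem.2
      have hsum : u + ρ < 2 := by
        rcases lt_or_eq_of_le (by linarith : u + ρ ≤ 2) with hlt | heq
        · exact hlt
        · exact absurd (by linarith) hu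
      have hpos : ∀ v ∈ Set.Icc (0:ℝ) ρ, (0:ℝ) < 4 - (u+v)^2 := by
        intro v hv
        nlinarith [hv.1, hv.2]
      have hcont : ContinuousOn (fun v : ℝ => 2*π / Real.sqrt (4 - (u+v)^2)) (Set.Icc 0 ρ) := by
        apply ContinuousOn.div continuousOn_const
        · exact (Real.continuous_sqrt.comp (by continuity)).continuousOn
        · intro v hv
          exact ne_of_gt (Real.sqrt_pos.2 (hpos v hv))
      have hint : IntegrableOn (fun v : ℝ => 2*π/Real.sqrt (4-(u+v)^2)) (Set.Ioc 0 ρ) :=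
        (hcont.integrableOn_Icc).mono_set Set.Ioc_subset_Icc_self
      rw [← ofReal_integral_eq_lintegral_ofReal hint
        (Filter.Eventually.of_forall fun v => by positivity)]
      congr 1
      rw [← intervalIntegral.integral_of_le h0]
      have hrw : ∀ v : ℝ, 2*π/Real.sqrt (4-(u+v)^2) = (2*π) * (1/Real.sqrt (4-(u+v)^2)) := by
        intro v; ring
      simp_rw [hrw]
      rw [intervalIntegral.integral_const_mul, integral_inv_sqrt h0 (le_of_lt hu0) hsum, hh_def]
    rw [lintegral_congr_ae inner]
    have hint2 : IntegrableOn (fun u : ℝ => 2*π*h u) (Set.Ioc 0 ρ) := by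
      apply Continuous.integrableOn_Ioc
      simp only [hh_def]
      continuity
    have hnn : 0 ≤ᵐ[volume.restrict (Set.Ioc 0 ρ)] fun u => 2*π*h u := by
      apply Filter.Eventually.of_forall
      intro u
      have harc : Real.arcsin (u/2) ≤ Real.arcsin ((u+ρ)/2) :=
        Real.monotone_arcsin (by linarith)
      have hπ := Real.pi_pos
      simp only [hh_def, Pi.zero_apply]
      nlinarith
    rw [← ofReal_integral_eq_lintegral_ofReal hint2 hnn]
  have hT_nonneg : 0 ≤ ∫ u in Set.Ioc (0:ℝ) ρ, 2*π * h u := by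
    apply setIntegral_nonneg measurableSet_Ioc
    intro u hu
    have : Real.arcsin (u/2) ≤ Real.arcsin ((u+ρ)/2) :=
      Real.monotone_arcsin (by linarith [hu.1, hu.2])
    have hπ := Real.pi_pos
    simp only [hh_def]
    nlinarith
  have hT_val : ∫ u in Set.Ioc (0:ℝ) ρ, 2*π * h u
      = 4 * π * (ρ * Real.arcsin ρ + Real.sqrt (1 - ρ^2)
          - ρ * Real.arcsin (ρ/2) - Real.sqrt (4 - ρ^2) + 1) := by
    rw [← intervalIntegral.integral_of_le h0]
    have hi1 : IntervalIntegrable (fun u : ℝ => Real.arcsin ((u+ρ)/2)) volume 0 ρ := by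
      apply Continuous.intervalIntegrable; continuity
    have hi2 : IntervalIntegrable (fun u : ℝ => Real.arcsin (u/2)) volume 0 ρ := by
      apply Continuous.intervalIntegrable; continuity
    have hsplit : ∫ u in (0:ℝ)..ρ, 2*π * h u
        = (2*π) * ((∫ u in (0:ℝ)..ρ, Real.arcsin ((u+ρ)/2)) - ∫ u in (0:ℝ)..ρ, Real.arcsin (u/2)) := by
      rw [← intervalIntegral.integral_sub hi1 hi2, ← intervalIntegral.integral_const_mul]
    rw [hsplit]
    have hA1 := integral_arcsin_shift h1 h0 le_rfl
    have hA2 := integral_arcsin_shift h1 le_rfl h0 (d := 0)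
    simp only [add_zero] at hA2
    rw [hA1, hA2]
    have e1 : (ρ + ρ)/2 = ρ := by ring
    have e2 : Real.sqrt (4 - (ρ+ρ)^2) = 2 * Real.sqrt (1 - ρ^2) := by
      rw [show (4 - (ρ+ρ)^2 : ℝ) = 4 * (1 - ρ^2) by ring,
        show (4:ℝ) = 2^2 by norm_num, Real.sqrt_mul (by positivity), Real.sqrt_sq (by norm_num)]
    have e3 : Real.sqrt (4 - (0:ℝ)^2) = 2 := by
      rw [show (4 - (0:ℝ)^2 : ℝ) = 2^2 by norm_num, Real.sqrt_sq (by norm_num)]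
    rw [e1, e2, e3]
    simp only [Real.arcsin_zero, zero_mul, zero_add, zero_div, mul_zero]
    ring
  have hI : ∫ a, f a = 4 * π * (ρ * Real.arcsin ρ + Real.sqrt (1 - ρ^2)
      - ρ * Real.arcsin (ρ/2) - Real.sqrt (4 - ρ^2) + 1) := by
    rw [integral_eq_lintegral_of_nonneg_ae (Filter.Eventually.of_forall hf_nonneg) hf_meas,
      step1, step2, step3, step4, ENNReal.toReal_ofReal hT_nonneg, hT_val]
  exact hI

/-- For standard bivariate normal `(X, Y)` with correlation `ρ`, expressed through the
explicit characteristic functions `f_{X,Y}(t,s) = e^{-(t²+s²)/2 - ρts}`,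
`f_X(t) = e^{-t²/2}`, `f_Y(s) = e^{-s²/2}`:
`V²(X,Y) = F(ρ)/π²` with
`F(ρ) = 4π(ρ arcsin ρ + √(1-ρ²) - ρ arcsin(ρ/2) - √(4-ρ²) + 1)`. -/
theorem dcov_bivariate_normal (ρ : ℝ) (hρ : ρ ∈ Set.Icc (-1 : ℝ) 1) :
    (1 / Real.pi ^ 2) *
      (∫ u : ℝ × ℝ,
        (Real.exp (-(u.1 ^ 2 + u.2 ^ 2) / 2 - ρ * u.1 * u.2)
            - Real.exp (-u.1 ^ 2 / 2) * Real.exp (-u.2 ^ 2 / 2)) ^ 2 /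
          (u.1 ^ 2 * u.2 ^ 2)) =
      (4 * Real.pi * (ρ * Real.arcsin ρ + Real.sqrt (1 - ρ ^ 2)
          - ρ * Real.arcsin (ρ / 2) - Real.sqrt (4 - ρ ^ 2) + 1)) / Real.pi ^ 2 := by
  obtain ⟨hl, hr⟩ := hρ
  have key : (∫ u : ℝ × ℝ,
        (Real.exp (-(u.1 ^ 2 + u.2 ^ 2) / 2 - ρ * u.1 * u.2)
            - Real.exp (-u.1 ^ 2 / 2) * Real.exp (-u.2 ^ 2 / 2)) ^ 2 /
          (u.1 ^ 2 * u.2 ^ 2))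
      = 4 * Real.pi * (ρ * Real.arcsin ρ + Real.sqrt (1 - ρ ^ 2)
          - ρ * Real.arcsin (ρ / 2) - Real.sqrt (4 - ρ ^ 2) + 1) := by
    rcases le_or_gt 0 ρ with hpos | hneg
    · exact core ρ hpos hr
    · have hcore := core (-ρ) (by linarith) (by linarith)
      set e : ℝ×ℝ ≃ᵐ ℝ×ℝ := (MeasurableEquiv.neg ℝ).prodCongr (MeasurableEquiv.refl ℝ) with he_def
      have hmp : MeasurePreserving e volume volume := by
        rw [Measure.volume_eq_prod]
        exact (Measure.measurePreserving_neg volume).prod (MeasurePreserving.id volume)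
      have hcomp := hmp.integral_comp e.measurableEmbedding
        (fun u : ℝ×ℝ => (Real.exp (-(u.1 ^ 2 + u.2 ^ 2) / 2 - ρ * u.1 * u.2)
            - Real.exp (-u.1 ^ 2 / 2) * Real.exp (-u.2 ^ 2 / 2)) ^ 2 / (u.1 ^ 2 * u.2 ^ 2))
      have he_app : ∀ x : ℝ×ℝ, e x = (-x.1, x.2) := fun x => rfl
      simp only [he_app] at hcomp
      rw [← hcomp]
      have hpt : ∀ x : ℝ×ℝ,
          (Real.exp (-((-x.1) ^ 2 + x.2 ^ 2) / 2 - ρ * (-x.1) * x.2)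
            - Real.exp (-(-x.1) ^ 2 / 2) * Real.exp (-x.2 ^ 2 / 2)) ^ 2 / ((-x.1) ^ 2 * x.2 ^ 2)
          = (Real.exp (-(x.1 ^ 2 + x.2 ^ 2) / 2 - (-ρ) * x.1 * x.2)
            - Real.exp (-x.1 ^ 2 / 2) * Real.exp (-x.2 ^ 2 / 2)) ^ 2 / (x.1 ^ 2 * x.2 ^ 2) := by
        intro x
        simp only [neg_sq]
        rw [show -(x.1 ^ 2 + x.2 ^ 2) / 2 - ρ * (-x.1) * x.2
          = -(x.1 ^ 2 + x.2 ^ 2) / 2 - (-ρ) * x.1 * x.2 by ring]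
      simp only [hpt]
      rw [hcore]
      have ha1 : Real.arcsin (-ρ) = - Real.arcsin ρ := Real.arcsin_neg ρ
      have ha2 : Real.arcsin (-ρ/2) = - Real.arcsin (ρ/2) := by
        rw [show (-ρ/2 : ℝ) = -(ρ/2) by ring, Real.arcsin_neg]
      rw [ha1, ha2, neg_sq]
      ring
  rw [key]
  ring
end

section
/- The function F(ρ) = ∫∫_{ℝ²} exp(-t²-s²)·(1 - 2e^{-ρts} + e^{-2ρts}) t^{-2} s^{-2} dt ds satisfies F''(z) = 4π/√(1-z²) - 2π/√(1 - z²/4) for |z| < 1. -/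
open MeasureTheory Real

/-! ### Auxiliary definitions -/

noncomputable def f0 (ρ : ℝ) (u : ℝ × ℝ) : ℝ :=
  Real.exp (-u.1 ^ 2 - u.2 ^ 2) *
    (1 - 2 * Real.exp (-ρ * u.1 * u.2) + Real.exp (-2 * ρ * u.1 * u.2)) /
  (u.1 ^ 2 * u.2 ^ 2)

noncomputable def f1 (ρ : ℝ) (u : ℝ × ℝ) : ℝ :=
  Real.exp (-u.1 ^ 2 - u.2 ^ 2) *
    (2 * Real.exp (-ρ * u.1 * u.2) - 2 * Real.exp (-2 * ρ * u.1 * u.2)) /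
  (u.1 * u.2)

noncomputable def f2 (ρ : ℝ) (u : ℝ × ℝ) : ℝ :=
  Real.exp (-u.1 ^ 2 - u.2 ^ 2) *
    (-2 * Real.exp (-ρ * u.1 * u.2) + 4 * Real.exp (-2 * ρ * u.1 * u.2))

/-! ### Elementary inequalities -/

lemma exp_bound_aux (c t s : ℝ) : -t^2 - s^2 - c*t*s ≤ -((1 - |c|/2) * (t^2 + s^2)) := by
  have h1 : 0 ≤ (|c|-c)*(t-s)^2 :=
    mul_nonneg (sub_nonneg.2 (le_abs_self c)) (sq_nonneg _)
  have h2 : 0 ≤ (|c|+c)*(t+s)^2 :=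
    mul_nonneg (by linarith [neg_abs_le c]) (sq_nonneg _)
  nlinarith [h1, h2]

lemma abs_one_sub_exp_neg (x : ℝ) : |1 - Real.exp (-x)| ≤ |x| * Real.exp |x| := by
  rcases le_or_gt 0 x with h | h
  · rw [abs_of_nonneg (by simpa using Real.exp_le_one_iff.2 (by linarith : -x ≤ 0)),
      abs_of_nonneg h]
    have h1 := Real.add_one_le_exp (-x)
    have h2 := Real.one_le_exp h
    nlinarith
  · rw [abs_of_nonpos (by simpa using Real.one_le_exp (by linarith : (0:ℝ) ≤ -x)),
      abs_of_neg h]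
    have h1 := mul_le_mul_of_nonneg_right (Real.add_one_le_exp x) (Real.exp_pos (-x)).le
    rw [← Real.exp_add, add_neg_cancel, Real.exp_zero] at h1
    nlinarith [Real.exp_pos (-x)]

lemma g1_bound (a : ℝ) : |2*Real.exp (-a) - 2*Real.exp (-2*a)| ≤ 2 * |a| * Real.exp (2 * |a|) := by
  have key : 2*Real.exp (-a) - 2*Real.exp (-2*a) = 2*Real.exp (-a)*(1 - Real.exp (-a)) := by
    rw [show (-2:ℝ)*a = -a + -a by ring, Real.exp_add]; ring
  rw [key, abs_mul, abs_mul, abs_two, Real.abs_exp,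
    show (2:ℝ) * |a| = |a| + |a| by ring, Real.exp_add]
  calc 2 * Real.exp (-a) * |1 - Real.exp (-a)|
      ≤ 2 * Real.exp |a| * (|a| * Real.exp |a|) := by
        apply mul_le_mul
        · have : -a ≤ |a| := neg_le_abs a
          nlinarith [Real.exp_le_exp.2 this]
        · exact abs_one_sub_exp_neg a
        · positivity
        · positivity
    _ = (|a| + |a|) * (Real.exp |a| * Real.exp |a|) := by ring

lemma g2_bound (a : ℝ) : |(-2)*Real.exp (-a) + 4*Real.exp (-2*a)| ≤ 6*Real.exp (2*|a|) := by
  have h1 : Real.exp (-a) ≤ Real.exp (2*|a|) :=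
    Real.exp_le_exp.2 (by cases abs_cases a <;> linarith)
  have h2 : Real.exp (-2*a) ≤ Real.exp (2*|a|) :=
    Real.exp_le_exp.2 (by cases abs_cases a <;> linarith)
  calc |(-2)*Real.exp (-a) + 4*Real.exp (-2*a)|
      ≤ |(-2)*Real.exp (-a)| + |4*Real.exp (-2*a)| := abs_add_le _ _
    _ = 2*Real.exp (-a) + 4*Real.exp (-2*a) := by
        rw [abs_mul, abs_mul, Real.abs_exp, Real.abs_exp]; norm_num
    _ ≤ 6*Real.exp (2*|a|) := by linarith

lemma g0_bound (a : ℝ) : |1 - 2*Real.exp (-a) + Real.exp (-2*a)| ≤ a^2*Real.exp (2*|a|) := by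
  have key : 1 - 2*Real.exp (-a) + Real.exp (-2*a) = (1 - Real.exp (-a))^2 := by
    rw [show (-2:ℝ)*a = -a + -a by ring, Real.exp_add]; ring
  rw [key, abs_of_nonneg (sq_nonneg _), ← sq_abs (1 - Real.exp (-a))]
  calc |1 - Real.exp (-a)|^2 ≤ (|a| * Real.exp |a|)^2 := by
        apply pow_le_pow_left₀ (abs_nonneg _) (abs_one_sub_exp_neg a)
    _ = a^2*Real.exp (2*|a|) := by
        rw [mul_pow, sq_abs, ← Real.exp_nat_mul]; norm_num

lemma exp_prod_bound {r x t s : ℝ} (hx : |x| ≤ r) :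
    Real.exp (-t^2 - s^2) * Real.exp (2*|x*t*s|) ≤
      Real.exp (-(1-r)*t^2) * Real.exp (-(1-r)*s^2) := by
  rw [← Real.exp_add, ← Real.exp_add]
  apply Real.exp_le_exp.2
  have h1 : |x*t*s| ≤ r * |t*s| := by
    rw [show x*t*s = x*(t*s) by ring, abs_mul]
    exact mul_le_mul_of_nonneg_right hx (abs_nonneg _)
  have h2 : 2*|t*s| ≤ t^2 + s^2 := by
    rw [abs_mul]
    nlinarith [sq_nonneg (|t| - |s|), sq_abs t, sq_abs s]
  have hr : 0 ≤ r := (abs_nonneg x).trans hx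
  nlinarith [abs_nonneg (t*s)]

lemma nullset : volume {u : ℝ × ℝ | u.1 = 0 ∨ u.2 = 0} = 0 := by
  have h : {u : ℝ × ℝ | u.1 = 0 ∨ u.2 = 0} =
      (({0} : Set ℝ) ×ˢ (Set.univ : Set ℝ)) ∪ ((Set.univ : Set ℝ) ×ˢ ({0} : Set ℝ)) := by
    ext ⟨a, b⟩
    simp only [Set.mem_setOf_eq, Set.mem_union, Set.mem_prod, Set.mem_singleton_iff,
      Set.mem_univ, and_true, true_and]
  rw [h, Measure.volume_eq_prod]
  refine measure_union_null ?_ ?_ <;>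
    rw [Measure.prod_prod] <;> simp

/-! ### The two-dimensional Gaussian integral with cross term -/

lemma meas_gauss2 (c : ℝ) :
    AEStronglyMeasurable (fun u : ℝ × ℝ => Real.exp (-u.1^2 - u.2^2 - c*u.1*u.2)) volume :=
  (Continuous.aestronglyMeasurable (by continuity))

lemma integrable_gauss2 {c : ℝ} (hc : |c| < 2) :
    Integrable (fun u : ℝ × ℝ => Real.exp (-u.1^2 - u.2^2 - c*u.1*u.2)) := by
  have ha : 0 < 1 - |c|/2 := by linarith
  have hint : Integrable (fun u : ℝ × ℝ =>
      Real.exp (-(1-|c|/2) * u.1^2) * Real.exp (-(1-|c|/2) * u.2^2)) := by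
    rw [Measure.volume_eq_prod]
    exact (integrable_exp_neg_mul_sq ha).mul_prod (integrable_exp_neg_mul_sq ha)
  refine hint.mono (meas_gauss2 c) (Filter.Eventually.of_forall fun u => ?_)
  rw [Real.norm_eq_abs, Real.norm_eq_abs, abs_of_pos (by positivity), abs_of_pos (by positivity),
    ← Real.exp_add]
  apply Real.exp_le_exp.2
  have := exp_bound_aux c u.1 u.2
  ring_nf at this ⊢
  linarith

lemma gauss2 {c : ℝ} (hc : |c| < 2) :
    ∫ u : ℝ × ℝ, Real.exp (-u.1^2 - u.2^2 - c*u.1*u.2) = π / Real.sqrt (1 - c^2/4) := by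
  have hb : 0 < 1 - c^2/4 := by nlinarith [abs_nonneg c, sq_abs c]
  have hI := integrable_gauss2 hc
  rw [Measure.volume_eq_prod] at hI
  rw [Measure.volume_eq_prod, MeasureTheory.integral_prod _ hI]
  have : ∀ t : ℝ, (∫ s : ℝ, Real.exp (-t^2 - s^2 - c*t*s))
      = Real.sqrt π * Real.exp (-(1 - c^2/4) * t^2) := by
    intro t
    have h1 : ∀ s : ℝ, -t^2 - s^2 - c*t*s = -(s + c*t/2)^2 + (-(1 - c^2/4) * t^2) := by
      intro s; ring
    simp_rw [h1, Real.exp_add, integral_mul_const]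
    congr 1
    rw [MeasureTheory.integral_add_right_eq_self (fun s => Real.exp (-s^2)) (c*t/2)]
    have := integral_gaussian 1
    simp only [one_mul, neg_mul] at this
    rw [this, div_one]
  simp_rw [this]
  rw [integral_const_mul, integral_gaussian]
  rw [Real.sqrt_div pi_nonneg, mul_div_assoc', Real.mul_self_sqrt pi_nonneg]

/-! ### Measurability -/

lemma meas_f0 (ρ : ℝ) : AEStronglyMeasurable (f0 ρ) (volume : Measure (ℝ × ℝ)) := by
  unfold f0
  apply Measurable.aestronglyMeasurable
  fun_prop

lemma meas_f1 (ρ : ℝ) : AEStronglyMeasurable (f1 ρ) (volume : Measure (ℝ × ℝ)) := by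
  unfold f1
  apply Measurable.aestronglyMeasurable
  fun_prop

lemma meas_f2 (ρ : ℝ) : AEStronglyMeasurable (f2 ρ) (volume : Measure (ℝ × ℝ)) := by
  unfold f2
  apply Measurable.aestronglyMeasurable
  fun_prop

/-! ### Pointwise derivatives -/

lemma exp_lin_hasDerivAt (c ρ : ℝ) :
    HasDerivAt (fun x : ℝ => Real.exp (x * c)) (c * Real.exp (ρ * c)) ρ := by
  simpa [mul_comm, Function.comp_def] using (Real.hasDerivAt_exp (ρ * c)).comp ρ ((hasDerivAt_id ρ).mul_const c)

lemma hasDeriv_f0 {u : ℝ × ℝ} (ht : u.1 ≠ 0) (hs : u.2 ≠ 0) (ρ : ℝ) :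
    HasDerivAt (fun x => f0 x u) (f1 ρ u) ρ := by
  obtain ⟨t, s⟩ := u
  simp only [ne_eq] at ht hs
  have E1 := exp_lin_hasDerivAt (-(t*s)) ρ
  have E2 := exp_lin_hasDerivAt (-(2*t*s)) ρ
  have H := ((((E1.const_mul (2:ℝ)).const_sub 1).add E2).const_mul
      (Real.exp (-t^2 - s^2))).div_const (t^2 * s^2)
  have H2 := H.congr_of_eventuallyEq (Filter.Eventually.of_forall fun y =>
    show f0 y (t, s) = _ by simp only [f0, Pi.add_apply]; ring_nf)
  refine H2.congr_deriv ?_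
  simp only [f1]
  field_simp
  ring

lemma hasDeriv_f1 {u : ℝ × ℝ} (ht : u.1 ≠ 0) (hs : u.2 ≠ 0) (ρ : ℝ) :
    HasDerivAt (fun x => f1 x u) (f2 ρ u) ρ := by
  obtain ⟨t, s⟩ := u
  simp only [ne_eq] at ht hs
  have E1 := exp_lin_hasDerivAt (-(t*s)) ρ
  have E2 := exp_lin_hasDerivAt (-(2*t*s)) ρ
  have H := (((E1.const_mul (2:ℝ)).sub (E2.const_mul (2:ℝ))).const_mul
      (Real.exp (-t^2 - s^2))).div_const (t * s)
  have H2 := H.congr_of_eventuallyEq (Filter.Eventually.of_forall fun y =>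
    show f1 y (t, s) = _ by simp only [f1, Pi.sub_apply]; ring_nf)
  refine H2.congr_deriv ?_
  simp only [f2]
  field_simp
  ring

/-! ### Uniform bounds -/

lemma bound_f0 {r x : ℝ} (hr : r ≤ 1) (hx : |x| ≤ r) (u : ℝ × ℝ) :
    ‖f0 x u‖ ≤ Real.exp (-(1-r)*u.1^2) * Real.exp (-(1-r)*u.2^2) := by
  obtain ⟨t, s⟩ := u
  rcases eq_or_ne t 0 with h | ht
  · simp [f0, h]; positivity
  rcases eq_or_ne s 0 with h | hs
  · simp [f0, h]; positivity
  have hD : (0:ℝ) < t^2 * s^2 := by positivity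
  have key : f0 x (t, s) =
      Real.exp (-t^2 - s^2) * (1 - 2*Real.exp (-(x*t*s)) + Real.exp (-2*(x*t*s))) / (t^2*s^2) := by
    simp only [f0]; ring_nf
  rw [key, Real.norm_eq_abs, abs_div, abs_mul, Real.abs_exp, abs_of_pos hD]
  calc Real.exp (-t^2 - s^2) * |1 - 2*Real.exp (-(x*t*s)) + Real.exp (-2*(x*t*s))| / (t^2*s^2)
      ≤ Real.exp (-t^2 - s^2) * ((x*t*s)^2 * Real.exp (2*|x*t*s|)) / (t^2*s^2) := by
        gcongr
        exact g0_bound (x*t*s)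
    _ = (Real.exp (-t^2 - s^2) * Real.exp (2*|x*t*s|)) * ((x*t*s)^2 / (t^2*s^2)) := by ring
    _ ≤ (Real.exp (-t^2 - s^2) * Real.exp (2*|x*t*s|)) * 1 := by
        gcongr
        rw [div_le_one hD]
        have hx1 : x^2 ≤ 1 := by nlinarith [sq_abs x, abs_nonneg x, hx.trans hr]
        nlinarith [hx1, sq_nonneg (t*s)]
    _ = Real.exp (-t^2 - s^2) * Real.exp (2*|x*t*s|) := mul_one _
    _ ≤ _ := exp_prod_bound hx

lemma bound_f1 {r x : ℝ} (hr : r ≤ 1) (hx : |x| ≤ r) (u : ℝ × ℝ) :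
    ‖f1 x u‖ ≤ 2 * (Real.exp (-(1-r)*u.1^2) * Real.exp (-(1-r)*u.2^2)) := by
  obtain ⟨t, s⟩ := u
  rcases eq_or_ne t 0 with h | ht
  · simp [f1, h]; positivity
  rcases eq_or_ne s 0 with h | hs
  · simp [f1, h]; positivity
  have hD : t * s ≠ 0 := mul_ne_zero ht hs
  have key : f1 x (t, s) =
      Real.exp (-t^2 - s^2) * (2*Real.exp (-(x*t*s)) - 2*Real.exp (-2*(x*t*s))) / (t*s) := by
    simp only [f1]; ring_nf
  rw [key, Real.norm_eq_abs, abs_div, abs_mul, Real.abs_exp]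
  calc Real.exp (-t^2 - s^2) * |2*Real.exp (-(x*t*s)) - 2*Real.exp (-2*(x*t*s))| / |t*s|
      ≤ Real.exp (-t^2 - s^2) * (2 * |x*t*s| * Real.exp (2*|x*t*s|)) / |t*s| := by
        gcongr
        exact g1_bound (x*t*s)
    _ = (Real.exp (-t^2 - s^2) * Real.exp (2*|x*t*s|)) * (2 * (|x*t*s| / |t*s|)) := by ring
    _ ≤ (Real.exp (-t^2 - s^2) * Real.exp (2*|x*t*s|)) * (2 * 1) := by
        gcongr
        rw [div_le_one (abs_pos.2 hD)]
        calc |x*t*s| = |x| * |t*s| := by rw [show x*t*s = x*(t*s) by ring, abs_mul]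
          _ ≤ 1 * |t*s| := by
              apply mul_le_mul_of_nonneg_right (hx.trans hr) (abs_nonneg _)
          _ = |t*s| := one_mul _
    _ = 2 * (Real.exp (-t^2 - s^2) * Real.exp (2*|x*t*s|)) := by ring
    _ ≤ 2 * (Real.exp (-(1-r)*t^2) * Real.exp (-(1-r)*s^2)) := by
        have := exp_prod_bound (t := t) (s := s) hx
        linarith

lemma bound_f2 {r x : ℝ} (hx : |x| ≤ r) (u : ℝ × ℝ) :
    ‖f2 x u‖ ≤ 6 * (Real.exp (-(1-r)*u.1^2) * Real.exp (-(1-r)*u.2^2)) := by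
  obtain ⟨t, s⟩ := u
  have key : f2 x (t, s) =
      Real.exp (-t^2 - s^2) * ((-2)*Real.exp (-(x*t*s)) + 4*Real.exp (-2*(x*t*s))) := by
    simp only [f2]; ring_nf
  rw [key, Real.norm_eq_abs, abs_mul, Real.abs_exp]
  calc Real.exp (-t^2 - s^2) * |(-2)*Real.exp (-(x*t*s)) + 4*Real.exp (-2*(x*t*s))|
      ≤ Real.exp (-t^2 - s^2) * (6*Real.exp (2*|x*t*s|)) := by
        gcongr
        exact g2_bound (x*t*s)
    _ = 6 * (Real.exp (-t^2 - s^2) * Real.exp (2*|x*t*s|)) := by ring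
    _ ≤ 6 * (Real.exp (-(1-r)*t^2) * Real.exp (-(1-r)*s^2)) := by
        have := exp_prod_bound (t := t) (s := s) hx
        linarith

/-- The function `F(ρ) = ∫∫ e^{-t²-s²}(1 - 2e^{-ρts} + e^{-2ρts}) t⁻² s⁻² dt ds`
satisfies `F''(z) = 4π/√(1-z²) - 2π/√(1-z²/4)` for `|z| < 1`. -/
theorem F_second_deriv (z : ℝ) (hz : |z| < 1) :
    deriv (deriv (fun ρ : ℝ =>
        ∫ u : ℝ × ℝ,
          Real.exp (-u.1 ^ 2 - u.2 ^ 2) *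
            (1 - 2 * Real.exp (-ρ * u.1 * u.2) + Real.exp (-2 * ρ * u.1 * u.2)) /
          (u.1 ^ 2 * u.2 ^ 2))) z =
      4 * Real.pi / Real.sqrt (1 - z ^ 2) - 2 * Real.pi / Real.sqrt (1 - z ^ 2 / 4) := by
  show deriv (deriv (fun ρ : ℝ => ∫ u : ℝ × ℝ, f0 ρ u)) z = _
  set r : ℝ := (1 + |z|) / 2 with hrdef
  set ε : ℝ := (1 - |z|) / 2 with hεdef
  have hε : 0 < ε := by rw [hεdef]; linarith
  have hrlt : r < 1 := by rw [hrdef]; linarith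
  have hr1 : r ≤ 1 := hrlt.le
  have h1r : 0 < 1 - r := by linarith
  have hball : ∀ x ∈ Metric.ball z ε, |x| ≤ r := by
    intro x hx
    rw [Metric.mem_ball, Real.dist_eq] at hx
    have := abs_sub_abs_le_abs_sub x z
    rw [hrdef]; rw [hεdef] at hx; linarith
  have hbint : Integrable (fun u : ℝ × ℝ =>
      Real.exp (-(1-r)*u.1^2) * Real.exp (-(1-r)*u.2^2)) := by
    rw [Measure.volume_eq_prod]
    exact (integrable_exp_neg_mul_sq h1r).mul_prod (integrable_exp_neg_mul_sq h1r)
  have hae : ∀ᵐ u : ℝ × ℝ, u.1 ≠ 0 ∧ u.2 ≠ 0 := by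
    have h := (measure_eq_zero_iff_ae_notMem (μ := (volume : Measure (ℝ × ℝ)))).1 nullset
    filter_upwards [h] with u hu
    have hu' : ¬(u.1 = 0 ∨ u.2 = 0) := hu
    push_neg at hu'
    exact hu'
  -- first differentiation under the integral sign
  have step1 : ∀ ρ ∈ Metric.ball z (ε/2),
      HasDerivAt (fun x => ∫ u : ℝ × ℝ, f0 x u) (∫ u : ℝ × ℝ, f1 ρ u) ρ := by
    intro ρ hρ
    have hρz : ρ ∈ Metric.ball z ε := Metric.ball_subset_ball (by linarith) hρ
    have hρr : |ρ| ≤ r := hball ρ hρz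
    have hsub : Metric.ball ρ (ε/2) ⊆ Metric.ball z ε := by
      intro x hx
      rw [Metric.mem_ball] at hx hρ ⊢
      have := dist_triangle x ρ z
      linarith
    refine (hasDerivAt_integral_of_dominated_loc_of_deriv_le (Metric.ball_mem_nhds ρ (half_pos hε))
      (Filter.Eventually.of_forall fun x => meas_f0 x)
      (hbint.mono' (meas_f0 ρ) (Filter.Eventually.of_forall (bound_f0 hr1 hρr)))
      (meas_f1 ρ)
      (Filter.Eventually.of_forall fun u x hx => bound_f1 hr1 (hball x (hsub hx)) u)
      (hbint.const_mul 2)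
      ?_).2
    filter_upwards [hae] with u hu
    exact fun x _ => hasDeriv_f0 hu.1 hu.2 x
  -- second differentiation under the integral sign
  have hzr : |z| ≤ r := hball z (Metric.mem_ball_self hε)
  have step2 : HasDerivAt (fun x => ∫ u : ℝ × ℝ, f1 x u) (∫ u : ℝ × ℝ, f2 z u) z := by
    refine (hasDerivAt_integral_of_dominated_loc_of_deriv_le (Metric.ball_mem_nhds z hε)
      (Filter.Eventually.of_forall fun x => meas_f1 x)
      ((hbint.const_mul 2).mono' (meas_f1 z)
        (Filter.Eventually.of_forall (bound_f1 hr1 hzr)))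
      (meas_f2 z)
      (Filter.Eventually.of_forall fun u x hx => bound_f2 (hball x hx) u)
      (hbint.const_mul 6)
      ?_).2
    filter_upwards [hae] with u hu
    exact fun x _ => hasDeriv_f1 hu.1 hu.2 x
  -- computing the integral of f2 z
  have habs2z : |2*z| < 2 := by
    rw [abs_mul, abs_two]; linarith
  have habsz : |z| < 2 := by linarith
  have hcomp : ∫ u : ℝ × ℝ, f2 z u
      = 4 * π / Real.sqrt (1 - z^2) - 2 * π / Real.sqrt (1 - z^2/4) := by
    have split : (fun u : ℝ × ℝ => f2 z u) = fun u : ℝ × ℝ =>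
        4 * Real.exp (-u.1^2 - u.2^2 - (2*z)*u.1*u.2) +
          (-2) * Real.exp (-u.1^2 - u.2^2 - z*u.1*u.2) := by
      funext u
      simp only [f2]
      rw [show -u.1^2 - u.2^2 - (2*z)*u.1*u.2
            = (-u.1 ^ 2 - u.2 ^ 2) + (-2 * z * u.1 * u.2) by ring,
          show -u.1^2 - u.2^2 - z*u.1*u.2
            = (-u.1 ^ 2 - u.2 ^ 2) + (-z * u.1 * u.2) by ring,
          Real.exp_add, Real.exp_add]
      ring
    rw [split, integral_add ((integrable_gauss2 habs2z).const_mul 4)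
        ((integrable_gauss2 habsz).const_mul (-2)),
      integral_const_mul, integral_const_mul, gauss2 habs2z, gauss2 habsz]
    rw [show 1 - (2*z)^2/4 = 1 - z^2 by ring]
    ring
  -- assembling
  have evq : deriv (fun ρ : ℝ => ∫ u : ℝ × ℝ, f0 ρ u)
      =ᶠ[nhds z] fun ρ => ∫ u : ℝ × ℝ, f1 ρ u := by
    filter_upwards [Metric.ball_mem_nhds z (half_pos hε)] with ρ hρ
    exact (step1 ρ hρ).deriv
  rw [evq.deriv_eq, step2.deriv, hcomp]
end

section
/- If X and Y are standard normal with correlation ρ, the squared distance correlation R²(X,Y) = (ρ·arcsin ρ + √(1-ρ²) - ρ·arcsin(ρ/2) - √(4-ρ²) + 1)/(1 + π/3 - √3) satisfies R(X,Y) ≤ |ρ|, with R(X,Y)/|ρ| → (1 + π/3 - √3)^{-1/2}/2 as ρ → 0, and this limit is the infimum of R(X,Y)/|ρ| over ρ ≠ 0. -/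
open Real Filter Set intervalIntegral

noncomputable def gg (ρ : ℝ) : ℝ :=
  ρ * Real.arcsin ρ + Real.sqrt (1 - ρ ^ 2) - ρ * Real.arcsin (ρ / 2) - Real.sqrt (4 - ρ ^ 2) + 1

noncomputable def pphi (t : ℝ) : ℝ := Real.arcsin t - Real.arcsin (t / 2)

lemma gg_cont : Continuous gg := by
  unfold gg
  continuity

lemma pphi_cont : Continuous pphi := by
  unfold pphi
  exact Real.continuous_arcsin.sub (Real.continuous_arcsin.comp (continuous_id.div_const 2))

lemma sqrt_four : Real.sqrt 4 = 2 := by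
  rw [show (4:ℝ) = 2^2 by norm_num, Real.sqrt_sq (by norm_num)]

lemma sqrt_half_eq {x : ℝ} : Real.sqrt (1 - (x/2)^2) = Real.sqrt (4 - x^2) / 2 := by
  rw [show (1 - (x/2)^2 : ℝ) = (4 - x^2)/4 by ring, Real.sqrt_div' _ (by norm_num), sqrt_four]

lemma hasDerivAt_gg {x : ℝ} (h1 : -1 < x) (h2 : x < 1) : HasDerivAt gg (pphi x) x := by
  have hx1 : (0:ℝ) < 1 - x^2 := by nlinarith
  have hx4 : (0:ℝ) < 4 - x^2 := by nlinarith
  have s1 : Real.sqrt (1 - x^2) > 0 := Real.sqrt_pos.2 hx1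
  have s4 : Real.sqrt (4 - x^2) > 0 := Real.sqrt_pos.2 hx4
  have ha : HasDerivAt Real.arcsin (1 / Real.sqrt (1 - x^2)) x :=
    Real.hasDerivAt_arcsin (by linarith) (by linarith)
  have ha2 : HasDerivAt (fun y : ℝ => Real.arcsin (y/2)) (1 / Real.sqrt (1 - (x/2)^2) * (1/2)) x := by
    exact (Real.hasDerivAt_arcsin (by linarith) (by linarith)).comp x
      ((hasDerivAt_id x).div_const 2)
  have hm1 : HasDerivAt (fun y : ℝ => y * Real.arcsin y)
      (1 * Real.arcsin x + x * (1 / Real.sqrt (1 - x^2))) x := (hasDerivAt_id x).mul ha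
  have hm2 : HasDerivAt (fun y : ℝ => y * Real.arcsin (y/2))
      (1 * Real.arcsin (x/2) + x * (1 / Real.sqrt (1 - (x/2)^2) * (1/2))) x :=
    (hasDerivAt_id x).mul ha2
  have hq1 : HasDerivAt (fun y : ℝ => 1 - y^2) (-(2*x)) x := by
    simpa using ((hasDerivAt_pow 2 x).const_sub 1)
  have hq4 : HasDerivAt (fun y : ℝ => 4 - y^2) (-(2*x)) x := by
    simpa using ((hasDerivAt_pow 2 x).const_sub 4)
  have hs1 : HasDerivAt (fun y : ℝ => Real.sqrt (1 - y^2)) (-(2*x) / (2 * Real.sqrt (1 - x^2))) x :=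
    hq1.sqrt (ne_of_gt hx1)
  have hs4 : HasDerivAt (fun y : ℝ => Real.sqrt (4 - y^2)) (-(2*x) / (2 * Real.sqrt (4 - x^2))) x :=
    hq4.sqrt (ne_of_gt hx4)
  have := ((((hm1.add hs1).sub hm2).sub hs4).add_const 1)
  refine HasDerivAt.congr_deriv (f := gg) this ?_
  rw [pphi, sqrt_half_eq]
  have h4 : Real.sqrt (4 - x^2) ^ 2 = 4 - x^2 := Real.sq_sqrt hx4.le
  field_simp
  ring

noncomputable def ff (x : ℝ) : ℝ := 1 / Real.sqrt (1 - x^2)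

lemma gg_zero : gg 0 = 0 := by
  simp [gg, sqrt_four]
  norm_num

lemma ftc_gg {ρ : ℝ} (h0 : 0 ≤ ρ) (h1 : ρ ≤ 1) : ∫ t in (0:ℝ)..ρ, pphi t = gg ρ := by
  have := intervalIntegral.integral_eq_sub_of_hasDerivAt_of_le h0
    (gg_cont.continuousOn) (fun x hx => hasDerivAt_gg (by linarith [hx.1]) (by linarith [hx.2]))
    (pphi_cont.intervalIntegrable 0 ρ)
  rw [this, gg_zero, sub_zero]

lemma ff_contOn {t : ℝ} (ht : t < 1) (ht0 : 0 ≤ t) :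
    ContinuousOn (fun u => ff (t*u)) (Set.uIcc (1/2 : ℝ) 1) := by
  rw [Set.uIcc_of_le (by norm_num)]
  apply ContinuousOn.div continuousOn_const
  · fun_prop
  · intro u hu
    refine ne_of_gt (Real.sqrt_pos.2 ?_)
    have h1 : t * u ≤ t * 1 := by nlinarith [hu.1, hu.2]
    have h2 : 0 ≤ t * u := by nlinarith [hu.1]
    nlinarith

lemma arcsin_int {t : ℝ} (h0 : 0 ≤ t) (h1 : t < 1) :
    ∫ x in (t/2)..t, ff x = pphi t := by
  have key : ∀ x ∈ Set.uIcc (t/2) t, HasDerivAt Real.arcsin (ff x) x := by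
    intro x hx
    rw [Set.uIcc_of_le (by linarith)] at hx
    exact Real.hasDerivAt_arcsin (by intro h; rw [h] at hx; nlinarith [hx.1, hx.2])
      (by intro h; rw [h] at hx; nlinarith [hx.1, hx.2])
  have hint : IntervalIntegrable ff MeasureTheory.volume (t/2) t := by
    apply ContinuousOn.intervalIntegrable
    rw [Set.uIcc_of_le (by linarith)]
    apply ContinuousOn.div continuousOn_const
    · fun_prop
    · intro x hx
      refine ne_of_gt (Real.sqrt_pos.2 ?_)
      nlinarith [hx.1, hx.2]
  rw [intervalIntegral.integral_eq_sub_of_hasDerivAt key hint, pphi]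


lemma pphi_rep {t : ℝ} (h0 : 0 ≤ t) (h1 : t < 1) :
    pphi t = t * ∫ u in (1/2:ℝ)..1, ff (t*u) := by
  have := intervalIntegral.smul_integral_comp_mul_left (a := (1/2:ℝ)) (b := 1) ff t
  rw [smul_eq_mul] at this
  rw [this, show t * (1/2) = t/2 by ring, mul_one, arcsin_int h0 h1]

lemma ff_ge_one {x : ℝ} (h0 : 0 ≤ x) (h1 : x < 1) : 1 ≤ ff x := by
  rw [ff, le_div_iff₀ (Real.sqrt_pos.2 (by nlinarith)), one_mul]
  calc Real.sqrt (1 - x^2) ≤ Real.sqrt 1 := Real.sqrt_le_sqrt (by nlinarith)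
  _ = 1 := Real.sqrt_one

lemma ff_mono {x y : ℝ} (h0 : 0 ≤ x) (hxy : x ≤ y) (h1 : y < 1) : ff x ≤ ff y := by
  rw [ff, ff]
  apply one_div_le_one_div_of_le (Real.sqrt_pos.2 (by nlinarith))
  exact Real.sqrt_le_sqrt (by nlinarith)

lemma pphi_lb {t : ℝ} (h0 : 0 ≤ t) (h1 : t < 1) : t/2 ≤ pphi t := by
  rw [pphi_rep h0 h1]
  have : (1/2 : ℝ) ≤ ∫ u in (1/2:ℝ)..1, ff (t*u) := by
    have h := intervalIntegral.integral_mono_on (a := (1/2:ℝ)) (b := 1) (by norm_num)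
      (_root_.intervalIntegrable_const (μ := MeasureTheory.volume) (c := (1:ℝ)))
      ((ff_contOn h1 h0).intervalIntegrable)
      (fun u hu => ff_ge_one (by nlinarith [hu.1]) (by nlinarith [hu.1, hu.2]))
    simp only [intervalIntegral.integral_const, smul_eq_mul] at h
    norm_num at h
    linarith
  nlinarith

lemma pphi_ub {t : ℝ} (h0 : 0 ≤ t) (h1 : t < 1) : pphi t ≤ t/2 * ff t := by
  rw [pphi_rep h0 h1]
  have : (∫ u in (1/2:ℝ)..1, ff (t*u)) ≤ ∫ u in (1/2:ℝ)..1, ff t := by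
    apply intervalIntegral.integral_mono_on (by norm_num)
      ((ff_contOn h1 h0).intervalIntegrable)
      (_root_.intervalIntegrable_const (μ := MeasureTheory.volume))
      (fun u hu => ff_mono (by nlinarith [hu.1]) (by nlinarith [hu.1, hu.2]) h1)
  have hff : 0 ≤ ff t := by rw [ff]; positivity
  simp at this
  nlinarith

lemma pphi_slope_mono {s t : ℝ} (hs : 0 ≤ s) (hst : s ≤ t) (ht : t < 1) :
    pphi s * t ≤ pphi t * s := by
  rw [pphi_rep hs (lt_of_le_of_lt hst ht), pphi_rep (le_trans hs hst) ht]
  have key : (∫ u in (1/2:ℝ)..1, ff (s*u)) ≤ ∫ u in (1/2:ℝ)..1, ff (t*u) := by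
    apply intervalIntegral.integral_mono_on (by norm_num)
      ((ff_contOn (lt_of_le_of_lt hst ht) hs).intervalIntegrable)
      ((ff_contOn ht (le_trans hs hst)).intervalIntegrable)
      (fun u hu => ff_mono (by nlinarith [hu.1]) (by nlinarith [hu.1, hu.2]) (by nlinarith [hu.1, hu.2]))
  have hnn : 0 ≤ ∫ u in (1/2:ℝ)..1, ff (s*u) := by
    apply intervalIntegral.integral_nonneg (by norm_num)
    intro u hu
    rw [ff]; positivity
  nlinarith [mul_le_mul_of_nonneg_left key (mul_nonneg hs (hs.trans hst))]

noncomputable def cc : ℝ := 1 + Real.pi/3 - Real.sqrt 3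

lemma sqrt3_lt : Real.sqrt 3 < 1.7321 := by
  rw [show (1.7321:ℝ) = Real.sqrt (1.7321^2) by rw [Real.sqrt_sq (by norm_num)]]
  exact Real.sqrt_lt_sqrt (by norm_num) (by norm_num)

lemma sqrt3_gt : (1.732:ℝ) < Real.sqrt 3 := by
  rw [show (1.732:ℝ) = Real.sqrt (1.732^2) by rw [Real.sqrt_sq (by norm_num)]]
  exact Real.sqrt_lt_sqrt (by norm_num) (by norm_num)

lemma cc_pos : 0 < cc := by
  have h := Real.pi_gt_d6
  have := sqrt3_lt
  rw [cc]; linarith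

lemma arcsin_half : Real.arcsin (1/2) = Real.pi/6 := by
  rw [show (1/2 : ℝ) = Real.sin (Real.pi/6) by rw [Real.sin_pi_div_six]]
  exact Real.arcsin_sin (by linarith [Real.pi_pos]) (by linarith [Real.pi_pos])

lemma pphi_one : pphi 1 = Real.pi/3 := by
  rw [pphi, show (1:ℝ)/2 = (1/2 : ℝ) by norm_num, arcsin_half, Real.arcsin_one]; ring

lemma gg_one : gg 1 = cc := by
  rw [gg, cc, Real.arcsin_one, show (1:ℝ)/2 = (1/2 : ℝ) by norm_num, arcsin_half]
  norm_num [Real.sqrt_zero]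
  ring

lemma two_cc_le : 2 * cc ≤ pphi 1 := by
  rw [pphi_one, cc]
  have h := Real.pi_lt_d6
  have := sqrt3_gt
  linarith

lemma pphi_one_lb : (1:ℝ)/2 ≤ pphi 1 := by
  rw [pphi_one]
  linarith [Real.pi_gt_d6]

lemma pphi_lb' {t : ℝ} (h0 : 0 ≤ t) (h1 : t ≤ 1) : t/2 ≤ pphi t := by
  rcases lt_or_eq_of_le h1 with h | h
  · exact pphi_lb h0 h
  · rw [h]; simpa using pphi_one_lb

lemma gg_lb {ρ : ℝ} (h0 : 0 ≤ ρ) (h1 : ρ ≤ 1) : ρ^2/4 ≤ gg ρ := by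
  rw [← ftc_gg h0 h1]
  have h := intervalIntegral.integral_mono_on (a := (0:ℝ)) (b := ρ) h0
    ((continuous_id.div_const 2).intervalIntegrable (μ := MeasureTheory.volume) 0 ρ)
    (pphi_cont.intervalIntegrable (μ := MeasureTheory.volume) 0 ρ)
    (fun t ht => pphi_lb' ht.1 (le_trans ht.2 h1))
  calc ρ^2/4 = ∫ t in (0:ℝ)..ρ, t/2 := by
        simp [intervalIntegral.integral_div, integral_id]; ring
  _ ≤ _ := h

lemma gg_ub_small {ρ : ℝ} (h0 : 0 ≤ ρ) (h1 : ρ < 1) :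
    gg ρ ≤ (1 - Real.sqrt (1 - ρ^2))/2 := by
  have hcont : ContinuousOn (fun t : ℝ => t/2 * ff t) (Set.uIcc 0 ρ) := by
    rw [Set.uIcc_of_le h0]
    apply ContinuousOn.mul (by fun_prop)
    apply ContinuousOn.div continuousOn_const (by fun_prop)
    intro t ht
    exact ne_of_gt (Real.sqrt_pos.2 (by nlinarith [ht.1, ht.2]))
  have hderiv : ∀ t ∈ Set.Ioo 0 ρ, HasDerivAt (fun t : ℝ => -(Real.sqrt (1 - t^2))/2)
      (t/2 * ff t) t := by
    intro t ht
    have hx : (0:ℝ) < 1 - t^2 := by nlinarith [ht.1, ht.2]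
    have h := ((((hasDerivAt_pow 2 t).const_sub 1).sqrt (ne_of_gt hx)).neg).div_const 2
    refine HasDerivAt.congr_deriv h ?_
    have hs : Real.sqrt (1 - t^2) > 0 := Real.sqrt_pos.2 hx
    rw [ff]
    field_simp
    ring
  have key := intervalIntegral.integral_eq_sub_of_hasDerivAt_of_le h0
    (by fun_prop : ContinuousOn (fun t : ℝ => -(Real.sqrt (1 - t^2))/2) (Set.Icc 0 ρ))
    hderiv (hcont.intervalIntegrable)
  have hmono := intervalIntegral.integral_mono_on (a := (0:ℝ)) (b := ρ) h0
    (pphi_cont.intervalIntegrable (μ := MeasureTheory.volume) 0 ρ)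
    (hcont.intervalIntegrable)
    (fun t ht => pphi_ub ht.1 (lt_of_le_of_lt ht.2 h1))
  rw [← ftc_gg h0 h1.le]
  rw [key] at hmono
  norm_num at hmono ⊢
  linarith

lemma gg_ub_main {ρ : ℝ} (h0 : 0 ≤ ρ) (h1 : ρ ≤ 1) : gg ρ ≤ cc * ρ^2 := by
  rcases eq_or_lt_of_le h1 with h | h
  · rw [h, gg_one]; norm_num
  -- ρ < 1
  have hint2c : ∀ a b : ℝ, ∫ t in a..b, 2 * cc * t = cc * b^2 - cc * a^2 := by
    intro a b
    rw [intervalIntegral.integral_const_mul, integral_id]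
    ring
  have hcont2c : Continuous fun t : ℝ => 2 * cc * t := by fun_prop
  rcases le_or_gt (pphi ρ) (2 * cc * ρ) with hc | hc
  · -- case A : pphi t ≤ 2 cc t on [0, ρ]
    have hpt : ∀ t ∈ Set.Icc (0:ℝ) ρ, pphi t ≤ 2 * cc * t := by
      intro t ht
      rcases eq_or_lt_of_le h0 with h0' | h0'
      · have : t = 0 := le_antisymm (by simpa [← h0'] using ht.2) ht.1
        simp [this, pphi]
      have hsl := pphi_slope_mono ht.1 ht.2 h
      have : pphi t * ρ ≤ 2 * cc * t * ρ := by
        nlinarith [hsl, mul_le_mul_of_nonneg_right hc ht.1]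
      exact le_of_mul_le_mul_right (by linarith) h0'
    have hm := intervalIntegral.integral_mono_on (a := (0:ℝ)) (b := ρ) h0
      (pphi_cont.intervalIntegrable (μ := MeasureTheory.volume) 0 ρ)
      (hcont2c.intervalIntegrable (μ := MeasureTheory.volume) 0 ρ)
      hpt
    calc gg ρ = ∫ t in (0:ℝ)..ρ, pphi t := (ftc_gg h0 h1).symm
    _ ≤ ∫ t in (0:ℝ)..ρ, 2 * cc * t := hm
    _ = cc * ρ^2 := by rw [hint2c]; ring
  · -- case B : pphi t ≥ 2 cc t on [ρ, 1]
    have hρpos : 0 < ρ := by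
      rcases eq_or_lt_of_le h0 with h0' | h0'
      · exfalso; rw [← h0'] at hc; simp [pphi] at hc
      · exact h0'
    have hpt : ∀ t ∈ Set.Icc ρ (1:ℝ), 2 * cc * t ≤ pphi t := by
      intro t ht
      rcases eq_or_lt_of_le ht.2 with h1' | h1'
      · rw [h1']
        nlinarith [two_cc_le]
      have hsl := pphi_slope_mono h0 ht.1 h1'
      have htnn : (0:ℝ) ≤ t := le_trans h0 ht.1
      have : 2 * cc * t * ρ ≤ pphi t * ρ := by
        nlinarith [hsl, mul_le_mul_of_nonneg_right hc.le htnn]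
      exact le_of_mul_le_mul_right this hρpos
    have hm := intervalIntegral.integral_mono_on (a := ρ) (b := (1:ℝ)) h.le
      (hcont2c.intervalIntegrable (μ := MeasureTheory.volume) ρ 1)
      (pphi_cont.intervalIntegrable (μ := MeasureTheory.volume) ρ 1)
      hpt
    have hadd : (∫ t in (0:ℝ)..ρ, pphi t) + ∫ t in ρ..(1:ℝ), pphi t = ∫ t in (0:ℝ)..(1:ℝ), pphi t :=
      intervalIntegral.integral_add_adjacent_intervals
        (pphi_cont.intervalIntegrable (μ := MeasureTheory.volume) 0 ρ)
        (pphi_cont.intervalIntegrable (μ := MeasureTheory.volume) ρ 1)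
    have e1 : (∫ t in (0:ℝ)..ρ, pphi t) = gg ρ := ftc_gg h0 h1
    have e2 : (∫ t in (0:ℝ)..(1:ℝ), pphi t) = cc := by rw [ftc_gg zero_le_one le_rfl, gg_one]
    rw [hint2c ρ 1] at hm
    rw [e1, e2] at hadd
    nlinarith [hm, hadd]

lemma gg_even (ρ : ℝ) : gg (-ρ) = gg ρ := by
  unfold gg
  rw [show -ρ/2 = -(ρ/2) by ring, Real.arcsin_neg, Real.arcsin_neg,
    show ((-ρ:ℝ))^2 = ρ^2 by ring]
  ring

lemma gg_lb_abs {ρ : ℝ} (h : |ρ| ≤ 1) : ρ^2/4 ≤ gg ρ := by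
  rcases le_or_gt 0 ρ with h0 | h0
  · exact gg_lb h0 (by rwa [abs_of_nonneg h0] at h)
  · rw [← gg_even, show ρ^2 = (-ρ)^2 by ring]
    exact gg_lb (by linarith) (by rwa [abs_of_neg h0] at h)

lemma gg_ub_abs {ρ : ℝ} (h : |ρ| ≤ 1) : gg ρ ≤ cc * ρ^2 := by
  rcases le_or_gt 0 ρ with h0 | h0
  · exact gg_ub_main h0 (by rwa [abs_of_nonneg h0] at h)
  · rw [← gg_even, show ρ^2 = (-ρ)^2 by ring]
    exact gg_ub_main (by linarith) (by rwa [abs_of_neg h0] at h)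

lemma gg_ub_small_abs {ρ : ℝ} (h : |ρ| < 1) : gg ρ ≤ (1 - Real.sqrt (1 - ρ^2))/2 := by
  rcases le_or_gt 0 ρ with h0 | h0
  · exact gg_ub_small h0 (by rwa [abs_of_nonneg h0] at h)
  · rw [← gg_even, show ρ^2 = (-ρ)^2 by ring]
    exact gg_ub_small (by linarith) (by rwa [abs_of_neg h0] at h)

lemma gg_nonneg {ρ : ℝ} (h : |ρ| ≤ 1) : 0 ≤ gg ρ := le_trans (by positivity) (gg_lb_abs h)

lemma ratio_lb {ρ : ℝ} (h : |ρ| ≤ 1) (hne : ρ ≠ 0) : 1/(4*cc) ≤ gg ρ / (cc * ρ^2) := by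
  have hρ2 : 0 < ρ^2 := by positivity
  have hcc := cc_pos
  rw [div_le_div_iff₀ (by positivity) (mul_pos hcc hρ2)]
  nlinarith [gg_lb_abs h]

lemma ratio_ub {ρ : ℝ} (h : |ρ| < 1) (hne : ρ ≠ 0) :
    gg ρ / (cc * ρ^2) ≤ 1/(2*cc*(1 + Real.sqrt (1 - ρ^2))) := by
  have hρ2 : 0 < ρ^2 := by positivity
  have hs : Real.sqrt (1 - ρ^2) ^ 2 = 1 - ρ^2 := Real.sq_sqrt (by nlinarith [sq_abs ρ, abs_nonneg ρ])
  have hsnn : 0 ≤ Real.sqrt (1 - ρ^2) := Real.sqrt_nonneg _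
  have h1 := gg_ub_small_abs h
  have hcc := cc_pos
  have pos2 : 0 < 2*cc*(1 + Real.sqrt (1 - ρ^2)) := by nlinarith
  rw [div_le_div_iff₀ (mul_pos hcc hρ2) pos2]
  nlinarith [mul_le_mul_of_nonneg_right h1 pos2.le]

/-- For standard normal `X, Y` with correlation `ρ`, the distance correlation
`R(X,Y) = √(g(ρ)/(1+π/3-√3))` with
`g(ρ) = ρ arcsin ρ + √(1-ρ²) - ρ arcsin(ρ/2) - √(4-ρ²) + 1` satisfies
`R(X,Y) ≤ |ρ|`; moreover `R(X,Y)/|ρ| → (1+π/3-√3)^{-1/2}/2` as `ρ → 0`, and this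
limit is the infimum of `R(X,Y)/|ρ|` over `ρ ≠ 0`. -/
theorem dcor_bivariate_normal_bounds :
    let R : ℝ → ℝ := fun ρ => Real.sqrt
      ((ρ * Real.arcsin ρ + Real.sqrt (1 - ρ ^ 2) - ρ * Real.arcsin (ρ / 2)
          - Real.sqrt (4 - ρ ^ 2) + 1) / (1 + Real.pi / 3 - Real.sqrt 3))
    (∀ ρ ∈ Set.Icc (-1 : ℝ) 1, R ρ ≤ |ρ|) ∧
    Tendsto (fun ρ => R ρ / |ρ|) (nhdsWithin 0 {(0 : ℝ)}ᶜ)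
      (nhds (1 / (2 * Real.sqrt (1 + Real.pi / 3 - Real.sqrt 3)))) ∧
    IsGLB {r : ℝ | ∃ ρ ∈ Set.Icc (-1 : ℝ) 1, ρ ≠ 0 ∧ r = R ρ / |ρ|}
      (1 / (2 * Real.sqrt (1 + Real.pi / 3 - Real.sqrt 3))) := by
  intro R
  have hcc := cc_pos
  have hRgg : ∀ ρ : ℝ, R ρ = Real.sqrt (gg ρ / cc) := fun ρ => rfl
  have hLcc : 1 / (2 * Real.sqrt (1 + Real.pi / 3 - Real.sqrt 3))
      = Real.sqrt (1/(4*cc)) := by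
    rw [show (1 + Real.pi/3 - Real.sqrt 3) = cc from rfl, one_div (4*cc), Real.sqrt_inv,
      Real.sqrt_mul (by norm_num : (0:ℝ) ≤ 4), sqrt_four, one_div]
  have hratio : ∀ ρ : ℝ, ρ ≠ 0 → |ρ| ≤ 1 → R ρ / |ρ| = Real.sqrt (gg ρ / (cc * ρ^2)) := by
    intro ρ hne habs
    rw [hRgg, show |ρ| = Real.sqrt (ρ^2) by rw [Real.sqrt_sq_eq_abs],
      ← Real.sqrt_div (div_nonneg (gg_nonneg habs) hcc.le), div_div]
  have part2 : Tendsto (fun ρ => R ρ / |ρ|) (nhdsWithin 0 {(0 : ℝ)}ᶜ)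
      (nhds (1 / (2 * Real.sqrt (1 + Real.pi / 3 - Real.sqrt 3)))) := by
    have hev : ∀ᶠ ρ in nhdsWithin (0:ℝ) {(0:ℝ)}ᶜ, ρ ≠ 0 ∧ |ρ| < 1 := by
      have h' : ∀ᶠ x in nhds (0:ℝ), x ∈ Set.Ioo (-1:ℝ) 1 :=
        Ioo_mem_nhds (by norm_num) (by norm_num)
      filter_upwards [self_mem_nhdsWithin, h'.filter_mono nhdsWithin_le_nhds] with ρ h1 h2
      exact ⟨h1, abs_lt.2 ⟨h2.1, h2.2⟩⟩
    have hc : ContinuousAt (fun ρ : ℝ => 1/(2*cc*(1 + Real.sqrt (1 - ρ^2)))) 0 := by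
      apply ContinuousAt.div continuousAt_const
      · fun_prop
      · norm_num [Real.sqrt_one]
        exact ne_of_gt cc_pos
    have htu : Tendsto (fun ρ : ℝ => 1/(2*cc*(1 + Real.sqrt (1 - ρ^2))))
        (nhdsWithin (0:ℝ) {(0:ℝ)}ᶜ) (nhds (1/(4*cc))) := by
      have h0 : 1/(2*cc*(1 + Real.sqrt (1 - (0:ℝ)^2))) = 1/(4*cc) := by
        norm_num [Real.sqrt_one]; ring
      have := hc.tendsto.mono_left (nhdsWithin_le_nhds (s := {(0:ℝ)}ᶜ))
      rwa [h0] at this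
    have hsq : Tendsto (fun ρ : ℝ => gg ρ / (cc * ρ^2)) (nhdsWithin (0:ℝ) {(0:ℝ)}ᶜ)
        (nhds (1/(4*cc))) :=
      tendsto_of_tendsto_of_tendsto_of_le_of_le' tendsto_const_nhds htu
        (hev.mono fun ρ h => ratio_lb h.2.le h.1)
        (hev.mono fun ρ h => ratio_ub h.2 h.1)
    have hsqrt : Tendsto (fun ρ : ℝ => Real.sqrt (gg ρ / (cc*ρ^2)))
        (nhdsWithin (0:ℝ) {(0:ℝ)}ᶜ) (nhds (Real.sqrt (1/(4*cc)))) :=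
      (Real.continuous_sqrt.continuousAt.tendsto.comp hsq)
    rw [hLcc]
    exact hsqrt.congr' (hev.mono fun ρ h => (hratio ρ h.1 h.2.le).symm)
  refine ⟨?_, part2, ?_, ?_⟩
  · intro ρ hρ
    have habs : |ρ| ≤ 1 := abs_le.2 ⟨hρ.1, hρ.2⟩
    rw [hRgg, ← Real.sqrt_sq_eq_abs]
    apply Real.sqrt_le_sqrt
    rw [div_le_iff₀ hcc]
    nlinarith [gg_ub_abs habs]
  · rintro r ⟨ρ, hρ, hne, rfl⟩
    have habs : |ρ| ≤ 1 := abs_le.2 ⟨hρ.1, hρ.2⟩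
    rw [hratio ρ hne habs, hLcc]
    exact Real.sqrt_le_sqrt (ratio_lb habs hne)
  · intro b hb
    have hseq : Tendsto (fun n : ℕ => (1:ℝ)/(n+1)) atTop (nhdsWithin (0:ℝ) {(0:ℝ)}ᶜ) := by
      refine tendsto_nhdsWithin_of_tendsto_nhds_of_eventually_within _
        tendsto_one_div_add_atTop_nhds_zero_nat ?_
      refine Eventually.of_forall fun n => ?_
      have : (0:ℝ) < 1/(n+1) := by positivity
      simp only [Set.mem_compl_iff, Set.mem_singleton_iff]
      exact ne_of_gt this
    refine ge_of_tendsto (part2.comp hseq) (Eventually.of_forall fun n => ?_)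
    have h1 : (0:ℝ) < 1/(n+1) := by positivity
    have h2 : (1:ℝ)/(n+1) ≤ 1 := by
      rw [div_le_one (by positivity)]
      simp
    exact hb ⟨1/(n+1), ⟨by linarith, h2⟩, ne_of_gt h1, rfl⟩
end
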